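/- arXiv:1409.5888 — 13 statements merged into one kernel-verified Lean document; each statement's English description precedes it below -/
import Mathlib

section
/- Let α ∈ (0,1], n ∈ ℕ, and suppose f is (n+1) times α-fractional differentiable on [0,∞) with D_α^{n+1} f continuous. Then for all s, t > 0: f(t) = Σ_{k=0}^{n} (1/k!)·((t^α − s^α)/α)^k · D_α^k f(s) + (1/n!)·∫_s^t ((t^α − τ^α)/α)^n · D_α^{n+1} f(τ) · τ^{α−1} dτ. -/
open Set MeasureTheory intervalIntegral

noncomputable def condD (α : ℝ) (f : ℝ → ℝ) : ℝ → ℝ :=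
  fun t => t ^ (1 - α) * deriv f t

lemma condD_mul_rpow (α : ℝ) (g : ℝ → ℝ) {τ : ℝ} (hτ : 0 < τ) :
    condD α g τ * τ ^ (α - 1) = deriv g τ := by
  simp only [condD]
  rw [mul_comm (τ ^ (1-α)) (deriv g τ), mul_assoc, ← Real.rpow_add hτ]
  norm_num

lemma hasDerivAt_u (α : ℝ) (hα : 0 < α) (c : ℝ) {τ : ℝ} (hτ : 0 < τ) :
    HasDerivAt (fun x : ℝ => (c - x ^ α) / α) (-(τ ^ (α - 1))) τ := by
  have h := (Real.hasDerivAt_rpow_const (p := α) (Or.inl hτ.ne')).const_sub c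
  have h2 := h.div_const α
  refine h2.congr_deriv (Eq.symm ?_)
  field_simp

lemma step_lemma (α : ℝ) (hα : 0 < α) (g : ℝ → ℝ)
    (hg : ∀ x ∈ Ioi (0:ℝ), DifferentiableAt ℝ g x)
    (hc : ContinuousOn (condD α g) (Ioi (0:ℝ)))
    (m : ℕ) (s t : ℝ) (hs : 0 < s) (ht : 0 < t) :
    ∫ τ in s..t, ((t ^ α - τ ^ α) / α) ^ m * g τ * τ ^ (α - 1)
      = ((t ^ α - s ^ α) / α) ^ (m+1) / (m+1) * g s
        + (1 / (m+1 : ℝ)) *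
          ∫ τ in s..t, ((t ^ α - τ ^ α) / α) ^ (m+1) * condD α g τ * τ ^ (α - 1) := by
  have huIcc : uIcc s t ⊆ Ioi (0:ℝ) := fun x hx => lt_of_lt_of_le (lt_min hs ht) hx.1
  set c := t ^ α with hc'
  set G : ℝ → ℝ := fun τ => -(1 / (m+1 : ℝ)) * ((c - τ ^ α) / α) ^ (m+1) * g τ with hG
  set F : ℝ → ℝ := fun τ =>
    ((c - τ ^ α) / α) ^ m * g τ * τ ^ (α - 1)
      - (1 / (m+1 : ℝ)) * (((c - τ ^ α) / α) ^ (m+1) * condD α g τ * τ ^ (α - 1)) with hF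
  have hxα : ContinuousOn (fun x : ℝ => x ^ α) (uIcc s t) :=
    fun x hx => (Real.continuousAt_rpow_const x α (Or.inl (huIcc hx).ne')).continuousWithinAt
  have hxα1 : ContinuousOn (fun x : ℝ => x ^ (α - 1)) (uIcc s t) :=
    fun x hx => (Real.continuousAt_rpow_const x (α-1) (Or.inl (huIcc hx).ne')).continuousWithinAt
  have hu : ContinuousOn (fun x : ℝ => (c - x ^ α) / α) (uIcc s t) := (continuousOn_const.sub hxα).div_const α
  have hgc : ContinuousOn g (uIcc s t) :=
    fun x hx => ((hg x (huIcc hx)).continuousAt).continuousWithinAt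
  have hcc : ContinuousOn (condD α g) (uIcc s t) := hc.mono huIcc
  have hderiv : ∀ τ ∈ uIcc s t, HasDerivAt G (F τ) τ := by
    intro τ hτ
    have hτ0 : 0 < τ := huIcc hτ
    have hup : HasDerivAt (fun x : ℝ => ((c - x ^ α) / α) ^ (m+1))
        ((m+1 : ℕ) * ((c - τ ^ α) / α) ^ m * (-(τ ^ (α - 1)))) τ :=
      (hasDerivAt_u α hα c hτ0).pow (m+1)
    have hgd : HasDerivAt g (deriv g τ) τ := (hg τ hτ0).hasDerivAt
    have h := ((hup.const_mul (-(1 / (m+1 : ℝ)))).mul hgd)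
    refine h.congr_deriv (Eq.symm ?_)
    have hdg : condD α g τ * τ ^ (α - 1) = deriv g τ := condD_mul_rpow α g hτ0
    rw [← hdg]
    have hm : (m:ℝ)+1 ≠ 0 := by positivity
    set A := (c - τ ^ α) / α
    set T := τ ^ (α - 1)
    have h1 : (1/((m:ℝ)+1)) * ((m:ℝ)+1) = 1 := one_div_mul_cancel hm
    push_cast
    linear_combination (-(A ^ m * T * g τ)) * h1
  have hint1 : IntervalIntegrable (fun τ => ((c - τ ^ α) / α) ^ m * g τ * τ ^ (α - 1)) volume s t :=
    (((hu.pow m).mul hgc).mul hxα1).intervalIntegrable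
  have hint2 : IntervalIntegrable (fun τ => ((c - τ ^ α) / α) ^ (m+1) * condD α g τ * τ ^ (α - 1)) volume s t :=
    (((hu.pow (m+1)).mul hcc).mul hxα1).intervalIntegrable
  have hFint : IntervalIntegrable F volume s t := by
    rw [hF]; exact hint1.sub (hint2.const_mul _)
  have hFTC := intervalIntegral.integral_eq_sub_of_hasDerivAt hderiv hFint
  rw [hF] at hFTC
  rw [intervalIntegral.integral_sub hint1 (hint2.const_mul _)] at hFTC
  rw [intervalIntegral.integral_const_mul] at hFTC
  have hGt : G t = 0 := by simp [hG, hc']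
  have hGs : G s = -(1 / (m+1 : ℝ)) * ((c - s ^ α) / α) ^ (m+1) * g s := rfl
  rw [hGt, hGs] at hFTC
  linear_combination hFTC

lemma base_lemma (α : ℝ) (g : ℝ → ℝ)
    (hg : ∀ x ∈ Ioi (0:ℝ), DifferentiableAt ℝ g x)
    (hc : ContinuousOn (condD α g) (Ioi (0:ℝ)))
    (s t : ℝ) (hs : 0 < s) (ht : 0 < t) :
    g t = g s + ∫ τ in s..t, condD α g τ * τ ^ (α - 1) := by
  have huIcc : uIcc s t ⊆ Ioi (0:ℝ) := fun x hx => lt_of_lt_of_le (lt_min hs ht) hx.1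
  have hxα1 : ContinuousOn (fun x : ℝ => x ^ (α - 1)) (uIcc s t) :=
    fun x hx => (Real.continuousAt_rpow_const x (α-1) (Or.inl (huIcc hx).ne')).continuousWithinAt
  have hderiv : ∀ τ ∈ uIcc s t, HasDerivAt g (condD α g τ * τ ^ (α - 1)) τ := by
    intro τ hτ
    have hτ0 : 0 < τ := huIcc hτ
    rw [condD_mul_rpow α g hτ0]
    exact (hg τ hτ0).hasDerivAt
  have hint : IntervalIntegrable (fun τ => condD α g τ * τ ^ (α - 1)) volume s t :=
    ((hc.mono huIcc).mul hxα1).intervalIntegrable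
  have := intervalIntegral.integral_eq_sub_of_hasDerivAt hderiv hint
  linarith

/-- Taylor's formula for conformable fractional derivatives. -/
theorem conformable_taylor (α : ℝ) (hα : 0 < α ∧ α ≤ 1) (n : ℕ) (f : ℝ → ℝ)
    (hdiff : ∀ k ≤ n, ∀ x ∈ Ioi (0:ℝ), DifferentiableAt ℝ ((condD α)^[k] f) x)
    (hcont : ContinuousOn ((condD α)^[n+1] f) (Ioi (0:ℝ)))
    (s t : ℝ) (hs : 0 < s) (ht : 0 < t) :
    f t = (∑ k ∈ Finset.range (n+1),
        (1 / (k.factorial : ℝ)) * ((t ^ α - s ^ α) / α) ^ k * (condD α)^[k] f s)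
      + (1 / (n.factorial : ℝ)) *
        ∫ τ in s..t, ((t ^ α - τ ^ α) / α) ^ n * (condD α)^[n+1] f τ * τ ^ (α - 1) := by
  induction n with
  | zero =>
    simp only [Finset.sum_range_one, pow_zero, Nat.factorial_zero, Nat.cast_one, mul_one,
      one_mul, Function.iterate_zero_apply, Function.iterate_one, div_one]
    have := base_lemma α f (hdiff 0 (le_refl 0) ) hcont s t hs ht
    simpa using this
  | succ m ih =>
    have hdiff' : ∀ k ≤ m, ∀ x ∈ Ioi (0:ℝ), DifferentiableAt ℝ ((condD α)^[k] f) x :=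
      fun k hk => hdiff k (le_trans hk (Nat.le_succ m))
    have hcont' : ContinuousOn ((condD α)^[m+1] f) (Ioi (0:ℝ)) :=
      fun x hx => ((hdiff (m+1) le_rfl x hx).continuousAt).continuousWithinAt
    have hih := ih hdiff' hcont'
    have hg : ∀ x ∈ Ioi (0:ℝ), DifferentiableAt ℝ ((condD α)^[m+1] f) x :=
      hdiff (m+1) le_rfl
    rw [Function.iterate_succ_apply' (condD α) (m+1) f] at hcont ⊢
    have hstep := step_lemma α hα.1 ((condD α)^[m+1] f) hg hcont m s t hs ht
    rw [Finset.sum_range_succ, hih, hstep]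
    have hfm : (m.factorial : ℝ) ≠ 0 := by positivity
    have hm1 : ((m:ℝ)+1) ≠ 0 := by positivity
    have key : (1:ℝ)/((m+1).factorial : ℝ) = 1/(m.factorial:ℝ) * (1/((m:ℝ)+1)) := by
      rw [Nat.factorial_succ]
      push_cast
      field_simp
    rw [key]
    ring
end

section
/- Let α ∈ (0,1], 0 ≤ a < b, let g : [a,b] → [0,1] with g·t^{α−1} integrable, and let ℓ := (α(b−a)/(b^α − a^α))·∫_a^b g(t) t^{α−1} dt. Then (b^α − (b−ℓ)^α)/α ≤ ∫_a^b g(t) t^{α−1} dt ≤ ((a+ℓ)^α − a^α)/α. -/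
open Set MeasureTheory intervalIntegral

/-- Bounds on the α-fractional integral of `g` in terms of `ℓ`. -/
theorem steffensen_lemma (α a b : ℝ) (hα : 0 < α ∧ α ≤ 1) (ha : 0 ≤ a) (hab : a < b)
    (g : ℝ → ℝ) (hg : ∀ t ∈ Icc a b, g t ∈ Icc (0:ℝ) 1)
    (hgi : IntervalIntegrable (fun t => g t * t ^ (α - 1)) volume a b)
    (ℓ : ℝ) (hℓ : ℓ = (α * (b - a) / (b ^ α - a ^ α)) * ∫ t in a..b, g t * t ^ (α - 1)) :
    (b ^ α - (b - ℓ) ^ α) / α ≤ (∫ t in a..b, g t * t ^ (α - 1)) ∧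
    (∫ t in a..b, g t * t ^ (α - 1)) ≤ ((a + ℓ) ^ α - a ^ α) / α := by
  obtain ⟨hα0, hα1⟩ := hα
  have hb : 0 < b := lt_of_le_of_lt ha hab
  set I : ℝ := ∫ t in a..b, g t * t ^ (α - 1) with hI
  have hpow : a ^ α < b ^ α := Real.rpow_lt_rpow ha hab hα0
  have hpowne : b ^ α - a ^ α ≠ 0 := by linarith
  have hba : (0:ℝ) < b - a := by linarith
  -- integrability of t ^ (α-1)
  have hrint : IntervalIntegrable (fun t : ℝ => t ^ (α - 1)) volume a b :=
    intervalIntegral.intervalIntegrable_rpow' (by linarith)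
  -- the reference integral
  have href : (∫ t in a..b, t ^ (α - 1)) = (b ^ α - a ^ α) / α := by
    rw [integral_rpow (Or.inl (by linarith))]
    ring_nf
  -- I ≥ 0
  have hI0 : 0 ≤ I := by
    apply intervalIntegral.integral_nonneg hab.le
    intro t ht
    have h1 := (hg t ht).1
    have h2 : (0:ℝ) ≤ t ^ (α - 1) := Real.rpow_nonneg (le_trans ha ht.1) _
    positivity
  -- I ≤ (b^α - a^α)/α
  have hIle : I ≤ (b ^ α - a ^ α) / α := by
    rw [← href]
    apply intervalIntegral.integral_mono_on hab.le hgi hrint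
    intro t ht
    have h2 : (0:ℝ) ≤ t ^ (α - 1) := Real.rpow_nonneg (le_trans ha ht.1) _
    nlinarith [(hg t ht).2]
  -- key identity: I = ℓ * (b^α - a^α) / (α * (b-a))
  have hkey : I * (α * (b - a)) = ℓ * (b ^ α - a ^ α) := by
    rw [hℓ]; field_simp
  -- bounds on ℓ
  have hℓ0 : 0 ≤ ℓ := by
    rw [hℓ]
    have : 0 < α * (b - a) / (b ^ α - a ^ α) := div_pos (by positivity) (by linarith)
    exact mul_nonneg this.le hI0
  have hℓba : ℓ ≤ b - a := by
    rw [hℓ]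
    rw [div_mul_eq_mul_div, div_le_iff₀ (by linarith)]
    calc α * (b - a) * I ≤ α * (b - a) * ((b ^ α - a ^ α) / α) := by
          apply mul_le_mul_of_nonneg_left hIle (by positivity)
      _ = (b - a) * (b ^ α - a ^ α) := by field_simp
  -- concavity
  have hConc : ConcaveOn ℝ (Set.Ici 0) fun x : ℝ => x ^ α :=
    Real.concaveOn_rpow hα0.le hα1
  set lam : ℝ := ℓ / (b - a) with hlam
  have hlam0 : 0 ≤ lam := div_nonneg hℓ0 hba.le
  have hlam1 : lam ≤ 1 := by rw [hlam, div_le_one hba]; linarith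
  have hlamℓ : lam * (b - a) = ℓ := div_mul_cancel₀ ℓ hba.ne'
  have hmema : a ∈ Set.Ici (0:ℝ) := ha
  have hmemb : b ∈ Set.Ici (0:ℝ) := hb.le
  -- lower bound
  constructor
  · have h1 : lam • (a ^ α) + (1 - lam) • (b ^ α) ≤ (lam • a + (1 - lam) • b) ^ α :=
      hConc.2 hmema hmemb hlam0 (by linarith) (by ring)
    have h2 : lam • a + (1 - lam) • b = b - ℓ := by
      simp only [smul_eq_mul]; nlinarith [hlamℓ]
    rw [h2] at h1
    simp only [smul_eq_mul] at h1
    rw [div_le_iff₀ hα0]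
    have : I * α = ℓ * (b ^ α - a ^ α) / (b - a) := by
      rw [eq_div_iff hba.ne', mul_assoc]; exact hkey
    rw [this, le_div_iff₀ hba]
    nlinarith [mul_le_mul_of_nonneg_right h1 hba.le, hlamℓ]
  · have h1 : (1 - lam) • (a ^ α) + lam • (b ^ α) ≤ ((1 - lam) • a + lam • b) ^ α :=
      hConc.2 hmema hmemb (by linarith) hlam0 (by ring)
    have h2 : (1 - lam) • a + lam • b = a + ℓ := by
      simp only [smul_eq_mul]; nlinarith [hlamℓ]
    rw [h2] at h1
    simp only [smul_eq_mul] at h1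
    rw [le_div_iff₀ hα0]
    have : I * α = ℓ * (b ^ α - a ^ α) / (b - a) := by
      rw [eq_div_iff hba.ne', mul_assoc]; exact hkey
    rw [this, div_le_iff₀ hba]
    nlinarith [mul_le_mul_of_nonneg_right h1 hba.le, hlamℓ]
end

section
/- Fractional Steffensen inequality: Let α ∈ (0,1], 0 ≤ a < b, let f : [a,b] → [0,∞) be decreasing, let g : [a,b] → [0,1], both with α-fractional integrable products, and let ℓ := (α(b−a)/(b^α − a^α))·∫_a^b g(t) t^{α−1} dt. Then ∫_{b−ℓ}^b f(t) t^{α−1} dt ≤ ∫_a^b f(t) g(t) t^{α−1} dt ≤ ∫_a^{a+ℓ} f(t) t^{α−1} dt. -/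
set_option maxHeartbeats 800000


open Set MeasureTheory intervalIntegral

/-- Fractional Steffensen inequality. -/
theorem fractional_steffensen (α a b : ℝ) (hα : 0 < α ∧ α ≤ 1) (ha : 0 ≤ a) (hab : a < b)
    (f g : ℝ → ℝ)
    (hf0 : ∀ t ∈ Icc a b, 0 ≤ f t) (hfdec : AntitoneOn f (Icc a b))
    (hg : ∀ t ∈ Icc a b, g t ∈ Icc (0:ℝ) 1)
    (hfi : IntervalIntegrable (fun t => f t * t ^ (α - 1)) volume a b)
    (hgi : IntervalIntegrable (fun t => g t * t ^ (α - 1)) volume a b)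
    (hfgi : IntervalIntegrable (fun t => f t * g t * t ^ (α - 1)) volume a b)
    (ℓ : ℝ) (hℓ : ℓ = (α * (b - a) / (b ^ α - a ^ α)) * ∫ t in a..b, g t * t ^ (α - 1)) :
    (∫ t in (b - ℓ)..b, f t * t ^ (α - 1)) ≤ (∫ t in a..b, f t * g t * t ^ (α - 1)) ∧
    (∫ t in a..b, f t * g t * t ^ (α - 1)) ≤ ∫ t in a..(a + ℓ), f t * t ^ (α - 1) := by
  obtain ⟨hα0, hα1⟩ := hα
  have hb0 : (0:ℝ) < b := lt_of_le_of_lt ha hab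
  have hba : (0:ℝ) < b ^ α - a ^ α := sub_pos.2 (Real.rpow_lt_rpow ha hab hα0)
  have hba' : b - a ≠ 0 := sub_ne_zero.2 hab.ne'
  have hwint : ∀ u v : ℝ, IntervalIntegrable (fun t : ℝ => t ^ (α - 1)) volume u v :=
    fun u v => intervalIntegrable_rpow' (by linarith)
  have hIw : ∀ u v : ℝ, (∫ t in u..v, t ^ (α - 1)) = (v ^ α - u ^ α) / α := by
    intro u v
    rw [integral_rpow (Or.inl (by linarith : (-1:ℝ) < α - 1))]
    norm_num
  have hwnn : ∀ t ∈ Icc a b, (0:ℝ) ≤ t ^ (α - 1) :=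
    fun t ht => Real.rpow_nonneg (ha.trans ht.1) _
  set I := ∫ t in a..b, g t * t ^ (α - 1) with hI
  have hInn : 0 ≤ I :=
    integral_nonneg hab.le fun t ht => mul_nonneg (hg t ht).1 (hwnn t ht)
  have hIle : I ≤ (b ^ α - a ^ α) / α := by
    rw [← hIw a b]
    exact integral_mono_on hab.le hgi (hwint a b)
      (fun t ht => mul_le_of_le_one_left (hwnn t ht) (hg t ht).2)
  have hℓ0 : 0 ≤ ℓ := by
    rw [hℓ]
    exact mul_nonneg (div_nonneg (mul_nonneg hα0.le (by linarith)) hba.le) hInn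
  have hℓb : ℓ ≤ b - a := by
    rw [hℓ]
    calc α * (b - a) / (b ^ α - a ^ α) * I
        ≤ α * (b - a) / (b ^ α - a ^ α) * ((b ^ α - a ^ α) / α) :=
          mul_le_mul_of_nonneg_left hIle (div_nonneg (mul_nonneg hα0.le (by linarith)) hba.le)
      _ = b - a := by field_simp
  have hkey : ℓ * (b ^ α - a ^ α) = α * (b - a) * I := by
    rw [hℓ]; field_simp
  -- concavity of x ^ α
  have conc := Real.concaveOn_rpow hα0.le hα1
  have hs0 : 0 ≤ ℓ / (b - a) := div_nonneg hℓ0 (by linarith)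
  have hs1 : ℓ / (b - a) ≤ 1 := (div_le_one (by linarith)).2 hℓb
  have hcA : (1 - ℓ / (b - a)) * a ^ α + (ℓ / (b - a)) * b ^ α ≤ (a + ℓ) ^ α := by
    have h := conc.2 (mem_Ici.2 ha) (mem_Ici.2 hb0.le)
      (show (0:ℝ) ≤ 1 - ℓ / (b - a) by linarith) hs0
      (show (1 - ℓ / (b - a)) + ℓ / (b - a) = 1 by ring)
    simp only [smul_eq_mul] at h
    have hx : (1 - ℓ / (b - a)) * a + (ℓ / (b - a)) * b = a + ℓ := by
      field_simp; ring
    rwa [hx] at h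
  have hcB : (ℓ / (b - a)) * a ^ α + (1 - ℓ / (b - a)) * b ^ α ≤ (b - ℓ) ^ α := by
    have h := conc.2 (mem_Ici.2 ha) (mem_Ici.2 hb0.le) hs0
      (show (0:ℝ) ≤ 1 - ℓ / (b - a) by linarith)
      (show ℓ / (b - a) + (1 - ℓ / (b - a)) = 1 by ring)
    simp only [smul_eq_mul] at h
    have hx : (ℓ / (b - a)) * a + (1 - ℓ / (b - a)) * b = b - ℓ := by
      field_simp; ring
    rwa [hx] at h
  have hαI : α * I = ℓ / (b - a) * (b ^ α - a ^ α) := by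
    field_simp
    linarith [hkey]
  have hcon1 : α * I ≤ (a + ℓ) ^ α - a ^ α := by
    rw [hαI]; nlinarith [hcA]
  have hcon2 : b ^ α - (b - ℓ) ^ α ≤ α * I := by
    rw [hαI]; nlinarith [hcB]
  -- subinterval integrability
  have hsubI : ∀ {F : ℝ → ℝ}, IntervalIntegrable F volume a b →
      ∀ u v : ℝ, a ≤ u → u ≤ b → a ≤ v → v ≤ b → IntervalIntegrable F volume u v := by
    intro F hF u v h1 h2 h3 h4
    refine hF.mono_set (uIcc_subset_uIcc ?_ ?_) <;>
      rw [uIcc_of_le hab.le] <;> exact ⟨by linarith, by linarith⟩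
  constructor
  · -- lower bound, d := b - ℓ
    set d := b - ℓ with hd
    have hda : a ≤ d := by simp [hd]; linarith
    have hdb : d ≤ b := by simp [hd]; linarith
    have hfgw_ad := hsubI hfgi a d le_rfl hab.le hda hdb
    have hfgw_db := hsubI hfgi d b hda hdb hab.le le_rfl
    have hgw_ad := hsubI hgi a d le_rfl hab.le hda hdb
    have hgw_db := hsubI hgi d b hda hdb hab.le le_rfl
    have hfw_db := hsubI hfi d b hda hdb hab.le le_rfl
    have hsplitX : (∫ t in a..b, f t * g t * t ^ (α - 1)) =
        (∫ t in a..d, f t * g t * t ^ (α - 1)) + ∫ t in d..b, f t * g t * t ^ (α - 1) :=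
      (integral_add_adjacent_intervals hfgw_ad hfgw_db).symm
    have hsplitG : I = (∫ t in a..d, g t * t ^ (α - 1)) + ∫ t in d..b, g t * t ^ (α - 1) :=
      (integral_add_adjacent_intervals hgw_ad hgw_db).symm
    have hdmem : d ∈ Icc a b := ⟨hda, hdb⟩
    -- Claim A': f d * ∫_a^d g w ≤ ∫_a^d f g w
    have hA : f d * (∫ t in a..d, g t * t ^ (α - 1)) ≤
        ∫ t in a..d, f t * g t * t ^ (α - 1) := by
      rw [← intervalIntegral.integral_const_mul]
      refine integral_mono_on hda (hgw_ad.const_mul _) hfgw_ad fun t ht => ?_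
      have htab : t ∈ Icc a b := ⟨ht.1, ht.2.trans hdb⟩
      have hfd : f d ≤ f t := hfdec htab hdmem ht.2
      have : f d * (g t * t ^ (α - 1)) ≤ f t * (g t * t ^ (α - 1)) :=
        mul_le_mul_of_nonneg_right hfd (mul_nonneg (hg t htab).1 (hwnn t htab))
      linarith [this, mul_assoc (f t) (g t) (t ^ (α - 1))]
    -- Claim B': ∫_d^b f w ≤ f d * (W_db - G_db) + ∫_d^b f g w
    have hB : (∫ t in d..b, f t * t ^ (α - 1)) ≤
        f d * ((∫ t in d..b, t ^ (α - 1)) - ∫ t in d..b, g t * t ^ (α - 1)) +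
          ∫ t in d..b, f t * g t * t ^ (α - 1) := by
      have hint : IntervalIntegrable
          (fun t => f d * (t ^ (α - 1) - g t * t ^ (α - 1)) + f t * g t * t ^ (α - 1))
          volume d b := (((hwint d b).sub hgw_db).const_mul _).add hfgw_db
      have h := integral_mono_on hdb hfw_db hint fun t ht => ?_
      · rwa [integral_add (((hwint d b).sub hgw_db).const_mul _) hfgw_db,
          intervalIntegral.integral_const_mul, integral_sub (hwint d b) hgw_db] at h
      · have htab : t ∈ Icc a b := ⟨hda.trans ht.1, ht.2⟩
        have hfd : f t ≤ f d := hfdec hdmem htab ht.1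
        have hprod : 0 ≤ (f d - f t) * (1 - g t) * t ^ (α - 1) :=
          mul_nonneg (mul_nonneg (by linarith) (by linarith [(hg t htab).2]))
            (hwnn t htab)
        nlinarith [hprod]
    have hWdb : (∫ t in d..b, t ^ (α - 1)) = (b ^ α - d ^ α) / α := hIw d b
    have hGge : (∫ t in d..b, t ^ (α - 1)) - (∫ t in d..b, g t * t ^ (α - 1)) ≤
        ∫ t in a..d, g t * t ^ (α - 1) := by
      rw [hWdb]
      have : (b ^ α - d ^ α) / α ≤ I := by
        rw [div_le_iff₀ hα0]; linarith [hcon2]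
      linarith [hsplitG]
    have hfdG : f d * ((∫ t in d..b, t ^ (α - 1)) - ∫ t in d..b, g t * t ^ (α - 1)) ≤
        f d * ∫ t in a..d, g t * t ^ (α - 1) :=
      mul_le_mul_of_nonneg_left hGge (hf0 d hdmem)
    linarith [hsplitX, hA, hB, hfdG]
  · -- upper bound, c := a + ℓ
    set c := a + ℓ with hc
    have hca : a ≤ c := by simp [hc]; linarith
    have hcb : c ≤ b := by simp [hc]; linarith
    have hfgw_ac := hsubI hfgi a c le_rfl hab.le hca hcb
    have hfgw_cb := hsubI hfgi c b hca hcb hab.le le_rfl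
    have hgw_ac := hsubI hgi a c le_rfl hab.le hca hcb
    have hgw_cb := hsubI hgi c b hca hcb hab.le le_rfl
    have hfw_ac := hsubI hfi a c le_rfl hab.le hca hcb
    have hsplitX : (∫ t in a..b, f t * g t * t ^ (α - 1)) =
        (∫ t in a..c, f t * g t * t ^ (α - 1)) + ∫ t in c..b, f t * g t * t ^ (α - 1) :=
      (integral_add_adjacent_intervals hfgw_ac hfgw_cb).symm
    have hsplitG : I = (∫ t in a..c, g t * t ^ (α - 1)) + ∫ t in c..b, g t * t ^ (α - 1) :=
      (integral_add_adjacent_intervals hgw_ac hgw_cb).symm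
    have hcmem : c ∈ Icc a b := ⟨hca, hcb⟩
    -- Claim A: ∫_c^b f g w ≤ f c * ∫_c^b g w
    have hA : (∫ t in c..b, f t * g t * t ^ (α - 1)) ≤
        f c * ∫ t in c..b, g t * t ^ (α - 1) := by
      rw [← intervalIntegral.integral_const_mul]
      refine integral_mono_on hcb hfgw_cb (hgw_cb.const_mul _) fun t ht => ?_
      have htab : t ∈ Icc a b := ⟨hca.trans ht.1, ht.2⟩
      have hfle : f t ≤ f c := hfdec hcmem htab ht.1
      have : f t * (g t * t ^ (α - 1)) ≤ f c * (g t * t ^ (α - 1)) :=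
        mul_le_mul_of_nonneg_right hfle (mul_nonneg (hg t htab).1 (hwnn t htab))
      linarith [this, mul_assoc (f t) (g t) (t ^ (α - 1))]
    -- Claim B: f c * (W_ac - G_ac) + ∫_a^c f g w ≤ ∫_a^c f w
    have hB : f c * ((∫ t in a..c, t ^ (α - 1)) - ∫ t in a..c, g t * t ^ (α - 1)) +
        (∫ t in a..c, f t * g t * t ^ (α - 1)) ≤ ∫ t in a..c, f t * t ^ (α - 1) := by
      have hint : IntervalIntegrable
          (fun t => f c * (t ^ (α - 1) - g t * t ^ (α - 1)) + f t * g t * t ^ (α - 1))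
          volume a c := (((hwint a c).sub hgw_ac).const_mul _).add hfgw_ac
      have h := integral_mono_on hca hint hfw_ac fun t ht => ?_
      · rwa [integral_add (((hwint a c).sub hgw_ac).const_mul _) hfgw_ac,
          intervalIntegral.integral_const_mul, integral_sub (hwint a c) hgw_ac] at h
      · have htab : t ∈ Icc a b := ⟨ht.1, ht.2.trans hcb⟩
        have hfc : f c ≤ f t := hfdec htab hcmem ht.2
        have hprod : 0 ≤ (f t - f c) * (1 - g t) * t ^ (α - 1) :=
          mul_nonneg (mul_nonneg (by linarith) (by linarith [(hg t htab).2]))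
            (hwnn t htab)
        nlinarith [hprod]
    have hWac : (∫ t in a..c, t ^ (α - 1)) = (c ^ α - a ^ α) / α := hIw a c
    have hGle : (∫ t in c..b, g t * t ^ (α - 1)) ≤
        (∫ t in a..c, t ^ (α - 1)) - ∫ t in a..c, g t * t ^ (α - 1) := by
      rw [hWac]
      have : I ≤ (c ^ α - a ^ α) / α := by
        rw [le_div_iff₀ hα0]; linarith [hcon1]
      linarith [hsplitG]
    have hfcG : f c * (∫ t in c..b, g t * t ^ (α - 1)) ≤
        f c * ((∫ t in a..c, t ^ (α - 1)) - ∫ t in a..c, g t * t ^ (α - 1)) :=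
      mul_le_mul_of_nonneg_left hGle (hf0 c hcmem)
    linarith [hsplitX, hA, hB, hfcG]
end

section
/- Let α ∈ (0,1], 0 < a < b, and let f be (n+2) times α-fractional differentiable with D_α^{n+1} f continuous. Define the Taylor remainder R_{n,f}(t,s) := f(s) − Σ_{k=0}^{n} (D_α^k f(t)/k!)·((s^α − t^α)/α)^k. Then ∫_a^b (D_α^{n+1} f(s)/(n+1)!)·((t^α − s^α)/α)^{n+1} s^{α−1} ds = ∫_a^t R_{n,f}(a,s) s^{α−1} ds + ∫_t^b R_{n,f}(b,s) s^{α−1} ds for all t ∈ [a,b]. -/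
open Set MeasureTheory intervalIntegral

/-- α-fractional Taylor remainder `R_{n,f}(t,s)`. -/
noncomputable def taylorRem (α : ℝ) (f : ℝ → ℝ) (n : ℕ) (t s : ℝ) : ℝ :=
  f s - ∑ k ∈ Finset.range (n+1),
    ((condD α)^[k] f t / (k.factorial : ℝ)) * ((s ^ α - t ^ α) / α) ^ k


lemma iter_hasDerivAt {α : ℝ} {f : ℝ → ℝ} {k : ℕ} {s : ℝ} (hs : 0 < s)
    (hd : DifferentiableAt ℝ ((condD α)^[k] f) s) :
    HasDerivAt ((condD α)^[k] f) (s ^ (α - 1) * (condD α)^[k+1] f s) s := by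
  have h := hd.hasDerivAt
  refine h.congr_deriv ?_
  symm
  rw [Function.iterate_succ_apply', condD]
  rw [← mul_assoc, ← Real.rpow_add hs]
  have : α - 1 + (1 - α) = 0 := by ring
  rw [this, Real.rpow_zero, one_mul]

lemma hasDerivAt_powfun {α : ℝ} (hα0 : 0 < α) (c : ℝ) {s : ℝ} (hs : 0 < s) :
    HasDerivAt (fun u : ℝ => (c - u ^ α) / α) (-(s ^ (α - 1))) s := by
  have h1 : HasDerivAt (fun u : ℝ => u ^ α) (α * s ^ (α - 1)) s :=
    Real.hasDerivAt_rpow_const (Or.inl hs.ne')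
  have h2 := (h1.const_sub c).div_const α
  refine h2.congr_deriv ?_
  symm
  field_simp

lemma hasDerivAt_psi {α : ℝ} (hα0 : 0 < α) (f : ℝ → ℝ) (n : ℕ) (t : ℝ) {s : ℝ} (hs : 0 < s)
    (hdiff : ∀ k ≤ n, DifferentiableAt ℝ ((condD α)^[k] f) s) :
    HasDerivAt (fun u => ∑ k ∈ Finset.range (n+1),
        (condD α)^[k] f u / (k.factorial : ℝ) * ((t ^ α - u ^ α) / α) ^ k)
      ((condD α)^[n+1] f s / (n.factorial : ℝ) * ((t ^ α - s ^ α) / α) ^ n * s ^ (α - 1)) s := by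
  set w : ℕ → ℝ := fun k => s ^ (α - 1) * ((condD α)^[k] f s) *
      ((t ^ α - s ^ α) / α) ^ (k - 1) * k / (k.factorial : ℝ) with hw
  have hterm : ∀ k ∈ Finset.range (n+1), HasDerivAt
      (fun u => (condD α)^[k] f u / (k.factorial : ℝ) * ((t ^ α - u ^ α) / α) ^ k)
      (w (k+1) - w k) s := by
    intro k hk
    rw [Finset.mem_range] at hk
    have h1 : HasDerivAt (fun u => (condD α)^[k] f u / (k.factorial : ℝ))
        (s ^ (α - 1) * (condD α)^[k+1] f s / (k.factorial : ℝ)) s :=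
      (iter_hasDerivAt hs (hdiff k (by omega))).div_const _
    have h2 : HasDerivAt (fun u : ℝ => ((t ^ α - u ^ α) / α) ^ k)
        ((k : ℝ) * ((t ^ α - s ^ α) / α) ^ (k - 1) * (-(s ^ (α - 1)))) s :=
      (hasDerivAt_powfun hα0 (t ^ α) hs).pow k
    have h3 := h1.mul h2
    refine h3.congr_deriv ?_
    symm
    rw [hw]
    simp only [Nat.add_sub_cancel, Nat.factorial_succ, Nat.cast_mul, Nat.cast_add, Nat.cast_one]
    have hfk : ((k.factorial : ℝ)) ≠ 0 := Nat.cast_ne_zero.mpr k.factorial_ne_zero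
    have hk1 : ((k : ℝ) + 1) ≠ 0 := by positivity
    by_cases hk0 : k = 0
    · subst hk0; simp
    · have hkd : k - 1 + 1 = k := Nat.succ_pred_eq_of_pos (Nat.pos_of_ne_zero hk0)
      field_simp
      rw [← hkd]
      ring
  have hsum := HasDerivAt.fun_sum hterm
  have htel : ∑ k ∈ Finset.range (n+1), (w (k+1) - w k) = w (n+1) - w 0 :=
    Finset.sum_range_sub w (n+1)
  rw [htel] at hsum
  refine hsum.congr_deriv ?_
  symm
  rw [hw]
  simp only [Nat.add_sub_cancel, Nat.factorial_succ, Nat.cast_mul, Nat.cast_add, Nat.cast_one,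
    Nat.cast_zero, pow_zero, Nat.factorial_zero]
  have hfn : ((n.factorial : ℝ)) ≠ 0 := Nat.cast_ne_zero.mpr n.factorial_ne_zero
  have hn1 : ((n : ℝ) + 1) ≠ 0 := by positivity
  field_simp
  ring


lemma contOn_rpow (β : ℝ) {s : Set ℝ} (h : ∀ x ∈ s, (0:ℝ) < x) :
    ContinuousOn (fun u : ℝ => u ^ β) s :=
  fun x hx => (Real.continuousAt_rpow_const x β (Or.inl (h x hx).ne')).continuousWithinAt

lemma key_integral {α a b : ℝ} (hα0 : 0 < α) (ha : 0 < a) (hab : a ≤ b) {f : ℝ → ℝ} {n : ℕ}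
    (hdiff : ∀ k ≤ n + 1, ∀ x ∈ Ioi (0:ℝ), DifferentiableAt ℝ ((condD α)^[k] f) x)
    {c t : ℝ} (hc : c ∈ Icc a b) (ht : t ∈ Icc a b) :
    (∫ u in c..t, (condD α)^[n+1] f u / (n.factorial : ℝ) * ((t ^ α - u ^ α) / α) ^ n
        * u ^ (α - 1)) = taylorRem α f n c t := by
  have hIcc : Icc a b ⊆ Ioi (0:ℝ) := fun x hx => lt_of_lt_of_le ha hx.1
  have hsub : uIcc c t ⊆ Icc a b := by
    rw [← uIcc_of_le hab]
    exact uIcc_subset_uIcc (by rw [uIcc_of_le hab]; exact hc) (by rw [uIcc_of_le hab]; exact ht)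
  have hpos : ∀ u ∈ uIcc c t, (0:ℝ) < u := fun u hu => hIcc (hsub hu)
  have hgc : ContinuousOn ((condD α)^[n+1] f) (uIcc c t) := fun x hx =>
    ((hdiff (n+1) le_rfl x (hpos x hx)).continuousAt).continuousWithinAt
  have hint : IntervalIntegrable (fun u => (condD α)^[n+1] f u / (n.factorial : ℝ) *
      ((t ^ α - u ^ α) / α) ^ n * u ^ (α - 1)) MeasureTheory.volume c t := by
    apply ContinuousOn.intervalIntegrable
    exact ((hgc.div_const _).mul
      (((continuousOn_const.sub (contOn_rpow α hpos)).div_const _).pow n)).mul (contOn_rpow (α-1) hpos)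
  have hftc := intervalIntegral.integral_eq_sub_of_hasDerivAt
    (f := fun u => ∑ k ∈ Finset.range (n+1),
        (condD α)^[k] f u / (k.factorial : ℝ) * ((t ^ α - u ^ α) / α) ^ k)
    (fun u hu => hasDerivAt_psi hα0 f n t (hpos u hu)
      (fun k hk => hdiff k (by omega) u (hpos u hu))) hint
  rw [hftc]
  have hft : ∑ k ∈ Finset.range (n+1),
      (condD α)^[k] f t / (k.factorial : ℝ) * ((t ^ α - t ^ α) / α) ^ k = f t := by
    rw [Finset.sum_eq_single 0]
    · simp
    · intro k hk hk0
      simp [sub_self, zero_div, zero_pow hk0]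
    · simp
  rw [hft, taylorRem]

private noncomputable def efun (α : ℝ) (f : ℝ → ℝ) (n j : ℕ) : ℝ → ℝ :=
  fun u => (condD α)^[n+1] f u * (-(u ^ α) / α) ^ (n+1-j) * u ^ (α-1)

private noncomputable def qfun (α : ℝ) (f : ℝ → ℝ) (n : ℕ) (c : ℝ) (j : ℕ) : ℝ → ℝ :=
  fun t => ∫ u in c..t, efun α f n j u

private noncomputable def Bfun (α : ℝ) (f : ℝ → ℝ) (n : ℕ) (c : ℝ) : ℝ → ℝ :=
  fun t => ∑ j ∈ Finset.range (n+1+1),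
    ((n+1).choose j : ℝ) / (((n+1).factorial : ℝ)) * ((t ^ α / α) ^ j * qfun α f n c j t)

private noncomputable def Afun (α : ℝ) (f : ℝ → ℝ) (n : ℕ) (c : ℝ) : ℝ → ℝ :=
  fun t => ∫ s in c..t, taylorRem α f n c s * s ^ (α - 1)

section pieces

variable {α a b : ℝ} {f : ℝ → ℝ} {n : ℕ} {c : ℝ}

lemma uIcc_sub (hab : a ≤ b) {c t : ℝ} (hc : c ∈ Icc a b) (ht : t ∈ Icc a b) :
    uIcc c t ⊆ Icc a b := by
  rw [← uIcc_of_le hab]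
  exact uIcc_subset_uIcc (by rw [uIcc_of_le hab]; exact hc) (by rw [uIcc_of_le hab]; exact ht)

lemma econt (ha : 0 < a)
    (hdiff : ∀ x ∈ Ioi (0:ℝ), DifferentiableAt ℝ ((condD α)^[n+1] f) x) (j : ℕ) :
    ContinuousOn (efun α f n j) (Icc a b) := by
  have hpos : ∀ x ∈ Icc a b, (0:ℝ) < x := fun x hx => lt_of_lt_of_le ha hx.1
  have hgc : ContinuousOn ((condD α)^[n+1] f) (Icc a b) := fun x hx =>
    ((hdiff x (hpos x hx)).continuousAt).continuousWithinAt
  exact (hgc.mul ((((contOn_rpow α hpos).neg).div_const _).pow _)).mul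
    (contOn_rpow (α-1) hpos)

lemma Rcont (ha : 0 < a)
    (hdiff : ∀ x ∈ Ioi (0:ℝ), DifferentiableAt ℝ f x) :
    ContinuousOn (fun s => taylorRem α f n c s * s ^ (α - 1)) (Icc a b) := by
  have hpos : ∀ x ∈ Icc a b, (0:ℝ) < x := fun x hx => lt_of_lt_of_le ha hx.1
  have hfc : ContinuousOn f (Icc a b) := fun x hx =>
    ((hdiff x (hpos x hx)).continuousAt).continuousWithinAt
  have hsum : ContinuousOn (fun s : ℝ => ∑ k ∈ Finset.range (n+1),
      ((condD α)^[k] f c / (k.factorial : ℝ)) * ((s ^ α - c ^ α) / α) ^ k) (Icc a b) := by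
    apply continuousOn_finset_sum
    intro k _
    exact continuousOn_const.mul
      ((((contOn_rpow α hpos).sub continuousOn_const).div_const _).pow _)
  exact ((hfc.sub hsum).mul (contOn_rpow (α-1) hpos))

lemma qderiv (ha : 0 < a) (hab : a ≤ b)
    (hdiff : ∀ x ∈ Ioi (0:ℝ), DifferentiableAt ℝ ((condD α)^[n+1] f) x)
    (hc : c ∈ Icc a b) (j : ℕ) {t : ℝ} (ht : t ∈ Icc a b) :
    HasDerivWithinAt (qfun α f n c j) (efun α f n j t) (Icc a b) t := by
  haveI : Fact (t ∈ Icc a b) := ⟨ht⟩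
  exact intervalIntegral.integral_hasDerivWithinAt_right
    (((econt ha hdiff j).mono (uIcc_sub hab hc ht)).intervalIntegrable)
    ((econt ha hdiff j).stronglyMeasurableAtFilter_nhdsWithin measurableSet_Icc t)
    ((econt ha hdiff j) t ht)

lemma Aderiv (ha : 0 < a) (hab : a ≤ b)
    (hdiff : ∀ x ∈ Ioi (0:ℝ), DifferentiableAt ℝ f x)
    (hc : c ∈ Icc a b) {t : ℝ} (ht : t ∈ Icc a b) :
    HasDerivWithinAt (Afun α f n c) (taylorRem α f n c t * t ^ (α - 1)) (Icc a b) t := by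
  haveI : Fact (t ∈ Icc a b) := ⟨ht⟩
  exact intervalIntegral.integral_hasDerivWithinAt_right
    (((Rcont ha hdiff).mono (uIcc_sub hab hc ht)).intervalIntegrable)
    ((Rcont ha hdiff).stronglyMeasurableAtFilter_nhdsWithin measurableSet_Icc t)
    ((Rcont ha hdiff) t ht)

end pieces

section Bstuff

variable {α a b : ℝ} {f : ℝ → ℝ} {n : ℕ} {c : ℝ}

lemma Bexpand (hα0 : 0 < α) (ha : 0 < a) (hab : a ≤ b)
    (hdiff : ∀ x ∈ Ioi (0:ℝ), DifferentiableAt ℝ ((condD α)^[n+1] f) x)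
    (hc : c ∈ Icc a b) {t : ℝ} (ht : t ∈ Icc a b) :
    (∫ s in c..t, (condD α)^[n+1] f s / (((n+1).factorial : ℝ)) *
        ((t ^ α - s ^ α) / α) ^ (n+1) * s ^ (α - 1)) = Bfun α f n c t := by
  have expand : ∀ s : ℝ, (condD α)^[n+1] f s / (((n+1).factorial : ℝ)) *
        ((t ^ α - s ^ α) / α) ^ (n+1) * s ^ (α - 1)
      = ∑ j ∈ Finset.range (n+1+1), ((n+1).choose j : ℝ) / (((n+1).factorial : ℝ)) *
          ((t ^ α / α) ^ j * efun α f n j s) := by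
    intro s
    have hap : ((t ^ α - s ^ α) / α) = t ^ α / α + (-(s ^ α) / α) := by ring
    rw [hap, add_pow, Finset.mul_sum, Finset.sum_mul]
    refine Finset.sum_congr rfl fun j hj => ?_
    simp only [efun]
    ring
  simp only [expand]
  rw [intervalIntegral.integral_finset_sum]
  · simp only [intervalIntegral.integral_const_mul, Bfun, qfun]
  · intro j hj
    exact ((((econt ha hdiff j).mono (uIcc_sub hab hc ht)).intervalIntegrable).const_mul
      _).const_mul _

lemma keyexpand (hα0 : 0 < α) (ha : 0 < a) (hab : a ≤ b)
    (hdiff : ∀ k ≤ n + 1, ∀ x ∈ Ioi (0:ℝ), DifferentiableAt ℝ ((condD α)^[k] f) x)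
    (hc : c ∈ Icc a b) {t : ℝ} (ht : t ∈ Icc a b) :
    taylorRem α f n c t = ∑ i ∈ Finset.range (n+1),
      ((n.choose i : ℝ) / ((n.factorial : ℝ))) * ((t ^ α / α) ^ i * qfun α f n c (i+1) t) := by
  rw [← key_integral hα0 ha hab hdiff hc ht]
  have expand : ∀ s : ℝ, (condD α)^[n+1] f s / ((n.factorial : ℝ)) *
        ((t ^ α - s ^ α) / α) ^ n * s ^ (α - 1)
      = ∑ i ∈ Finset.range (n+1), ((n.choose i : ℝ) / ((n.factorial : ℝ))) *
          ((t ^ α / α) ^ i * efun α f n (i+1) s) := by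
    intro s
    have hap : ((t ^ α - s ^ α) / α) = t ^ α / α + (-(s ^ α) / α) := by ring
    rw [hap, add_pow, Finset.mul_sum, Finset.sum_mul]
    refine Finset.sum_congr rfl fun i hi => ?_
    simp only [efun]
    have hni : n + 1 - (i+1) = n - i := by omega
    rw [hni]
    ring
  simp only [expand]
  rw [intervalIntegral.integral_finset_sum]
  · simp only [intervalIntegral.integral_const_mul, qfun]
  · intro i hi
    exact ((((econt ha (hdiff (n+1) le_rfl) (i+1)).mono
      (uIcc_sub hab hc ht)).intervalIntegrable).const_mul _).const_mul _

lemma Bderiv (hα0 : 0 < α) (ha : 0 < a) (hab : a ≤ b)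
    (hdiff : ∀ k ≤ n + 1, ∀ x ∈ Ioi (0:ℝ), DifferentiableAt ℝ ((condD α)^[k] f) x)
    (hc : c ∈ Icc a b) {t : ℝ} (ht : t ∈ Icc a b) :
    HasDerivWithinAt (Bfun α f n c) (taylorRem α f n c t * t ^ (α - 1)) (Icc a b) t := by
  have htpos : (0:ℝ) < t := lt_of_lt_of_le ha ht.1
  have hg := hdiff (n+1) le_rfl
  have hm : ∀ j : ℕ, HasDerivAt (fun u : ℝ => (u ^ α / α) ^ j)
      ((j:ℝ) * (t ^ α / α) ^ (j-1) * t ^ (α - 1)) t := by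
    intro j
    have h1 : HasDerivAt (fun u : ℝ => u ^ α / α) (t ^ (α - 1)) t := by
      have h2 := (Real.hasDerivAt_rpow_const (p := α) (Or.inl htpos.ne')).div_const α
      refine h2.congr_deriv ?_
      symm
      field_simp
    exact h1.pow j
  have hterm : ∀ j ∈ Finset.range (n+1+1), HasDerivWithinAt
      (fun u => ((n+1).choose j : ℝ) / (((n+1).factorial : ℝ)) *
        ((u ^ α / α) ^ j * qfun α f n c j u))
      (((n+1).choose j : ℝ) / (((n+1).factorial : ℝ)) *
        ((j:ℝ) * (t ^ α / α) ^ (j-1) * t ^ (α - 1) * qfun α f n c j t +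
          (t ^ α / α) ^ j * efun α f n j t))
      (Icc a b) t := fun j _ =>
    (((hm j).hasDerivWithinAt.mul (qderiv ha hab hg hc j ht)).const_mul _)
  have hsum := HasDerivWithinAt.fun_sum hterm
  have hval : ∑ j ∈ Finset.range (n+1+1), ((n+1).choose j : ℝ) / (((n+1).factorial : ℝ)) *
        ((j:ℝ) * (t ^ α / α) ^ (j-1) * t ^ (α - 1) * qfun α f n c j t +
          (t ^ α / α) ^ j * efun α f n j t)
      = taylorRem α f n c t * t ^ (α - 1) := by
    simp only [mul_add, Finset.sum_add_distrib]
    have hQ : ∑ j ∈ Finset.range (n+1+1), ((n+1).choose j : ℝ) / (((n+1).factorial : ℝ)) *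
        ((t ^ α / α) ^ j * efun α f n j t) = 0 := by
      have hcongr : ∀ j ∈ Finset.range (n+1+1),
          ((n+1).choose j : ℝ) / (((n+1).factorial : ℝ)) * ((t ^ α / α) ^ j * efun α f n j t)
          = ((condD α)^[n+1] f t * t ^ (α - 1) / (((n+1).factorial : ℝ))) *
            ((t ^ α / α) ^ j * (-(t ^ α) / α) ^ (n+1-j) * ((n+1).choose j : ℝ)) := by
        intro j hj
        simp only [efun]
        ring
      rw [Finset.sum_congr rfl hcongr, ← Finset.mul_sum, ← add_pow]
      have h0 : t ^ α / α + -(t ^ α) / α = 0 := by ring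
      rw [h0, zero_pow (Nat.succ_ne_zero n), mul_zero]
    rw [hQ, add_zero]
    rw [Finset.sum_range_succ']
    have hz : ((n+1).choose 0 : ℝ) / (((n+1).factorial : ℝ)) *
        ((0:ℕ) * (t ^ α / α) ^ (0-1) * t ^ (α - 1) * qfun α f n c 0 t) = 0 := by
      simp
    rw [hz, add_zero, keyexpand hα0 ha hab hdiff hc ht, Finset.sum_mul]
    refine Finset.sum_congr rfl fun i hi => ?_
    have hi1 : i + 1 - 1 = i := rfl
    rw [hi1]
    have hch : ((n+1 : ℕ) : ℝ) * (n.choose i : ℝ) = (((n+1).choose (i+1) : ℕ) : ℝ) * ((i+1 : ℕ) : ℝ) := by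
      exact_mod_cast congrArg (Nat.cast : ℕ → ℝ) (Nat.add_one_mul_choose_eq n i)
    have hfn : ((n.factorial : ℝ)) ≠ 0 := Nat.cast_ne_zero.mpr n.factorial_ne_zero
    have hfn1 : (((n+1).factorial : ℝ)) ≠ 0 := Nat.cast_ne_zero.mpr (n+1).factorial_ne_zero
    rw [Nat.factorial_succ]
    push_cast at hch ⊢
    field_simp
    linear_combination (-(qfun α f n c (i+1) t)) * hch
  rw [← hval]
  exact hsum

end Bstuff

section final

variable {α a b : ℝ} {f : ℝ → ℝ} {n : ℕ} {c : ℝ}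

lemma piece (hα0 : 0 < α) (ha : 0 < a) (hab : a ≤ b)
    (hdiff : ∀ k ≤ n + 1, ∀ x ∈ Ioi (0:ℝ), DifferentiableAt ℝ ((condD α)^[k] f) x)
    (hc : c ∈ Icc a b) {t : ℝ} (ht : t ∈ Icc a b) :
    (∫ s in c..t, (condD α)^[n+1] f s / (((n+1).factorial : ℝ)) *
        ((t ^ α - s ^ α) / α) ^ (n+1) * s ^ (α - 1))
      = ∫ s in c..t, taylorRem α f n c s * s ^ (α - 1) := by
  have hf0 : ∀ x ∈ Ioi (0:ℝ), DifferentiableAt ℝ f x := by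
    have h := hdiff 0 (by omega)
    simpa using h
  have hφ : ∀ x ∈ Icc a b, (fun u => Bfun α f n c u - Afun α f n c u) x
      = (fun u => Bfun α f n c u - Afun α f n c u) a :=
    constant_of_has_deriv_right_zero
      (fun x hx => ((Bderiv hα0 ha hab hdiff hc hx).sub
        (Aderiv (α := α) (n := n) ha hab hf0 hc hx)).continuousWithinAt)
      (fun x hx => by
        have h := (Bderiv hα0 ha hab hdiff hc (Ico_subset_Icc_self hx)).sub
          (Aderiv (α := α) (n := n) ha hab hf0 hc (Ico_subset_Icc_self hx))
        rw [sub_self] at h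
        refine HasDerivWithinAt.mono_of_mem_nhdsWithin h ?_
        exact mem_nhdsWithin.2 ⟨Iio b, isOpen_Iio, hx.2, fun y hy => ⟨hx.1.trans hy.2, hy.1.le⟩⟩)
  have hc0 : Bfun α f n c c - Afun α f n c c = 0 := by
    simp [Bfun, Afun, qfun, intervalIntegral.integral_same]
  have ha0 : Bfun α f n c a - Afun α f n c a = 0 := by
    have h := hφ c hc
    simp only at h
    rw [← h]
    exact hc0
  have htt := hφ t ht
  simp only at htt
  rw [ha0] at htt
  rw [Bexpand hα0 ha hab (hdiff (n+1) le_rfl) hc ht]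
  have : Bfun α f n c t = Afun α f n c t := by linarith [htt]
  rw [this, Afun]

end final

/-- Identity for the α-fractional Taylor remainder. -/
theorem taylor_remainder_identity (α a b : ℝ) (hα : 0 < α ∧ α ≤ 1)
    (ha : 0 < a) (hab : a < b) (n : ℕ) (f : ℝ → ℝ)
    (hdiff : ∀ k ≤ n + 1, ∀ x ∈ Ioi (0:ℝ), DifferentiableAt ℝ ((condD α)^[k] f) x)
    (hcont : ContinuousOn ((condD α)^[n+1] f) (Icc a b))
    (t : ℝ) (ht : t ∈ Icc a b) :
    (∫ s in a..b, ((condD α)^[n+1] f s / ((n+1).factorial : ℝ)) *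
        ((t ^ α - s ^ α) / α) ^ (n+1) * s ^ (α - 1)) =
      (∫ s in a..t, taylorRem α f n a s * s ^ (α - 1)) +
      ∫ s in t..b, taylorRem α f n b s * s ^ (α - 1) := by
  obtain ⟨hα0, -⟩ := hα
  have hposIcc : ∀ x ∈ Icc a b, (0:ℝ) < x := fun x hx => lt_of_lt_of_le ha hx.1
  have hgc : ContinuousOn ((condD α)^[n+1] f) (Icc a b) := hcont
  have hα' : (a:ℝ) ≤ b := hab.le
  have hcontInt : ContinuousOn (fun s => (condD α)^[n+1] f s / ((n+1).factorial : ℝ) *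
      ((t ^ α - s ^ α) / α) ^ (n+1) * s ^ (α - 1)) (Icc a b) := by
    exact ((hgc.div_const _).mul
      (((continuousOn_const.sub (contOn_rpow α hposIcc)).div_const _).pow _)).mul
      (contOn_rpow (α-1) hposIcc)
  have hmem_a : a ∈ Icc a b := left_mem_Icc.2 hα'
  have hmem_b : b ∈ Icc a b := right_mem_Icc.2 hα'
  have hint1 : IntervalIntegrable (fun s => (condD α)^[n+1] f s / ((n+1).factorial : ℝ) *
      ((t ^ α - s ^ α) / α) ^ (n+1) * s ^ (α - 1)) MeasureTheory.volume a t :=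
    (hcontInt.mono (uIcc_sub hα' hmem_a ht)).intervalIntegrable
  have hint2 : IntervalIntegrable (fun s => (condD α)^[n+1] f s / ((n+1).factorial : ℝ) *
      ((t ^ α - s ^ α) / α) ^ (n+1) * s ^ (α - 1)) MeasureTheory.volume t b :=
    (hcontInt.mono (uIcc_sub hα' ht hmem_b)).intervalIntegrable
  rw [← intervalIntegral.integral_add_adjacent_intervals hint1 hint2]
  congr 1
  · exact piece hα0 ha hα' hdiff hmem_a ht
  · have hb := piece hα0 ha hα' hdiff hmem_b ht
    calc (∫ s in t..b, (condD α)^[n+1] f s / ((n+1).factorial : ℝ) *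
            ((t ^ α - s ^ α) / α) ^ (n+1) * s ^ (α - 1))
        = -∫ s in b..t, (condD α)^[n+1] f s / ((n+1).factorial : ℝ) *
            ((t ^ α - s ^ α) / α) ^ (n+1) * s ^ (α - 1) := intervalIntegral.integral_symm b t
      _ = -∫ s in b..t, taylorRem α f n b s * s ^ (α - 1) := by rw [hb]
      _ = ∫ s in t..b, taylorRem α f n b s * s ^ (α - 1) :=
          (intervalIntegral.integral_symm b t).symm
end

section
/- Let α ∈ (0,1], 0 < a < b, n ≥ −1, and f be (n+2) times α-fractional differentiable with appropriate continuity. Then ∫_a^b (D_α^{n+1} f(s)/(n+1)!)·((a^α − s^α)/α)^{n+1} s^{α−1} ds = ∫_a^b R_{n,f}(b,s) s^{α−1} ds, where R_{n,f}(t,s) := f(s) − Σ_{k=0}^{n} (D_α^k f(t)/k!)·((s^α − t^α)/α)^k. -/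
open Set MeasureTheory intervalIntegral

lemma hasDerivAt_P (α c : ℝ) (hα : α ≠ 0) {s : ℝ} (hs : 0 < s) :
    HasDerivAt (fun s : ℝ => (c ^ α - s ^ α) / α) (-(s ^ (α - 1))) s := by
  have h := Real.hasDerivAt_rpow_const (x := s) (p := α) (Or.inl hs.ne')
  have h2 := ((hasDerivAt_const s (c ^ α)).sub h).div_const α
  refine h2.congr_deriv (Eq.symm ?_)
  field_simp
  ring

lemma hasDerivAt_Q (α c : ℝ) (hα : α ≠ 0) {s : ℝ} (hs : 0 < s) :
    HasDerivAt (fun s : ℝ => (s ^ α - c ^ α) / α) (s ^ (α - 1)) s := by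
  have h := Real.hasDerivAt_rpow_const (x := s) (p := α) (Or.inl hs.ne')
  have h2 := (h.sub (hasDerivAt_const s (c ^ α))).div_const α
  refine h2.congr_deriv (Eq.symm ?_)
  field_simp
  ring

lemma hasDerivAt_iter (α : ℝ) (f : ℝ → ℝ) (m : ℕ) {s : ℝ} (hs : 0 < s)
    (hd : DifferentiableAt ℝ ((condD α)^[m] f) s) :
    HasDerivAt ((condD α)^[m] f) (s ^ (α - 1) * (condD α)^[m+1] f s) s := by
  have h := hd.hasDerivAt
  refine h.congr_deriv (Eq.symm ?_)
  rw [Function.iterate_succ_apply']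
  show s ^ (α - 1) * (s ^ (1 - α) * deriv ((condD α)^[m] f) s) = _
  rw [← mul_assoc, ← Real.rpow_add hs]
  norm_num

lemma key (α a b : ℝ) (hα : 0 < α ∧ α ≤ 1) (ha : 0 < a) (hab : a < b)
    (f : ℝ → ℝ) : ∀ m : ℕ,
    (∀ k ≤ m, ∀ x ∈ Ioi (0:ℝ), DifferentiableAt ℝ ((condD α)^[k] f) x) →
    ContinuousOn ((condD α)^[m] f) (Icc a b) →
    (∫ s in a..b, ((condD α)^[m] f s / (m.factorial : ℝ)) *
        ((a ^ α - s ^ α) / α) ^ m * s ^ (α - 1)) =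
      ∫ s in a..b, (f s - ∑ k ∈ Finset.range m,
        ((condD α)^[k] f b / (k.factorial : ℝ)) * ((s ^ α - b ^ α) / α) ^ k) *
          s ^ (α - 1) := by
  intro m
  induction m with
  | zero => intro _ _; simp
  | succ m ih =>
    intro hdiff hcont
    have hα0 : α ≠ 0 := hα.1.ne'
    have hsub : Icc a b ⊆ Ioi (0:ℝ) := fun x hx => lt_of_lt_of_le ha hx.1
    have huIcc : uIcc a b = Icc a b := uIcc_of_le hab.le
    have cpos : ∀ x ∈ Icc a b, (0:ℝ) < x := fun x hx => hsub hx
    -- continuity facts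
    have cD : ∀ k ≤ m + 1, ContinuousOn ((condD α)^[k] f) (Icc a b) := by
      intro k hk x hx
      exact ((hdiff k hk x (hsub hx)).continuousAt).continuousWithinAt
    have cpow : ContinuousOn (fun s : ℝ => s ^ (α - 1)) (Icc a b) := by
      intro x hx
      exact (Real.continuousAt_rpow_const x (α-1) (Or.inl (cpos x hx).ne')).continuousWithinAt
    have crpow : ContinuousOn (fun s : ℝ => s ^ α) (Icc a b) := by
      intro x hx
      exact (Real.continuousAt_rpow_const x α (Or.inl (cpos x hx).ne')).continuousWithinAt
    have cP : ContinuousOn (fun s : ℝ => (a ^ α - s ^ α) / α) (Icc a b) :=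
      (continuousOn_const.sub crpow).div_const α
    have cQ : ContinuousOn (fun s : ℝ => (s ^ α - b ^ α) / α) (Icc a b) :=
      (crpow.sub continuousOn_const).div_const α
    have iInt : ∀ g : ℝ → ℝ, ContinuousOn g (Icc a b) →
        IntervalIntegrable g volume a b := by
      intro g hg
      apply ContinuousOn.intervalIntegrable
      rwa [huIcc]
    -- integration by parts
    have key1 : (∫ s in a..b,
        (s ^ (α-1) * (condD α)^[m+1] f s * ((a^α - s^α)/α)^(m+1)
          + (condD α)^[m] f s * ((↑(m+1) : ℝ) * ((a^α - s^α)/α)^m * (-(s ^ (α-1))))))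
        = (condD α)^[m] f b * ((a^α - b^α)/α)^(m+1)
          - (condD α)^[m] f a * ((a^α - a^α)/α)^(m+1) := by
      apply intervalIntegral.integral_eq_sub_of_hasDerivAt
      · intro s hs
        rw [huIcc] at hs
        have hs0 := cpos s hs
        exact (hasDerivAt_iter α f m hs0 (hdiff m (by omega) s hs0)).mul
          ((hasDerivAt_P α a hα0 hs0).pow (m+1))
      · apply iInt
        apply ContinuousOn.add
        · exact (cpow.mul (cD (m+1) le_rfl)).mul (cP.pow (m+1))
        · exact (cD m (by omega)).mul
            ((continuousOn_const.mul (cP.pow m)).mul cpow.neg)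
    -- split
    have int1 : IntervalIntegrable
        (fun s => s ^ (α-1) * (condD α)^[m+1] f s * ((a^α - s^α)/α)^(m+1)) volume a b :=
      iInt _ ((cpow.mul (cD (m+1) le_rfl)).mul (cP.pow (m+1)))
    have int2 : IntervalIntegrable
        (fun s => (condD α)^[m] f s * ((↑(m+1) : ℝ) * ((a^α - s^α)/α)^m * (-(s ^ (α-1))))) volume a b :=
      iInt _ ((cD m (by omega)).mul ((continuousOn_const.mul (cP.pow m)).mul cpow.neg))
    rw [intervalIntegral.integral_add int1 int2] at key1
    -- rewrite piece 1
    have e1 : (∫ s in a..b, s ^ (α-1) * (condD α)^[m+1] f s * ((a^α - s^α)/α)^(m+1))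
        = ((m+1).factorial : ℝ) * ∫ s in a..b,
            ((condD α)^[m+1] f s / ((m+1).factorial : ℝ)) * ((a^α - s^α)/α)^(m+1) * s ^ (α-1) := by
      rw [← intervalIntegral.integral_const_mul]
      congr 1; funext s
      have hfac : ((m+1).factorial : ℝ) ≠ 0 := Nat.cast_ne_zero.2 (Nat.factorial_ne_zero _)
      field_simp
    have e2 : (∫ s in a..b, (condD α)^[m] f s * ((↑(m+1) : ℝ) * ((a^α - s^α)/α)^m * (-(s ^ (α-1)))))
        = -((↑(m+1) : ℝ) * (m.factorial : ℝ)) * ∫ s in a..b,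
            ((condD α)^[m] f s / (m.factorial : ℝ)) * ((a^α - s^α)/α)^m * s ^ (α-1) := by
      rw [← intervalIntegral.integral_const_mul]
      congr 1; funext s
      have hfac : (m.factorial : ℝ) ≠ 0 := Nat.cast_ne_zero.2 (Nat.factorial_ne_zero _)
      field_simp
    rw [e1, e2] at key1
    -- IH
    have ihm := ih (fun k hk => hdiff k (by omega)) (cD m (by omega))
    -- J computation
    have keyJ : (∫ s in a..b, (↑(m+1) : ℝ) * ((s^α - b^α)/α)^m * s ^ (α-1))
        = ((b^α - b^α)/α)^(m+1) - ((a^α - b^α)/α)^(m+1) := by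
      apply intervalIntegral.integral_eq_sub_of_hasDerivAt
        (f := fun s => ((s^α - b^α)/α)^(m+1))
      · intro s hs
        rw [huIcc] at hs
        have hs0 := cpos s hs
        exact (hasDerivAt_Q α b hα0 hs0).pow (m+1)
      · apply iInt
        exact (continuousOn_const.mul (cQ.pow m)).mul cpow
    have keyJ' : (∫ s in a..b, ((s^α - b^α)/α)^m * s ^ (α-1))
        = -(((a^α - b^α)/α)^(m+1)) / ((m:ℝ)+1) := by
      have hm1 : ((m:ℝ)+1) ≠ 0 := by positivity
      have h2 : (∫ s in a..b, ((m:ℝ)+1) * (((s^α - b^α)/α)^m * s ^ (α-1)))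
          = ((b^α - b^α)/α)^(m+1) - ((a^α - b^α)/α)^(m+1) := by
        rw [← keyJ]
        apply intervalIntegral.integral_congr
        intro s _
        push_cast
        ring
      rw [intervalIntegral.integral_const_mul] at h2
      have hb0 : ((b^α - b^α)/α) = 0 := by simp
      rw [hb0, zero_pow (Nat.succ_ne_zero m), zero_sub] at h2
      rw [eq_div_iff hm1]
      linarith [h2]
    -- RHS split
    have rhs_split : (∫ s in a..b, (f s - ∑ k ∈ Finset.range (m+1),
          ((condD α)^[k] f b / (k.factorial : ℝ)) * ((s ^ α - b ^ α) / α) ^ k) * s ^ (α - 1))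
        = (∫ s in a..b, (f s - ∑ k ∈ Finset.range m,
          ((condD α)^[k] f b / (k.factorial : ℝ)) * ((s ^ α - b ^ α) / α) ^ k) * s ^ (α - 1))
          - ((condD α)^[m] f b / (m.factorial : ℝ)) *
            ∫ s in a..b, ((s^α - b^α)/α)^m * s ^ (α-1) := by
      rw [← intervalIntegral.integral_const_mul]
      have cSum : ∀ n : ℕ, ContinuousOn (fun s : ℝ => ∑ k ∈ Finset.range n,
          ((condD α)^[k] f b / (k.factorial : ℝ)) * ((s ^ α - b ^ α) / α) ^ k) (Icc a b) := by
        intro n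
        apply continuousOn_finset_sum
        intro k _
        exact continuousOn_const.mul (cQ.pow k)
      have cf : ContinuousOn f (Icc a b) := by
        have := cD 0 (by omega)
        simpa using this
      rw [← intervalIntegral.integral_sub]
      · congr 1; funext s
        rw [Finset.sum_range_succ]
        ring
      · exact iInt _ ((cf.sub (cSum m)).mul cpow)
      · exact iInt _ (continuousOn_const.mul ((cQ.pow m).mul cpow))
    rw [rhs_split, keyJ', ← ihm]
    -- final algebra from key1
    have hfac1 : ((m+1).factorial : ℝ) ≠ 0 := Nat.cast_ne_zero.2 (Nat.factorial_ne_zero _)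
    have hfac : (m.factorial : ℝ) ≠ 0 := Nat.cast_ne_zero.2 (Nat.factorial_ne_zero _)
    have hm1 : ((m:ℝ)+1) ≠ 0 := by positivity
    have hfs : ((m+1).factorial : ℝ) = ((m:ℝ)+1) * (m.factorial : ℝ) := by
      rw [Nat.factorial_succ]; push_cast; ring
    have hzero : ((a^α - a^α)/α) = 0 := by simp
    rw [hzero] at key1
    simp only [zero_pow (Nat.succ_ne_zero m), mul_zero, sub_zero] at key1
    set L1 := ∫ s in a..b,
        ((condD α)^[m+1] f s / ((m+1).factorial : ℝ)) * ((a^α - s^α)/α)^(m+1) * s ^ (α-1) with hL1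
    set L0 := ∫ s in a..b,
        ((condD α)^[m] f s / (m.factorial : ℝ)) * ((a^α - s^α)/α)^m * s ^ (α-1) with hL0
    -- key1 : (m+1)! * L1 + (-(...)) * L0 = Dmb * Pb^(m+1)
    push_cast at key1 ⊢
    rw [hfs] at key1
    field_simp at key1 ⊢
    nlinarith [key1]

/-- Corollary of the Taylor remainder identity.  Here `m` plays the role of
`n + 1` in the paper, so the case `n = -1` (with empty Taylor sum) is covered
by `m = 0`; the remainder `R_{m-1,f}(b,s)` is written with sum over `range m`. -/
theorem taylor_remainder_corollary (α a b : ℝ) (hα : 0 < α ∧ α ≤ 1)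
    (ha : 0 < a) (hab : a < b) (m : ℕ) (f : ℝ → ℝ)
    (hdiff : ∀ k ≤ m, ∀ x ∈ Ioi (0:ℝ), DifferentiableAt ℝ ((condD α)^[k] f) x)
    (hcont : ContinuousOn ((condD α)^[m] f) (Icc a b)) :
    (∫ s in a..b, ((condD α)^[m] f s / (m.factorial : ℝ)) *
        ((a ^ α - s ^ α) / α) ^ m * s ^ (α - 1)) =
      ∫ s in a..b, (f s - ∑ k ∈ Finset.range m,
        ((condD α)^[k] f b / (k.factorial : ℝ)) * ((s ^ α - b ^ α) / α) ^ k) *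
          s ^ (α - 1) := by
  exact key α a b hα ha hab f m hdiff hcont
end

section
/- Let α ∈ (0,1], 0 < a < b, and f : [a,b] → ℝ be (n+1) times α-fractional differentiable such that D_α^{n+1} f is increasing and D_α^n f is decreasing on [a,b]. Let ℓ := (b−a)/(n+2). Then D_α^n f(a+ℓ) − D_α^n f(a) ≤ (n+1)!·(α/(b^α − a^α))^{n+1}·∫_a^b R_{n,f}(a,s) s^{α−1} ds ≤ D_α^n f(b) − D_α^n f(b−ℓ). -/
open Set MeasureTheory intervalIntegral

lemma le_of_rpow_le {α x y : ℝ} (hα : 0 < α) (hy : 0 ≤ y) (h : x ^ α ≤ y ^ α) : x ≤ y := by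
  by_contra hlt
  push_neg at hlt
  exact absurd h (not_le.mpr (Real.rpow_lt_rpow hy hlt hα))

lemma Zder {α : ℝ} (hα : 0 < α) {s : ℝ} (hs : 0 < s) (a : ℝ) :
    HasDerivAt (fun t : ℝ => (t ^ α - a ^ α) / α) (s ^ (α - 1)) s := by
  have h := ((Real.hasDerivAt_rpow_const (x := s) (p := α) (Or.inl hs.ne')).sub_const
    (a ^ α)).div_const α
  refine h.congr_deriv ?_
  field_simp

lemma rem_self (α : ℝ) (g : ℝ → ℝ) (m : ℕ) (a : ℝ) : taylorRem α g m a a = 0 := by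
  simp [taylorRem, Finset.sum_range_succ', sub_self, zero_div]

lemma hasDerivAt_iterD {α : ℝ} (hα : 0 < α) (g : ℝ → ℝ) (k : ℕ) {x : ℝ} (hx : 0 < x)
    (hd : DifferentiableAt ℝ ((condD α)^[k] g) x) :
    HasDerivAt ((condD α)^[k] g) (x ^ (α - 1) * (condD α)^[k+1] g x) x := by
  have h := hd.hasDerivAt
  have h2 : (condD α)^[k+1] g x = x ^ (1 - α) * deriv ((condD α)^[k] g) x := by
    rw [Function.iterate_succ_apply']; rfl
  have h3 : x ^ (α - 1) * (condD α)^[k+1] g x = deriv ((condD α)^[k] g) x := by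
    rw [h2, ← mul_assoc, ← Real.rpow_add hx]
    norm_num
  rw [h3]; exact h

lemma rem_succ_deriv {α : ℝ} (hα : 0 < α) (a : ℝ) (g : ℝ → ℝ) (m : ℕ) {s : ℝ} (hs : 0 < s)
    (hd : DifferentiableAt ℝ g s) :
    HasDerivAt (fun t => taylorRem α g (m+1) a t)
      (s ^ (α - 1) * taylorRem α (condD α g) m a s) s := by
  have hZ := Zder hα hs a
  have hsum : HasDerivAt (fun t => ∑ k ∈ Finset.range (m+2),
      ((condD α)^[k] g a / (k.factorial : ℝ)) * ((t ^ α - a ^ α) / α) ^ k)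
      (∑ k ∈ Finset.range (m+2),
      ((condD α)^[k] g a / (k.factorial : ℝ)) *
        ((k : ℝ) * ((s ^ α - a ^ α) / α) ^ (k - 1) * s ^ (α - 1))) s := by
    apply HasDerivAt.fun_sum
    intro k _
    exact (hZ.pow k).const_mul _
  have hg : HasDerivAt g (s ^ (α - 1) * condD α g s) s := by
    have h := hd.hasDerivAt
    have h3 : s ^ (α - 1) * condD α g s = deriv g s := by
      simp only [condD]
      rw [← mul_assoc, ← Real.rpow_add hs]
      norm_num
    rw [h3]; exact h
  have H := hg.sub hsum
  have hfun : (fun t => taylorRem α g (m+1) a t) = (fun t => g t - ∑ k ∈ Finset.range (m+2),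
      ((condD α)^[k] g a / (k.factorial : ℝ)) * ((t ^ α - a ^ α) / α) ^ k) := by
    funext t; rfl
  rw [hfun]
  refine H.congr_deriv ?_
  symm
  rw [taylorRem, mul_sub]
  congr 1
  rw [Finset.mul_sum]
  conv_rhs => rw [Finset.sum_range_succ']
  simp only [Nat.cast_zero, zero_mul, mul_zero, add_zero, Nat.cast_add, Nat.cast_one,
    Nat.add_sub_cancel]
  apply Finset.sum_congr rfl
  intro k _
  rw [← Function.iterate_succ_apply, Nat.factorial_succ]
  have h1 : ((k.factorial : ℝ)) ≠ 0 := Nat.cast_ne_zero.mpr (Nat.factorial_ne_zero k)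
  have h2 : ((k : ℝ) + 1) ≠ 0 := by positivity
  push_cast
  field_simp


-- derivative of the auxiliary antiderivative
lemma hasDerivAt_v {α : ℝ} (hα : 0 < α) (b : ℝ) (j : ℕ) {s : ℝ} (hs : 0 < s) :
    HasDerivAt (fun s : ℝ => -(((b ^ α - s ^ α) / α) ^ (j+1) / (j+1)))
      (((b ^ α - s ^ α) / α) ^ j * s ^ (α - 1)) s := by
  have h1 : HasDerivAt (fun s : ℝ => (b ^ α - s ^ α) / α) (-(s ^ (α - 1))) s := by
    have h := ((Real.hasDerivAt_rpow_const (x := s) (p := α) (Or.inl hs.ne')).const_sub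
      (b ^ α)).div_const α
    refine h.congr_deriv ?_
    symm
    field_simp
  have h2 := ((h1.pow (j+1)).div_const (j+1)).neg
  refine h2.congr_deriv ?_
  symm
  have h3 : ((j : ℝ) + 1) ≠ 0 := by positivity
  simp only [Nat.add_sub_cancel]
  push_cast
  field_simp

-- rpow continuity on Icc with positive left endpoint
lemma contOn_rpow_s9 {a b p : ℝ} (ha : 0 < a) :
    ContinuousOn (fun s : ℝ => s ^ p) (Icc a b) := by
  intro x hx
  exact (Real.continuousAt_rpow_const x p (Or.inl (ne_of_gt (lt_of_lt_of_le ha hx.1)))).continuousWithinAt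

-- integration by parts step
lemma ibp {α a b : ℝ} (hα : 0 < α) (ha : 0 < a) (hab : a ≤ b) (j : ℕ)
    (R R' : ℝ → ℝ)
    (hR : ∀ s ∈ Icc a b, HasDerivAt R (s ^ (α - 1) * R' s) s)
    (hRa : R a = 0)
    (hR'int : IntervalIntegrable (fun s => s ^ (α - 1) * R' s) volume a b) :
    ∫ s in a..b, R s * (((b ^ α - s ^ α) / α) ^ j * s ^ (α - 1)) =
      (1 / ((j : ℝ) + 1)) * ∫ s in a..b, (s ^ (α - 1) * R' s) * ((b ^ α - s ^ α) / α) ^ (j+1) := by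
  have huIcc : uIcc a b = Icc a b := uIcc_of_le hab
  have hpos : ∀ s ∈ Icc a b, 0 < s := fun s hs => lt_of_lt_of_le ha hs.1
  have hv : ∀ s ∈ uIcc a b, HasDerivAt (fun s : ℝ => -(((b ^ α - s ^ α) / α) ^ (j+1) / (j+1)))
      (((b ^ α - s ^ α) / α) ^ j * s ^ (α - 1)) s := by
    intro s hs
    exact hasDerivAt_v hα b j (hpos s (huIcc ▸ hs))
  have hu : ∀ s ∈ uIcc a b, HasDerivAt R (s ^ (α - 1) * R' s) s := fun s hs => hR s (huIcc ▸ hs)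
  have hv'int : IntervalIntegrable (fun s => ((b ^ α - s ^ α) / α) ^ j * s ^ (α - 1)) volume a b := by
    apply ContinuousOn.intervalIntegrable
    rw [huIcc]
    exact ((((continuousOn_const.sub (contOn_rpow_s9 ha)).div_const α).pow j).mul (contOn_rpow_s9 ha))
  have H := integral_mul_deriv_eq_deriv_mul hu hv hR'int hv'int
  rw [H, hRa]
  have hvb : -(((b ^ α - b ^ α) / α) ^ (j+1) / ((j:ℝ)+1)) = 0 := by
    simp [sub_self]
  rw [hvb]
  simp only [mul_zero, zero_mul, sub_zero, zero_sub]
  rw [show (∫ s in a..b, (s ^ (α-1) * R' s) * -(((b ^ α - s ^ α) / α) ^ (j+1) / ((j:ℝ)+1)))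
      = ∫ s in a..b, (-(1/((j:ℝ)+1))) * ((s ^ (α-1) * R' s) * ((b ^ α - s ^ α) / α) ^ (j+1)) from
    intervalIntegral.integral_congr (fun s _ => by ring)]
  rw [intervalIntegral.integral_const_mul]
  ring




lemma conc {α : ℝ} (hα0 : 0 < α) (hα1 : α ≤ 1) {x y θ : ℝ} (hx : 0 ≤ x) (hy : 0 ≤ y)
    (hθ0 : 0 ≤ θ) (hθ1 : θ ≤ 1) :
    (1-θ) * x ^ α + θ * y ^ α ≤ ((1-θ) * x + θ * y) ^ α := by
  rcases eq_or_lt_of_le hα1 with h1 | h1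
  · rw [h1]; simp [Real.rpow_one]
  · have h := (Real.strictConcaveOn_rpow hα0 h1).concaveOn
    have h2 := h.2 (mem_Ici.mpr hx) (mem_Ici.mpr hy) (by linarith : (0:ℝ) ≤ 1-θ) hθ0
      (by ring : (1-θ) + θ = 1)
    simpa [smul_eq_mul] using h2

lemma int_rpow' {α : ℝ} (hα : 0 < α) {c d : ℝ} (hc : 0 < c) (hcd : c ≤ d) :
    ∫ u in c..d, u ^ (α-1) = (d ^ α - c ^ α) / α := by
  have h : ∀ x ∈ uIcc c d, HasDerivAt (fun u : ℝ => u ^ α / α) (x ^ (α-1)) x := by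
    intro x hx
    rw [uIcc_of_le hcd] at hx
    have hxpos : 0 < x := lt_of_lt_of_le hc hx.1
    have h := (Real.hasDerivAt_rpow_const (x := x) (p := α) (Or.inl hxpos.ne')).div_const α
    refine h.congr_deriv ?_
    field_simp
  rw [integral_eq_sub_of_hasDerivAt h (by
    apply ContinuousOn.intervalIntegrable
    rw [uIcc_of_le hcd]
    exact contOn_rpow_s9 hc)]
  ring

lemma int_P {α b' : ℝ} (hα : 0 < α) (j : ℕ) {c d : ℝ} (hc : 0 < c) (hcd : c ≤ d) :
    ∫ u in c..d, ((b' ^ α - u ^ α) / α) ^ j * u ^ (α-1)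
      = (((b' ^ α - c ^ α) / α) ^ (j+1) - ((b' ^ α - d ^ α) / α) ^ (j+1)) / ((j:ℝ)+1) := by
  have h : ∀ x ∈ uIcc c d, HasDerivAt (fun s : ℝ => -(((b' ^ α - s ^ α) / α) ^ (j+1) / (j+1)))
      (((b' ^ α - x ^ α) / α) ^ j * x ^ (α - 1)) x := by
    intro x hx
    rw [uIcc_of_le hcd] at hx
    exact hasDerivAt_v hα b' j (lt_of_lt_of_le hc hx.1)
  rw [integral_eq_sub_of_hasDerivAt h (by
    apply ContinuousOn.intervalIntegrable
    rw [uIcc_of_le hcd]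
    exact (((continuousOn_const.sub (contOn_rpow_s9 hc)).div_const α).pow j).mul (contOn_rpow_s9 hc))]
  ring







lemma contOn_rem {α a b : ℝ} (ha : 0 < a) (g : ℝ → ℝ) (m : ℕ)
    (hg : ContinuousOn g (Icc a b)) :
    ContinuousOn (fun s => taylorRem α g m a s) (Icc a b) := by
  simp only [taylorRem]
  apply hg.sub
  apply continuousOn_finset_sum
  intro k _
  exact continuousOn_const.mul ((((contOn_rpow_s9 ha).sub continuousOn_const).div_const α).pow k)

lemma main_id {α a b : ℝ} (hα : 0 < α) (ha : 0 < a) (hab : a ≤ b) :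
    ∀ (m : ℕ) (g : ℝ → ℝ) (j : ℕ),
    (∀ k ≤ m, ∀ x ∈ Icc a b, DifferentiableAt ℝ ((condD α)^[k] g) x) →
    IntervalIntegrable ((condD α)^[m+1] g) volume a b →
    ∫ s in a..b, taylorRem α g m a s * (((b ^ α - s ^ α) / α) ^ j * s ^ (α - 1)) =
      ((j.factorial : ℝ) / ((j + m + 1).factorial : ℝ)) *
        ∫ u in a..b, ((condD α)^[m+1] g u * ((b ^ α - u ^ α) / α) ^ (j + m + 1)) * u ^ (α - 1) := by
  intro m
  induction m with
  | zero =>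
    intro g j hdiff hint
    have hfun : ∀ s, taylorRem α g 0 a s = g s - g a := by
      intro s; simp [taylorRem]
    have hR : ∀ s ∈ Icc a b, HasDerivAt (fun s => g s - g a)
        (s ^ (α - 1) * (condD α)^[1] g s) s := by
      intro s hs
      exact (hasDerivAt_iterD hα g 0 (lt_of_lt_of_le ha hs.1)
        (hdiff 0 (le_refl 0) s hs)).sub_const (g a)
    have hR'int : IntervalIntegrable (fun s => s ^ (α - 1) * (condD α)^[1] g s) volume a b :=
      hint.continuousOn_mul (by rw [uIcc_of_le hab]; exact contOn_rpow_s9 ha)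
    have H := ibp hα ha hab j _ _ hR (by simp) hR'int
    simp only [hfun]
    rw [H]
    rw [show (∫ s in a..b, (s ^ (α-1) * (condD α)^[1] g s) * ((b ^ α - s ^ α) / α) ^ (j+1)) =
        ∫ u in a..b, ((condD α)^[0+1] g u * ((b ^ α - u ^ α) / α) ^ (j + 0 + 1)) * u ^ (α - 1) from
      intervalIntegral.integral_congr (fun s _ => by ring)]
    congr 1
    rw [Nat.factorial_succ]
    have h1 : ((j.factorial : ℝ)) ≠ 0 := Nat.cast_ne_zero.mpr (Nat.factorial_ne_zero j)
    have h2 : ((j : ℝ) + 1) ≠ 0 := by positivity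
    push_cast
    field_simp
  | succ m ih =>
    intro g j hdiff hint
    have hg0 : ∀ x ∈ Icc a b, DifferentiableAt ℝ g x := fun x hx => by
      have := hdiff 0 (Nat.zero_le _) x hx
      simpa using this
    have hR : ∀ s ∈ Icc a b, HasDerivAt (fun t => taylorRem α g (m+1) a t)
        (s ^ (α - 1) * taylorRem α (condD α g) m a s) s :=
      fun s hs => rem_succ_deriv hα a g m (lt_of_lt_of_le ha hs.1) (hg0 s hs)
    have hcont1 : ContinuousOn (condD α g) (Icc a b) := by
      have h1 : ∀ x ∈ Icc a b, DifferentiableAt ℝ ((condD α)^[1] g) x :=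
        hdiff 1 (by omega)
      have h2 : ContinuousOn ((condD α)^[1] g) (Icc a b) :=
        fun x hx => ((h1 x hx).continuousAt).continuousWithinAt
      simpa using h2
    have hR'int : IntervalIntegrable
        (fun s => s ^ (α - 1) * taylorRem α (condD α g) m a s) volume a b := by
      apply ContinuousOn.intervalIntegrable
      rw [uIcc_of_le hab]
      exact (contOn_rpow_s9 ha).mul (contOn_rem ha _ m hcont1)
    have H := ibp hα ha hab j _ _ hR (rem_self α g (m+1) a) hR'int
    have hdiff' : ∀ k ≤ m, ∀ x ∈ Icc a b, DifferentiableAt ℝ ((condD α)^[k] (condD α g)) x := by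
      intro k hk x hx
      have := hdiff (k+1) (by omega) x hx
      rwa [Function.iterate_succ_apply] at this
    have hint' : IntervalIntegrable ((condD α)^[m+1] (condD α g)) volume a b := by
      rw [← Function.iterate_succ_apply]
      exact hint
    rw [H]
    rw [show (∫ s in a..b, (s ^ (α-1) * taylorRem α (condD α g) m a s) *
          ((b ^ α - s ^ α) / α) ^ (j+1)) =
        ∫ s in a..b, taylorRem α (condD α g) m a s *
          (((b ^ α - s ^ α) / α) ^ (j+1) * s ^ (α - 1)) from
      intervalIntegral.integral_congr (fun s _ => by ring)]
    rw [ih (condD α g) (j+1) hdiff' hint']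
    have e1 : (condD α)^[m+1] (condD α g) = (condD α)^[m+2] g :=
      (Function.iterate_succ_apply _ _ _).symm
    have e2 : j + 1 + m + 1 = j + (m + 1) + 1 := by omega
    rw [e1, e2, ← mul_assoc]
    congr 1
    have h1 : ((j.factorial : ℝ)) ≠ 0 := Nat.cast_ne_zero.mpr (Nat.factorial_ne_zero j)
    have h2 : ((j : ℝ) + 1) ≠ 0 := by positivity
    rw [Nat.factorial_succ]
    push_cast
    field_simp









/-- Steffensen-type bounds for the α-fractional Taylor remainder. -/
theorem remainder_steffensen_bounds (α a b : ℝ) (hα : 0 < α ∧ α ≤ 1)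
    (ha : 0 < a) (hab : a < b) (n : ℕ) (f : ℝ → ℝ)
    (hdiff : ∀ k ≤ n, ∀ x ∈ Icc a b, DifferentiableAt ℝ ((condD α)^[k] f) x)
    (hinc : MonotoneOn ((condD α)^[n+1] f) (Icc a b))
    (hdec : AntitoneOn ((condD α)^[n] f) (Icc a b))
    (hint : IntervalIntegrable (fun s => taylorRem α f n a s * s ^ (α - 1)) volume a b)
    (ℓ : ℝ) (hℓ : ℓ = (b - a) / (n + 2)) :
    (condD α)^[n] f (a + ℓ) - (condD α)^[n] f a ≤
      ((n+1).factorial : ℝ) * (α / (b ^ α - a ^ α)) ^ (n+1) *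
        (∫ s in a..b, taylorRem α f n a s * s ^ (α - 1)) ∧
    ((n+1).factorial : ℝ) * (α / (b ^ α - a ^ α)) ^ (n+1) *
        (∫ s in a..b, taylorRem α f n a s * s ^ (α - 1)) ≤
      (condD α)^[n] f b - (condD α)^[n] f (b - ℓ) := by
  obtain ⟨hα0, hα1⟩ := hα
  have hab' : a ≤ b := hab.le
  set F := (condD α)^[n] f with hF
  set G := (condD α)^[n+1] f with hG
  have hapos : ∀ x ∈ Icc a b, (0:ℝ) < x := fun x hx => lt_of_lt_of_le ha hx.1
  have hb : 0 < b := lt_trans ha hab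
  have hba : a ^ α < b ^ α := Real.rpow_lt_rpow ha.le hab hα0
  have hbapos : (0:ℝ) < b ^ α - a ^ α := by linarith
  set K : ℝ := (α / (b ^ α - a ^ α)) ^ (n+1) with hK
  have hKT : K * ((b ^ α - a ^ α) / α) ^ (n+1) = 1 := by
    rw [hK, ← mul_pow,
      show α / (b ^ α - a ^ α) * ((b ^ α - a ^ α) / α) = 1 by field_simp]
    exact one_pow _
  have hKpos : 0 < K := by
    rw [hK]; positivity
  set D : ℝ := (b ^ α - a ^ α) / ((n:ℝ) + 2) with hD
  have hn2 : (0:ℝ) < (n:ℝ) + 2 := by positivity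
  have hDpos : 0 < D := by rw [hD]; exact div_pos hbapos hn2
  have hDle : D ≤ b ^ α - a ^ α := by
    rw [hD]; exact div_le_self hbapos.le (by linarith)
  -- cut points
  have haα : (0:ℝ) < a ^ α := Real.rpow_pos_of_pos ha α
  set c₁ : ℝ := (a ^ α + D) ^ α⁻¹ with hc₁def
  set c₂ : ℝ := (b ^ α - D) ^ α⁻¹ with hc₂def
  have hbase₁ : (0:ℝ) < a ^ α + D := by linarith
  have hbase₂ : (0:ℝ) < b ^ α - D := by linarith
  have hc₁α : c₁ ^ α = a ^ α + D := Real.rpow_inv_rpow hbase₁.le hα0.ne'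
  have hc₂α : c₂ ^ α = b ^ α - D := Real.rpow_inv_rpow hbase₂.le hα0.ne'
  have hc₁pos : 0 < c₁ := Real.rpow_pos_of_pos hbase₁ _
  have hc₂pos : 0 < c₂ := Real.rpow_pos_of_pos hbase₂ _
  have hac₁ : a ≤ c₁ := le_of_rpow_le hα0 hc₁pos.le (by rw [hc₁α]; linarith)
  have hc₁b : c₁ ≤ b := le_of_rpow_le hα0 hb.le (by rw [hc₁α]; linarith)
  have hac₂ : a ≤ c₂ := le_of_rpow_le hα0 hc₂pos.le (by rw [hc₂α]; linarith)
  have hc₂b : c₂ ≤ b := le_of_rpow_le hα0 hb.le (by rw [hc₂α]; linarith)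
  have hc₁mem : c₁ ∈ Icc a b := ⟨hac₁, hc₁b⟩
  have hc₂mem : c₂ ∈ Icc a b := ⟨hac₂, hc₂b⟩
  -- ℓ facts
  have hℓpos : 0 < ℓ := by rw [hℓ]; apply div_pos (by linarith); positivity
  have hℓle : ℓ ≤ b - a := by
    rw [hℓ]; apply div_le_self (by linarith)
    have : (0:ℝ) ≤ (n:ℝ) := Nat.cast_nonneg n
    linarith
  have haℓmem : a + ℓ ∈ Icc a b := ⟨by linarith, by linarith⟩
  have hbℓmem : b - ℓ ∈ Icc a b := ⟨by linarith, by linarith⟩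
  -- concavity comparisons
  set θ : ℝ := 1 / ((n:ℝ)+2) with hθdef
  have hθ0 : 0 ≤ θ := by rw [hθdef]; positivity
  have hθ1 : θ ≤ 1 := by rw [hθdef, div_le_one hn2]; linarith
  have hc₁aℓ : c₁ ≤ a + ℓ := by
    apply le_of_rpow_le hα0 (by linarith : (0:ℝ) ≤ a + ℓ)
    rw [hc₁α]
    have he : (1-θ)*a + θ*b = a + ℓ := by rw [hℓ, hθdef]; push_cast; field_simp; ring
    have he2 : a ^ α + D = (1-θ)*a^α + θ*b^α := by rw [hD, hθdef]; push_cast; field_simp; ring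
    rw [he2, ← he]
    exact conc hα0 hα1 ha.le hb.le hθ0 hθ1
  have hc₂bℓ : c₂ ≤ b - ℓ := by
    apply le_of_rpow_le hα0 (by linarith : (0:ℝ) ≤ b - ℓ)
    rw [hc₂α]
    have he : (1-θ)*b + θ*a = b - ℓ := by rw [hℓ, hθdef]; push_cast; field_simp; ring
    have he2 : b ^ α - D = (1-θ)*b^α + θ*a^α := by rw [hD, hθdef]; push_cast; field_simp; ring
    rw [he2, ← he]
    exact conc hα0 hα1 hb.le ha.le hθ0 hθ1
  -- W function
  set W : ℝ → ℝ := fun u => K * (((b ^ α - u ^ α)/α) ^ (n+1) * u ^ (α-1)) with hWdef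
  have hzcont : ContinuousOn (fun u : ℝ => u ^ (α-1)) (Icc a b) := contOn_rpow_s9 ha
  have hPcont : ContinuousOn (fun u : ℝ => ((b ^ α - u ^ α)/α) ^ (n+1)) (Icc a b) :=
    ((continuousOn_const.sub (contOn_rpow_s9 ha)).div_const α).pow _
  have hWcont : ContinuousOn W (Icc a b) := by
    rw [hWdef]; exact continuousOn_const.mul (hPcont.mul hzcont)
  have hsub : ∀ {c d : ℝ}, c ∈ Icc a b → d ∈ Icc a b → uIcc c d ⊆ Icc a b := by
    intro c d hc hd
    rw [← uIcc_of_le hab']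
    exact uIcc_subset_uIcc (by rwa [uIcc_of_le hab']) (by rwa [uIcc_of_le hab'])
  have hGsub : ∀ {c d : ℝ}, c ∈ Icc a b → d ∈ Icc a b → IntervalIntegrable G volume c d :=
    fun hc hd => (hinc.mono (hsub hc hd)).intervalIntegrable
  have haMem : a ∈ Icc a b := ⟨le_refl a, hab'⟩
  have hbMem : b ∈ Icc a b := ⟨hab', le_refl b⟩
  have hGW : ∀ {c d : ℝ}, c ∈ Icc a b → d ∈ Icc a b →
      IntervalIntegrable (fun u => G u * W u) volume c d :=
    fun hc hd => (hGsub hc hd).mul_continuousOn (hWcont.mono (hsub hc hd))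
  have hzG : ∀ {c d : ℝ}, c ∈ Icc a b → d ∈ Icc a b →
      IntervalIntegrable (fun u => u ^ (α-1) * G u) volume c d :=
    fun hc hd => (hGsub hc hd).continuousOn_mul (hzcont.mono (hsub hc hd))
  have hWint : ∀ {c d : ℝ}, c ∈ Icc a b → d ∈ Icc a b →
      IntervalIntegrable W volume c d :=
    fun hc hd => ((hWcont.mono (hsub hc hd))).intervalIntegrable
  have hzint : ∀ {c d : ℝ}, c ∈ Icc a b → d ∈ Icc a b →
      IntervalIntegrable (fun u : ℝ => u ^ (α-1)) volume c d :=
    fun hc hd => ((hzcont.mono (hsub hc hd))).intervalIntegrable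
  -- FTC
  have hFTC : ∀ {c d : ℝ}, c ∈ Icc a b → d ∈ Icc a b → c ≤ d →
      F d - F c = ∫ u in c..d, u ^ (α-1) * G u := by
    intro c d hc hd hcd
    refine (integral_eq_sub_of_hasDerivAt (fun x hx => ?_) (hzG hc hd)).symm
    have hx' : x ∈ Icc a b := hsub hc hd hx
    exact hasDerivAt_iterD hα0 f n (hapos x hx') (hdiff n le_rfl x hx')
  -- integral values
  have hIW : ∫ u in a..b, W u = D / α := by
    rw [hWdef]
    rw [intervalIntegral.integral_const_mul, int_P hα0 (n+1) ha hab']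
    rw [show b ^ α - b ^ α = 0 by ring, zero_div,
      zero_pow (by omega : n+1+1 ≠ 0), sub_zero, pow_succ]
    rw [show K * (((b^α - a^α)/α) ^ (n+1) * ((b^α-a^α)/α) / ((↑(n+1):ℝ)+1))
        = (K * ((b^α-a^α)/α)^(n+1)) * (((b^α-a^α)/α) / ((↑(n+1):ℝ)+1)) by ring]
    rw [hKT, one_mul, hD]
    push_cast
    rw [div_div, div_div]
    ring_nf
  have hIz1 : ∫ u in a..c₁, u ^ (α-1) = D / α := by
    rw [int_rpow' hα0 ha hac₁, hc₁α]; ring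
  have hIz2 : ∫ u in c₂..b, u ^ (α-1) = D / α := by
    rw [int_rpow' hα0 hc₂pos hc₂b, hc₂α]; ring
  -- pointwise facts about W
  have hWle : ∀ u ∈ Icc a b, W u ≤ u ^ (α-1) := by
    intro u hu
    have hu0 := hapos u hu
    have hua : a ^ α ≤ u ^ α := Real.rpow_le_rpow ha.le hu.1 hα0.le
    have hub : u ^ α ≤ b ^ α := Real.rpow_le_rpow hu0.le hu.2 hα0.le
    have h1 : (b^α - u^α)/α ≤ (b^α - a^α)/α :=
      (div_le_div_iff_of_pos_right hα0).mpr (by linarith)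
    have h2 : (0:ℝ) ≤ (b^α - u^α)/α := div_nonneg (by linarith) hα0.le
    calc W u = (K * ((b^α - u^α)/α)^(n+1)) * u^(α-1) := by rw [hWdef]; ring
    _ ≤ (K * ((b^α - a^α)/α)^(n+1)) * u^(α-1) := by
        apply mul_le_mul_of_nonneg_right _ (Real.rpow_nonneg hu0.le _)
        exact mul_le_mul_of_nonneg_left (pow_le_pow_left₀ h2 h1 _) hKpos.le
    _ = u^(α-1) := by rw [hKT, one_mul]
  have hWnonneg : ∀ u ∈ Icc a b, 0 ≤ W u := by
    intro u hu
    have hu0 := hapos u hu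
    have hub : u ^ α ≤ b ^ α := Real.rpow_le_rpow hu0.le hu.2 hα0.le
    have h2 : (0:ℝ) ≤ (b^α - u^α)/α := div_nonneg (by linarith) hα0.le
    rw [hWdef]
    exact mul_nonneg hKpos.le (mul_nonneg (pow_nonneg h2 _) (Real.rpow_nonneg hu0.le _))
  -- the middle quantity
  have hGint : IntervalIntegrable G volume a b := hGsub haMem hbMem
  have hM : ((n+1).factorial : ℝ) * K * (∫ s in a..b, taylorRem α f n a s * s^(α-1))
      = ∫ u in a..b, G u * W u := by
    have h1 : (∫ s in a..b, taylorRem α f n a s * s^(α-1))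
        = ∫ s in a..b, taylorRem α f n a s * (((b^α - s^α)/α)^0 * s^(α-1)) :=
      intervalIntegral.integral_congr (fun s _ => by simp)
    rw [h1, main_id hα0 ha hab' n f 0 hdiff hGint]
    simp only [Nat.zero_add, Nat.factorial_zero, Nat.cast_one]
    have hfac : ((n+1).factorial : ℝ) ≠ 0 := Nat.cast_ne_zero.mpr (Nat.factorial_ne_zero _)
    have hcoef : ∀ x : ℝ, ((n+1).factorial : ℝ) * K * ((1:ℝ)/((n+1).factorial : ℝ) * x)
        = K * x := by intro x; field_simp
    rw [hcoef, ← intervalIntegral.integral_const_mul]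
    apply intervalIntegral.integral_congr
    intro u _
    rw [hWdef, hG]
    ring
  -- LEFT INEQUALITY
  have hFc₁ : F c₁ - F a = ∫ u in a..c₁, u ^ (α-1) * G u := hFTC haMem hc₁mem hac₁
  have hsplitL : ∫ u in a..b, G u * W u
      = (∫ u in a..c₁, G u * W u) + ∫ u in c₁..b, G u * W u :=
    (integral_add_adjacent_intervals (hGW haMem hc₁mem) (hGW hc₁mem hbMem)).symm
  have hdecompL : ∫ u in a..c₁, G u * W u
      = (∫ u in a..c₁, (G u * W u - u^(α-1) * G u)) + (F c₁ - F a) := by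
    rw [hFc₁, ← intervalIntegral.integral_add
      ((hGW haMem hc₁mem).sub (hzG haMem hc₁mem)) (hzG haMem hc₁mem)]
    apply intervalIntegral.integral_congr
    intro u _; ring
  have hmono1 : ∫ u in a..c₁, G c₁ * (W u - u^(α-1))
      ≤ ∫ u in a..c₁, (G u * W u - u^(α-1) * G u) := by
    apply intervalIntegral.integral_mono_on hac₁
    · apply ContinuousOn.intervalIntegrable
      exact (continuousOn_const.mul ((hWcont.sub hzcont).mono (hsub haMem hc₁mem)))
    · exact (hGW haMem hc₁mem).sub (hzG haMem hc₁mem)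
    · intro u hu
      have humem : u ∈ Icc a b := ⟨hu.1, le_trans hu.2 hc₁b⟩
      have hGle : G u ≤ G c₁ := hinc humem hc₁mem hu.2
      have hWz : W u - u^(α-1) ≤ 0 := by linarith [hWle u humem]
      calc G c₁ * (W u - u^(α-1)) ≤ G u * (W u - u^(α-1)) :=
        mul_le_mul_of_nonpos_right hGle hWz
      _ = G u * W u - u^(α-1) * G u := by ring
  have hmono2 : ∫ u in c₁..b, G c₁ * W u ≤ ∫ u in c₁..b, G u * W u := by
    apply intervalIntegral.integral_mono_on hc₁b
    · apply ContinuousOn.intervalIntegrable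
      exact continuousOn_const.mul (hWcont.mono (hsub hc₁mem hbMem))
    · exact hGW hc₁mem hbMem
    · intro u hu
      have humem : u ∈ Icc a b := ⟨le_trans hac₁ hu.1, hu.2⟩
      exact mul_le_mul_of_nonneg_right (hinc hc₁mem humem hu.1) (hWnonneg u humem)
  have hconstL : (∫ u in a..c₁, G c₁ * (W u - u^(α-1))) + (∫ u in c₁..b, G c₁ * W u) = 0 := by
    have e1 : ∫ u in c₁..b, G c₁ * W u = G c₁ * ∫ u in c₁..b, W u :=
      intervalIntegral.integral_const_mul _ _
    have e2 : ∫ u in a..c₁, G c₁ * (W u - u^(α-1))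
        = G c₁ * ((∫ u in a..c₁, W u) - D/α) := by
      rw [intervalIntegral.integral_const_mul,
        intervalIntegral.integral_sub (hWint haMem hc₁mem) (hzint haMem hc₁mem), hIz1]
    rw [e1, e2]
    have hadd : (∫ u in a..c₁, W u) + (∫ u in c₁..b, W u) = D / α := by
      rw [integral_add_adjacent_intervals (hWint haMem hc₁mem) (hWint hc₁mem hbMem)]
      exact hIW
    linear_combination (G c₁) * hadd
  have hleft : F (a+ℓ) - F a ≤ ∫ u in a..b, G u * W u := by
    have hF' : F (a+ℓ) ≤ F c₁ := hdec hc₁mem haℓmem hc₁aℓ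
    linarith [hsplitL, hdecompL, hmono1, hmono2, hconstL]
  -- RIGHT INEQUALITY
  have hFc₂ : F b - F c₂ = ∫ u in c₂..b, u ^ (α-1) * G u := hFTC hc₂mem hbMem hc₂b
  have hsplitR : ∫ u in a..b, G u * W u
      = (∫ u in a..c₂, G u * W u) + ∫ u in c₂..b, G u * W u :=
    (integral_add_adjacent_intervals (hGW haMem hc₂mem) (hGW hc₂mem hbMem)).symm
  have hdecompR : ∫ u in c₂..b, G u * W u
      = (∫ u in c₂..b, (G u * W u - u^(α-1) * G u)) + (F b - F c₂) := by
    rw [hFc₂, ← intervalIntegral.integral_add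
      ((hGW hc₂mem hbMem).sub (hzG hc₂mem hbMem)) (hzG hc₂mem hbMem)]
    apply intervalIntegral.integral_congr
    intro u _; ring
  have hmono3 : ∫ u in c₂..b, (G u * W u - u^(α-1) * G u)
      ≤ ∫ u in c₂..b, G c₂ * (W u - u^(α-1)) := by
    apply intervalIntegral.integral_mono_on hc₂b
    · exact (hGW hc₂mem hbMem).sub (hzG hc₂mem hbMem)
    · apply ContinuousOn.intervalIntegrable
      exact (continuousOn_const.mul ((hWcont.sub hzcont).mono (hsub hc₂mem hbMem)))
    · intro u hu
      have humem : u ∈ Icc a b := ⟨le_trans hac₂ hu.1, hu.2⟩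
      have hGle : G c₂ ≤ G u := hinc hc₂mem humem hu.1
      have hWz : W u - u^(α-1) ≤ 0 := by linarith [hWle u humem]
      calc G u * W u - u^(α-1) * G u = G u * (W u - u^(α-1)) := by ring
      _ ≤ G c₂ * (W u - u^(α-1)) := mul_le_mul_of_nonpos_right hGle hWz
  have hmono4 : ∫ u in a..c₂, G u * W u ≤ ∫ u in a..c₂, G c₂ * W u := by
    apply intervalIntegral.integral_mono_on hac₂
    · exact hGW haMem hc₂mem
    · apply ContinuousOn.intervalIntegrable
      exact continuousOn_const.mul (hWcont.mono (hsub haMem hc₂mem))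
    · intro u hu
      have humem : u ∈ Icc a b := ⟨hu.1, le_trans hu.2 hc₂b⟩
      exact mul_le_mul_of_nonneg_right (hinc humem hc₂mem hu.2) (hWnonneg u humem)
  have hconstR : (∫ u in a..c₂, G c₂ * W u) + (∫ u in c₂..b, G c₂ * (W u - u^(α-1))) = 0 := by
    have e1 : ∫ u in a..c₂, G c₂ * W u = G c₂ * ∫ u in a..c₂, W u :=
      intervalIntegral.integral_const_mul _ _
    have e2 : ∫ u in c₂..b, G c₂ * (W u - u^(α-1))
        = G c₂ * ((∫ u in c₂..b, W u) - D/α) := by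
      rw [intervalIntegral.integral_const_mul,
        intervalIntegral.integral_sub (hWint hc₂mem hbMem) (hzint hc₂mem hbMem), hIz2]
    rw [e1, e2]
    have hadd : (∫ u in a..c₂, W u) + (∫ u in c₂..b, W u) = D / α := by
      rw [integral_add_adjacent_intervals (hWint haMem hc₂mem) (hWint hc₂mem hbMem)]
      exact hIW
    linear_combination (G c₂) * hadd
  have hright : ∫ u in a..b, G u * W u ≤ F b - F (b-ℓ) := by
    have hF' : F (b-ℓ) ≤ F c₂ := hdec hc₂mem hbℓmem hc₂bℓ
    linarith [hsplitR, hdecompR, hmono3, hmono4, hconstR]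
  constructor
  · linarith [hleft, hM.ge]
  · linarith [hright, hM.le]
end

section
/- Hermite–Hadamard inequality I for conformable derivatives: Let α ∈ (0,1], 0 < a < b, and f : [a,b] → ℝ be α-fractional differentiable such that D_α f is increasing and f is decreasing on [a,b]. Then f((a+b)/2) ≤ (α/(b^α − a^α))·∫_a^b f(s) s^{α−1} ds ≤ f(b) + f(a) − f((a+b)/2). -/
open Set MeasureTheory intervalIntegral

private lemma hh_hasDerivAt_psi (α L : ℝ) (f : ℝ → ℝ) {x : ℝ} (hx : 0 < x)
    (hα : 0 < α) (hf : DifferentiableAt ℝ f x) :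
    HasDerivAt (fun t => f t - L * t ^ α / α) (x ^ (α - 1) * (condD α f x - L)) x := by
  have h1 : HasDerivAt (fun t : ℝ => t ^ α) (α * x ^ (α - 1)) x :=
    Real.hasDerivAt_rpow_const (Or.inl hx.ne')
  have h2 := hf.hasDerivAt.sub ((h1.const_mul L).div_const α)
  refine h2.congr_deriv ?_
  symm
  have hc : x ^ (α - 1) * x ^ (1 - α) = 1 := by
    rw [← Real.rpow_add hx]; norm_num
  have h3 : x ^ (α - 1) * condD α f x = deriv f x := by
    rw [condD, ← mul_assoc, hc, one_mul]
  rw [mul_sub, h3]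
  field_simp

private lemma hh_psi_mono (α L : ℝ) (f : ℝ → ℝ) {c d : ℝ} (hc : 0 < c) (hα : 0 < α)
    (hdiff : ∀ x ∈ Icc c d, DifferentiableAt ℝ f x)
    (hL : ∀ x ∈ Ioo c d, L ≤ condD α f x) :
    MonotoneOn (fun t => f t - L * t ^ α / α) (Icc c d) := by
  have hpos : ∀ x ∈ Icc c d, 0 < x := fun x hx => lt_of_lt_of_le hc hx.1
  apply monotoneOn_of_deriv_nonneg (convex_Icc c d)
  · apply ContinuousOn.sub
    · exact fun x hx => ((hdiff x hx).continuousAt).continuousWithinAt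
    · apply ContinuousOn.div_const
      apply ContinuousOn.mul continuousOn_const
      exact fun x hx =>
        (Real.continuousAt_rpow_const x α (Or.inl (hpos x hx).ne')).continuousWithinAt
  · intro x hx
    rw [interior_Icc] at hx
    exact (hh_hasDerivAt_psi α L f (hpos x (Ioo_subset_Icc_self hx)) hα
      (hdiff x (Ioo_subset_Icc_self hx))).differentiableAt.differentiableWithinAt
  · intro x hx
    rw [interior_Icc] at hx
    rw [(hh_hasDerivAt_psi α L f (hpos x (Ioo_subset_Icc_self hx)) hα
      (hdiff x (Ioo_subset_Icc_self hx))).deriv]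
    exact mul_nonneg (Real.rpow_nonneg (hpos x (Ioo_subset_Icc_self hx)).le _)
      (sub_nonneg.2 (hL x hx))

private lemma hh_psi_anti (α L : ℝ) (f : ℝ → ℝ) {c d : ℝ} (hc : 0 < c) (hα : 0 < α)
    (hdiff : ∀ x ∈ Icc c d, DifferentiableAt ℝ f x)
    (hL : ∀ x ∈ Ioo c d, condD α f x ≤ L) :
    AntitoneOn (fun t => f t - L * t ^ α / α) (Icc c d) := by
  have hpos : ∀ x ∈ Icc c d, 0 < x := fun x hx => lt_of_lt_of_le hc hx.1
  apply antitoneOn_of_deriv_nonpos (convex_Icc c d)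
  · apply ContinuousOn.sub
    · exact fun x hx => ((hdiff x hx).continuousAt).continuousWithinAt
    · apply ContinuousOn.div_const
      apply ContinuousOn.mul continuousOn_const
      exact fun x hx =>
        (Real.continuousAt_rpow_const x α (Or.inl (hpos x hx).ne')).continuousWithinAt
  · intro x hx
    rw [interior_Icc] at hx
    exact (hh_hasDerivAt_psi α L f (hpos x (Ioo_subset_Icc_self hx)) hα
      (hdiff x (Ioo_subset_Icc_self hx))).differentiableAt.differentiableWithinAt
  · intro x hx
    rw [interior_Icc] at hx
    rw [(hh_hasDerivAt_psi α L f (hpos x (Ioo_subset_Icc_self hx)) hα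
      (hdiff x (Ioo_subset_Icc_self hx))).deriv]
    exact mul_nonpos_of_nonneg_of_nonpos
      (Real.rpow_nonneg (hpos x (Ioo_subset_Icc_self hx)).le _)
      (sub_nonpos.2 (hL x hx))

set_option maxHeartbeats 1000000 in
/-- Hermite–Hadamard inequality I for conformable derivatives. -/
theorem hermite_hadamard_I (α a b : ℝ) (hα : 0 < α ∧ α ≤ 1)
    (ha : 0 < a) (hab : a < b) (f : ℝ → ℝ)
    (hdiff : ∀ x ∈ Icc a b, DifferentiableAt ℝ f x)
    (hinc : MonotoneOn (condD α f) (Icc a b))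
    (hdec : AntitoneOn f (Icc a b))
    (hint : IntervalIntegrable (fun s => f s * s ^ (α - 1)) volume a b) :
    f ((a + b) / 2) ≤ (α / (b ^ α - a ^ α)) * (∫ s in a..b, f s * s ^ (α - 1)) ∧
    (α / (b ^ α - a ^ α)) * (∫ s in a..b, f s * s ^ (α - 1)) ≤
      f b + f a - f ((a + b) / 2) := by
  obtain ⟨hα0, hα1⟩ := hα
  have hb0 : 0 < b := ha.trans hab
  set m : ℝ := (a + b) / 2 with hm_def
  have ham : a ≤ m := by rw [hm_def]; linarith
  have hmb : m ≤ b := by rw [hm_def]; linarith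
  have hm0 : 0 < m := lt_of_lt_of_le ha ham
  have hmI : m ∈ Icc a b := ⟨ham, hmb⟩
  have hBA : a ^ α < b ^ α := Real.rpow_lt_rpow ha.le hab hα0
  have hD : (0:ℝ) < b ^ α - a ^ α := by linarith
  -- concavity : (a^α + b^α)/2 ≤ m^α
  have hconc : (a ^ α + b ^ α) / 2 ≤ m ^ α := by
    have h := (Real.concaveOn_rpow hα0.le hα1).2 (mem_Ici.2 ha.le) (mem_Ici.2 hb0.le)
      (by norm_num : (0:ℝ) ≤ 1/2) (by norm_num : (0:ℝ) ≤ 1/2) (by norm_num)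
    have h2 : (1/2:ℝ) * (a ^ α) + (1/2:ℝ) * (b ^ α) ≤ ((1/2:ℝ) * a + (1/2:ℝ) * b) ^ α := by
      simpa [smul_eq_mul] using h
    have h3 : (1/2:ℝ) * a + (1/2:ℝ) * b = m := by rw [hm_def]; ring
    rw [h3] at h2
    linarith
  -- the point c with c^α = (a^α+b^α)/2
  set c : ℝ := ((a ^ α + b ^ α) / 2) ^ (α⁻¹) with hc_def
  have hmid0 : (0:ℝ) ≤ (a ^ α + b ^ α) / 2 := by positivity
  have hcpow : c ^ α = (a ^ α + b ^ α) / 2 := Real.rpow_inv_rpow hmid0 hα0.ne'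
  have hac : a ≤ c := by
    have h1 : (a ^ α) ^ (α⁻¹) ≤ ((a ^ α + b ^ α) / 2) ^ (α⁻¹) :=
      Real.rpow_le_rpow (by positivity) (by linarith) (by positivity)
    rwa [Real.rpow_rpow_inv ha.le hα0.ne'] at h1
  have hc0 : 0 < c := lt_of_lt_of_le ha hac
  have hcm : c ≤ m := by
    have h1 : (c ^ α) ^ (α⁻¹) ≤ (m ^ α) ^ (α⁻¹) :=
      Real.rpow_le_rpow (by positivity) (by rw [hcpow]; exact hconc) (by positivity)
    rwa [Real.rpow_rpow_inv hc0.le hα0.ne', Real.rpow_rpow_inv hm0.le hα0.ne'] at h1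
  have hcb : c ≤ b := hcm.trans hmb
  have hcI : c ∈ Icc a b := ⟨hac, hcb⟩
  have hposIcc : ∀ x ∈ Icc a b, (0:ℝ) < x := fun x hx => lt_of_lt_of_le ha hx.1
  -- integrals of powers
  have huIcc : (uIcc a b) = Icc a b := uIcc_of_le hab.le
  have hcont1 : ContinuousOn (fun s : ℝ => s ^ (α - 1)) (uIcc a b) := by
    rw [huIcc]
    exact fun x hx =>
      (Real.continuousAt_rpow_const x (α-1) (Or.inl (hposIcc x hx).ne')).continuousWithinAt
  have hcont2 : ContinuousOn (fun s : ℝ => s ^ α * s ^ (α - 1)) (uIcc a b) := by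
    rw [huIcc]
    intro x hx
    exact (((Real.continuousAt_rpow_const x α (Or.inl (hposIcc x hx).ne')).mul
      (Real.continuousAt_rpow_const x (α-1) (Or.inl (hposIcc x hx).ne'))).continuousWithinAt)
  have hint1 : IntervalIntegrable (fun s : ℝ => s ^ (α - 1)) volume a b :=
    hcont1.intervalIntegrable
  have hint2 : IntervalIntegrable (fun s : ℝ => s ^ α * s ^ (α - 1)) volume a b :=
    hcont2.intervalIntegrable
  have hI1 : (∫ s in a..b, s ^ (α - 1)) = (b ^ α - a ^ α) / α := by
    rw [integral_rpow (Or.inl (by linarith : (-1:ℝ) < α - 1)),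
      show α - 1 + 1 = α by ring]
  have hI2 : (∫ s in a..b, s ^ α * s ^ (α - 1))
      = (b ^ α - a ^ α) * (b ^ α + a ^ α) / (2 * α) := by
    have hcg : EqOn (fun s : ℝ => s ^ α * s ^ (α - 1)) (fun s : ℝ => s ^ (2 * α - 1)) (uIcc a b) := by
      intro s hs
      rw [huIcc] at hs
      have hs0 : 0 < s := hposIcc s hs
      simp only
      rw [← Real.rpow_add hs0]
      ring_nf
    rw [integral_congr hcg, integral_rpow (Or.inl (by linarith : (-1:ℝ) < 2 * α - 1)),
      show 2 * α - 1 + 1 = 2 * α by ring]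
    have hb2 : b ^ (2 * α) = (b ^ α) ^ 2 := by
      rw [show 2 * α = α * 2 by ring, Real.rpow_mul hb0.le, Real.rpow_two]
    have ha2 : a ^ (2 * α) = (a ^ α) ^ 2 := by
      rw [show 2 * α = α * 2 by ring, Real.rpow_mul ha.le, Real.rpow_two]
    rw [hb2, ha2]
    ring
  -- LOWER BOUND -------------------------------------------------
  set K : ℝ := condD α f c with hK_def
  have htan : ∀ s ∈ Icc a b, f c - K * c ^ α / α ≤ f s - K * s ^ α / α := by
    intro s hs
    rcases le_total s c with h | h
    · have hanti : AntitoneOn (fun t => f t - K * t ^ α / α) (Icc a c) := by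
        apply hh_psi_anti α K f ha hα0
        · exact fun x hx => hdiff x ⟨hx.1, hx.2.trans hcb⟩
        · intro x hx
          exact hinc ⟨hx.1.le, hx.2.le.trans hcb⟩ hcI hx.2.le
      exact hanti ⟨hs.1, h⟩ ⟨hac, le_refl c⟩ h
    · have hmono : MonotoneOn (fun t => f t - K * t ^ α / α) (Icc c b) := by
        apply hh_psi_mono α K f hc0 hα0
        · exact fun x hx => hdiff x ⟨hac.trans hx.1, hx.2⟩
        · intro x hx
          exact hinc hcI ⟨hac.trans hx.1.le, hx.2.le⟩ hx.1.le
      exact hmono ⟨le_refl c, hcb⟩ ⟨h, hs.2⟩ h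
  have hptL : ∀ s ∈ Icc a b,
      (f c - K * c ^ α / α) * s ^ (α - 1) + (K / α) * (s ^ α * s ^ (α - 1))
        ≤ f s * s ^ (α - 1) := by
    intro s hs
    have hs0 : (0:ℝ) ≤ s ^ (α - 1) := Real.rpow_nonneg (hposIcc s hs).le _
    have h1 : f c - K * c ^ α / α + K / α * s ^ α ≤ f s := by
      have h := htan s hs
      have e : K / α * s ^ α = K * s ^ α / α := by ring
      linarith [h, e]
    have h2 := mul_le_mul_of_nonneg_right h1 hs0
    have e2 : (f c - K * c ^ α / α + K / α * s ^ α) * s ^ (α - 1)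
        = (f c - K * c ^ α / α) * s ^ (α - 1) + (K / α) * (s ^ α * s ^ (α - 1)) := by ring
    linarith [h2, e2]
  have hlowint : (f c - K * c ^ α / α) * ((b ^ α - a ^ α) / α)
      + (K / α) * ((b ^ α - a ^ α) * (b ^ α + a ^ α) / (2 * α))
      ≤ ∫ s in a..b, f s * s ^ (α - 1) := by
    have h := integral_mono_on hab.le
      ((hint1.const_mul (f c - K * c ^ α / α)).add (hint2.const_mul (K / α))) hint hptL
    rwa [integral_add (hint1.const_mul _) (hint2.const_mul _), intervalIntegral.integral_const_mul,
      intervalIntegral.integral_const_mul, hI1, hI2] at h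
  have hfc_le : f c ≤ (α / (b ^ α - a ^ α)) * ∫ s in a..b, f s * s ^ (α - 1) := by
    have hcoef : (0:ℝ) ≤ α / (b ^ α - a ^ α) := le_of_lt (div_pos hα0 hD)
    have h := mul_le_mul_of_nonneg_left hlowint hcoef
    have heq : α / (b ^ α - a ^ α) * ((f c - K * c ^ α / α) * ((b ^ α - a ^ α) / α)
        + (K / α) * ((b ^ α - a ^ α) * (b ^ α + a ^ α) / (2 * α))) = f c := by
      rw [hcpow]
      field_simp
      ring
    rwa [heq] at h
  have hfm_le : f m ≤ (α / (b ^ α - a ^ α)) * ∫ s in a..b, f s * s ^ (α - 1) :=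
    le_trans (hdec hcI hmI hcm) hfc_le
  -- UPPER BOUND -------------------------------------------------
  set L : ℝ := α * (f b - f a) / (b ^ α - a ^ α) with hL_def
  have hψab : f b - L * b ^ α / α = f a - L * a ^ α / α := by
    rw [hL_def]
    field_simp
    ring
  have hchord : ∀ s ∈ Icc a b, f s - L * s ^ α / α ≤ f a - L * a ^ α / α := by
    intro s hs
    rcases le_total (condD α f s) L with h | h
    · have hanti : AntitoneOn (fun t => f t - L * t ^ α / α) (Icc a s) := by
        apply hh_psi_anti α L f ha hα0
        · exact fun x hx => hdiff x ⟨hx.1, hx.2.trans hs.2⟩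
        · intro x hx
          exact le_trans (hinc ⟨hx.1.le, hx.2.le.trans hs.2⟩ hs hx.2.le) h
      exact hanti ⟨le_refl a, hs.1⟩ ⟨hs.1, le_refl s⟩ hs.1
    · have hmono : MonotoneOn (fun t => f t - L * t ^ α / α) (Icc s b) := by
        apply hh_psi_mono α L f (hposIcc s hs) hα0
        · exact fun x hx => hdiff x ⟨hs.1.trans hx.1, hx.2⟩
        · intro x hx
          exact le_trans h (hinc hs ⟨hs.1.trans hx.1.le, hx.2.le⟩ hx.1.le)
      have h2 : f s - L * s ^ α / α ≤ f b - L * b ^ α / α :=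
        hmono ⟨le_refl s, hs.2⟩ ⟨hs.2, le_refl b⟩ hs.2
      rw [hψab] at h2
      exact h2
  have hptU : ∀ s ∈ Icc a b,
      f s * s ^ (α - 1)
        ≤ (f a - L * a ^ α / α) * s ^ (α - 1) + (L / α) * (s ^ α * s ^ (α - 1)) := by
    intro s hs
    have hs0 : (0:ℝ) ≤ s ^ (α - 1) := Real.rpow_nonneg (hposIcc s hs).le _
    have h1 : f s ≤ f a - L * a ^ α / α + L / α * s ^ α := by
      have h := hchord s hs
      have e : L / α * s ^ α = L * s ^ α / α := by ring
      linarith [h, e]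
    have h2 := mul_le_mul_of_nonneg_right h1 hs0
    have e2 : (f a - L * a ^ α / α + L / α * s ^ α) * s ^ (α - 1)
        = (f a - L * a ^ α / α) * s ^ (α - 1) + (L / α) * (s ^ α * s ^ (α - 1)) := by ring
    linarith [h2, e2]
  have hupint : (∫ s in a..b, f s * s ^ (α - 1))
      ≤ (f a - L * a ^ α / α) * ((b ^ α - a ^ α) / α)
        + (L / α) * ((b ^ α - a ^ α) * (b ^ α + a ^ α) / (2 * α)) := by
    have h := integral_mono_on hab.le hint
      ((hint1.const_mul (f a - L * a ^ α / α)).add (hint2.const_mul (L / α))) hptU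
    rwa [integral_add (hint1.const_mul _) (hint2.const_mul _), intervalIntegral.integral_const_mul,
      intervalIntegral.integral_const_mul, hI1, hI2] at h
  have havg_le : (α / (b ^ α - a ^ α)) * (∫ s in a..b, f s * s ^ (α - 1))
      ≤ (f a + f b) / 2 := by
    have hcoef : (0:ℝ) ≤ α / (b ^ α - a ^ α) := le_of_lt (div_pos hα0 hD)
    have h := mul_le_mul_of_nonneg_left hupint hcoef
    have heq : α / (b ^ α - a ^ α) * ((f a - L * a ^ α / α) * ((b ^ α - a ^ α) / α)
        + (L / α) * ((b ^ α - a ^ α) * (b ^ α + a ^ α) / (2 * α))) = (f a + f b) / 2 := by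
      rw [hL_def]
      field_simp
      ring
    rwa [heq] at h
  constructor
  · exact hfm_le
  · have : f m ≤ (f a + f b) / 2 := le_trans hfm_le havg_le
    linarith
end

section
/- Let α ∈ (0,1], 0 < a < b, and f : [a,b] → ℝ be α-fractional differentiable with m ≤ D_α f(t) ≤ M on [a,b] for reals m < M. Set ℓ := (α(b−a)/((b^α − a^α)(M−m)))·(f(b) − f(a) − m(b^α − a^α)/α). Then (m/2)((b^α − a^α)/α)^2 + ((M−m)/2)((b^α − (b−ℓ)^α)/α)^2 ≤ ∫_a^b f(t) t^{α−1} dt − f(a)(b^α − a^α)/α ≤ (M/2)((b^α − a^α)/α)^2 + ((m−M)/2)((b^α − (a+ℓ)^α)/α)^2. -/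
open Set MeasureTheory intervalIntegral

lemma my_hasDerivAt_q (x : ℝ) : HasDerivAt (fun y : ℝ => max 0 y ^ 2 / 2) (max 0 x) x := by
  rcases lt_trichotomy x 0 with hx | hx | hx
  · have h0 : HasDerivAt (fun _ : ℝ => (0:ℝ)) 0 x := hasDerivAt_const x 0
    have he : (fun y : ℝ => max 0 y ^ 2 / 2) =ᶠ[nhds x] fun _ => (0:ℝ) := by
      filter_upwards [Iio_mem_nhds hx] with y hy
      simp [max_eq_left (le_of_lt (mem_Iio.mp hy))]
    rw [max_eq_left hx.le]
    exact h0.congr_of_eventuallyEq he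
  · subst hx
    rw [hasDerivAt_iff_tendsto_slope]
    have hb : ∀ y : ℝ, ‖slope (fun y : ℝ => max 0 y ^ 2 / 2) 0 y‖ ≤ |y| := by
      intro y
      rcases le_or_gt y 0 with hy | hy
      · simp [slope_def_field, max_eq_left hy]
      · rw [slope_def_field, max_eq_right hy.le]
        have : (y ^ 2 / 2 - max 0 0 ^ 2 / 2) / (y - 0) = y / 2 := by
          rw [max_self]
          field_simp [hy.ne']
          ring
        rw [this]
        rw [Real.norm_eq_abs, abs_of_pos (by positivity), abs_of_pos hy]
        linarith
    have hg : Filter.Tendsto (fun y : ℝ => |y|) (nhdsWithin 0 {(0:ℝ)}ᶜ) (nhds 0) := by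
      have h := (continuous_abs.tendsto (0:ℝ)).mono_left
        (nhdsWithin_le_nhds (s := {(0:ℝ)}ᶜ))
      simpa using h
    simpa using squeeze_zero_norm hb hg
  · have h0 : HasDerivAt (fun y : ℝ => y ^ 2 / 2) x x := by
      simpa using (hasDerivAt_pow 2 x).div_const 2
    have he : (fun y : ℝ => max 0 y ^ 2 / 2) =ᶠ[nhds x] fun y => y ^ 2 / 2 := by
      filter_upwards [Ioi_mem_nhds hx] with y hy
      simp [max_eq_right (le_of_lt (mem_Ioi.mp hy))]
    rw [max_eq_right hx.le]
    exact h0.congr_of_eventuallyEq he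

lemma my_intInt_of_bdd {ψ : ℝ → ℝ} {a b C : ℝ} (hab : a ≤ b) (hm : Measurable ψ)
    (hb : ∀ t ∈ Icc a b, |ψ t| ≤ C) : IntervalIntegrable ψ volume a b := by
  rw [intervalIntegrable_iff_integrableOn_Icc_of_le hab]
  refine Measure.integrableOn_of_bounded (M := C) measure_Icc_lt_top.ne
    hm.aestronglyMeasurable ?_
  exact (ae_restrict_iff' measurableSet_Icc).mpr (ae_of_all _ fun t ht => by
      simpa [Real.norm_eq_abs] using hb t ht)

set_option maxHeartbeats 1000000 in
/-- Bounds on the α-fractional integral when `m ≤ D_α f ≤ M`. -/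
theorem steffensen_bounds_first_order (α a b m M : ℝ) (hα : 0 < α ∧ α ≤ 1)
    (ha : 0 < a) (hab : a < b) (hmM : m < M) (f : ℝ → ℝ)
    (hdiff : ∀ x ∈ Icc a b, DifferentiableAt ℝ f x)
    (hbd : ∀ t ∈ Icc a b, m ≤ condD α f t ∧ condD α f t ≤ M)
    (hint : IntervalIntegrable (fun t => f t * t ^ (α - 1)) volume a b)
    (ℓ : ℝ) (hℓ : ℓ = (α * (b - a) / ((b ^ α - a ^ α) * (M - m))) *
      (f b - f a - m * (b ^ α - a ^ α) / α)) :
    (m / 2) * ((b ^ α - a ^ α) / α) ^ 2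
      + ((M - m) / 2) * ((b ^ α - (b - ℓ) ^ α) / α) ^ 2 ≤
        (∫ t in a..b, f t * t ^ (α - 1)) - f a * (b ^ α - a ^ α) / α ∧
    (∫ t in a..b, f t * t ^ (α - 1)) - f a * (b ^ α - a ^ α) / α ≤
      (M / 2) * ((b ^ α - a ^ α) / α) ^ 2
        + ((m - M) / 2) * ((b ^ α - (a + ℓ) ^ α) / α) ^ 2 := by
  obtain ⟨hα0, hα1⟩ := hα
  have hb0 : 0 < b := ha.trans hab
  have hba : 0 < b - a := sub_pos.2 hab
  have hMm : 0 < M - m := sub_pos.2 hmM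
  have hpos : ∀ t ∈ Icc a b, 0 < t := fun t ht => lt_of_lt_of_le ha ht.1
  have hbapos : (0:ℝ) < b ^ α - a ^ α :=
    sub_pos.2 (Real.rpow_lt_rpow ha.le hab hα0)
  have huIcc : uIcc a b = Icc a b := uIcc_of_le hab.le
  have hmema : a ∈ Icc a b := left_mem_Icc.2 hab.le
  have hmemb : b ∈ Icc a b := right_mem_Icc.2 hab.le
  set u : ℝ → ℝ := fun t => t ^ α / α with hu_def
  set A : ℝ := a ^ α / α with hA_def
  set B : ℝ := b ^ α / α with hB_def
  have huA : u a = A := by simp [hu_def, hA_def]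
  have huB : u b = B := by simp [hu_def, hB_def]
  have hKdef : (b ^ α - a ^ α) / α = B - A := by rw [hA_def, hB_def]; ring
  have hKpos : 0 < B - A := by rw [← hKdef]; positivity
  have hKa : α * (B - A) = b ^ α - a ^ α := by
    rw [← hKdef]; field_simp
  -- derivative of u
  have hu' : ∀ t ∈ Icc a b, HasDerivAt u (t ^ (α - 1)) t := by
    intro t ht
    have h := Real.hasDerivAt_rpow_const (x := t) (p := α) (Or.inl (hpos t ht).ne')
    have h2 := h.div_const α
    have he : α * t ^ (α - 1) / α = t ^ (α - 1) := by
      field_simp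
    rwa [he] at h2
  -- bounds on deriv f
  have hφbd : ∀ t ∈ Icc a b, m * t ^ (α - 1) ≤ deriv f t ∧ deriv f t ≤ M * t ^ (α - 1) := by
    intro t ht
    have ht0 := hpos t ht
    have htp : (0:ℝ) < t ^ (α - 1) := Real.rpow_pos_of_pos ht0 _
    have h1 : t ^ (α - 1) * t ^ (1 - α) = 1 := by
      rw [← Real.rpow_add ht0]; norm_num
    obtain ⟨h2, h3⟩ := hbd t ht
    simp only [condD] at h2 h3
    constructor
    · have h4 := mul_le_mul_of_nonneg_left h2 htp.le
      rw [← mul_assoc, h1, one_mul] at h4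
      nlinarith [h4]
    · have h4 := mul_le_mul_of_nonneg_left h3 htp.le
      rw [← mul_assoc, h1, one_mul] at h4
      nlinarith [h4]
  -- G and g
  set G : ℝ → ℝ := fun t => (f t - f a - m * (t ^ α - a ^ α) / α) / (M - m) with hG_def
  set g : ℝ → ℝ := fun t => (deriv f t - m * t ^ (α - 1)) / (M - m) with hg_def
  have hG' : ∀ t ∈ Icc a b, HasDerivAt G (g t) t := by
    intro t ht
    have h1 : HasDerivAt (fun s : ℝ => m * (s ^ α - a ^ α) / α) (m * t ^ (α - 1)) t := by
      have h := ((Real.hasDerivAt_rpow_const (x := t) (p := α)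
        (Or.inl (hpos t ht).ne')).sub_const (a ^ α)).const_mul m
      have h2 := h.div_const α
      have he : m * (α * t ^ (α - 1)) / α = m * t ^ (α - 1) := by
        field_simp
      rwa [he] at h2
    exact (((hdiff t ht).hasDerivAt.sub_const (f a)).sub h1).div_const (M - m)
  have hGcont : ContinuousOn G (Icc a b) := fun t ht =>
    (hG' t ht).continuousAt.continuousWithinAt
  have hg0 : ∀ t ∈ Icc a b, 0 ≤ g t := fun t ht =>
    div_nonneg (by linarith [(hφbd t ht).1]) hMm.le
  have hg1 : ∀ t ∈ Icc a b, g t ≤ t ^ (α - 1) := by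
    intro t ht
    rw [hg_def]
    rw [div_le_iff₀ hMm]
    nlinarith [(hφbd t ht).2]
  have hGmono : MonotoneOn G (Icc a b) := by
    apply monotoneOn_of_deriv_nonneg (convex_Icc a b) hGcont
    · intro t ht
      rw [interior_Icc] at ht
      exact ((hG' t (Ioo_subset_Icc_self ht)).differentiableAt).differentiableWithinAt
    · intro t ht
      rw [interior_Icc] at ht
      rw [(hG' t (Ioo_subset_Icc_self ht)).deriv]
      exact hg0 t (Ioo_subset_Icc_self ht)
  have hUGcont : ContinuousOn (fun s => u s - G s) (Icc a b) := fun t ht =>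
    (((hu' t ht).sub (hG' t ht)).continuousAt).continuousWithinAt
  have hUGmono : MonotoneOn (fun s => u s - G s) (Icc a b) := by
    apply monotoneOn_of_deriv_nonneg (convex_Icc a b) hUGcont
    · intro t ht
      rw [interior_Icc] at ht
      exact (((hu' t (Ioo_subset_Icc_self ht)).sub
        (hG' t (Ioo_subset_Icc_self ht))).differentiableAt).differentiableWithinAt
    · intro t ht
      rw [interior_Icc] at ht
      rw [show (fun s => u s - G s) = u - G from rfl,
        ((hu' t (Ioo_subset_Icc_self ht)).sub (hG' t (Ioo_subset_Icc_self ht))).deriv]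
      have := hg1 t (Ioo_subset_Icc_self ht)
      linarith
  have hGa : G a = 0 := by rw [hG_def]; simp
  set lam : ℝ := G b with hlam_def
  have hlam0 : 0 ≤ lam := hGa ▸ hGmono hmema hmemb hab.le
  have hlamK : lam ≤ B - A := by
    have h : u a - G a ≤ u b - G b := hUGmono hmema hmemb hab.le
    rw [hGa, huA, huB, sub_zero] at h
    linarith
  -- pointwise bounds on G
  have hGlow : ∀ t ∈ Icc a b, max 0 (lam - B + u t) ≤ G t := by
    intro t ht
    refine max_le ?_ ?_
    · exact hGa ▸ hGmono hmema ht ht.1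
    · have h : u t - G t ≤ u b - G b := hUGmono ht hmemb ht.2
      rw [huB] at h
      linarith
  have hGup : ∀ t ∈ Icc a b, G t ≤ lam - max 0 (lam - (u t - A)) := by
    intro t ht
    rcases le_or_gt (lam - (u t - A)) 0 with h | h
    · rw [max_eq_left h]
      have := hGmono ht hmemb ht.2
      linarith
    · rw [max_eq_right h.le]
      have h2 : u a - G a ≤ u t - G t := hUGmono hmema ht ht.1
      rw [huA, hGa, sub_zero] at h2
      linarith
  -- boundedness facts
  have hpow_le : ∀ t ∈ Icc a b, t ^ (α - 1) ≤ a ^ (α - 1) := fun t ht =>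
    Real.rpow_le_rpow_of_nonpos ha ht.1 (by linarith)
  have hpow_pos : ∀ t ∈ Icc a b, (0:ℝ) < t ^ (α - 1) := fun t ht =>
    Real.rpow_pos_of_pos (hpos t ht) _
  have hap : (0:ℝ) < a ^ (α - 1) := Real.rpow_pos_of_pos ha _
  have hmeas_pow : Measurable fun t : ℝ => t ^ (α - 1) :=
    measurable_id'.pow_const _
  have hmeas_u : Measurable u := by
    rw [hu_def]; exact (measurable_id'.pow_const _).div_const _
  have hmeasφ : Measurable (deriv f) := measurable_deriv f
  have hmeas_g : Measurable g := by
    rw [hg_def]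
    exact (hmeasφ.sub (hmeas_pow.const_mul m)).div_const (M - m)
  have hCφ : ∀ t ∈ Icc a b, |deriv f t| ≤ (|m| + |M|) * a ^ (α - 1) := by
    intro t ht
    obtain ⟨h1, h2⟩ := hφbd t ht
    have h3 := hpow_le t ht
    have h4 := hpow_pos t ht
    rw [abs_le]
    constructor
    · nlinarith [neg_abs_le m, le_abs_self m, abs_nonneg M, abs_nonneg m]
    · nlinarith [le_abs_self M, neg_abs_le M, abs_nonneg m, abs_nonneg M]
  have huAB : ∀ t ∈ Icc a b, A ≤ u t ∧ u t ≤ B := by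
    intro t ht
    obtain ⟨ht1, ht2⟩ := ht
    constructor
    · have h : a ^ α ≤ t ^ α := Real.rpow_le_rpow ha.le ht1 hα0.le
      rw [hu_def, hA_def]
      exact (div_le_div_iff_of_pos_right hα0).2 h
    · have h : t ^ α ≤ b ^ α := Real.rpow_le_rpow (by linarith) ht2 hα0.le
      rw [hu_def, hB_def]
      exact (div_le_div_iff_of_pos_right hα0).2 h
  -- integrability
  have hint_pow : IntervalIntegrable (fun t => t ^ (α - 1)) volume a b :=
    my_intInt_of_bdd hab.le hmeas_pow (fun t ht => by
      rw [abs_of_pos (hpow_pos t ht)]; exact hpow_le t ht)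
  have hBu_bd : ∀ t ∈ Icc a b, |u t - B| ≤ B - A := by
    intro t ht
    obtain ⟨h1, h2⟩ := huAB t ht
    rw [abs_le]
    constructor <;> linarith
  have hint1 : IntervalIntegrable (fun t => deriv f t * (u t - B)) volume a b := by
    apply my_intInt_of_bdd hab.le (hmeasφ.mul (hmeas_u.sub measurable_const))
    intro t ht
    show |deriv f t * (u t - B)| ≤ _
    rw [abs_mul]
    exact mul_le_mul (hCφ t ht) (hBu_bd t ht) (abs_nonneg _)
      (mul_nonneg (by positivity) hap.le)
  have hg_bd : ∀ t ∈ Icc a b, |g t| ≤ a ^ (α - 1) := by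
    intro t ht
    rw [abs_of_nonneg (hg0 t ht)]
    exact (hg1 t ht).trans (hpow_le t ht)
  have hint2 : IntervalIntegrable (fun t => g t * (u t - B)) volume a b := by
    apply my_intInt_of_bdd hab.le (hmeas_g.mul (hmeas_u.sub measurable_const))
    intro t ht
    show |g t * (u t - B)| ≤ _
    rw [abs_mul]
    exact mul_le_mul (hg_bd t ht) (hBu_bd t ht) (abs_nonneg _) hap.le
  have hu_cont : ContinuousOn u (Icc a b) := fun t ht =>
    (hu' t ht).continuousAt.continuousWithinAt
  have hcont_pow : ContinuousOn (fun t : ℝ => t ^ (α - 1)) (Icc a b) := fun t ht =>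
    (Real.continuousAt_rpow_const t (α - 1) (Or.inl (hpos t ht).ne')).continuousWithinAt
  have hint3 : IntervalIntegrable (fun t => G t * t ^ (α - 1)) volume a b := by
    apply ContinuousOn.intervalIntegrable
    rw [huIcc]
    exact hGcont.mul hcont_pow
  have hint4 : IntervalIntegrable (fun t => t ^ (α - 1) * (B - u t)) volume a b := by
    apply ContinuousOn.intervalIntegrable
    rw [huIcc]
    exact hcont_pow.mul (continuousOn_const.sub hu_cont)
  have hmaxc : ∀ h : ℝ → ℝ, ContinuousOn h (Icc a b) →
      ContinuousOn (fun t => max 0 (h t)) (Icc a b) := fun h hc =>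
    ContinuousOn.sup continuousOn_const hc
  have hint5 : IntervalIntegrable (fun t => max 0 (lam - B + u t) * t ^ (α - 1))
      volume a b := by
    apply ContinuousOn.intervalIntegrable
    rw [huIcc]
    exact (hmaxc _ (continuousOn_const.add hu_cont)).mul hcont_pow
  have hint6 : IntervalIntegrable
      (fun t => (lam - max 0 (lam - (u t - A))) * t ^ (α - 1)) volume a b := by
    apply ContinuousOn.intervalIntegrable
    rw [huIcc]
    exact (continuousOn_const.sub (hmaxc _
      (continuousOn_const.sub (hu_cont.sub continuousOn_const)))).mul hcont_pow
  -- FTC computations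
  have key1 : (∫ t in a..b, (deriv f t * (u t - B) + f t * t ^ (α - 1)))
      = f a * (B - A) := by
    have hFder : ∀ t ∈ uIcc a b, HasDerivAt (fun s => f s * (u s - B))
        (deriv f t * (u t - B) + f t * t ^ (α - 1)) t := by
      rw [huIcc]; intro t ht
      exact (hdiff t ht).hasDerivAt.mul ((hu' t ht).sub_const B)
    rw [integral_eq_sub_of_hasDerivAt hFder (hint1.add hint)]
    rw [huA, huB]; ring
  have key2 : (∫ t in a..b, f t * t ^ (α - 1)) - f a * (B - A)
      = ∫ t in a..b, deriv f t * (B - u t) := by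
    have h := (integral_add hint1 hint).symm.trans key1
    have h2 : (∫ t in a..b, deriv f t * (B - u t))
        = - ∫ t in a..b, deriv f t * (u t - B) := by
      rw [← intervalIntegral.integral_neg]; congr 1; funext t; ring
    rw [h2]; linarith
  have key3 : (∫ t in a..b, deriv f t * (B - u t))
      = m * (∫ t in a..b, t ^ (α - 1) * (B - u t))
        + (M - m) * ∫ t in a..b, g t * (B - u t) := by
    have hint2b : IntervalIntegrable (fun t => g t * (B - u t)) volume a b := by
      have h2 : (fun t => g t * (B - u t)) = fun t => -(g t * (u t - B)) := by
        funext t; ring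
      rw [h2]; exact hint2.neg
    have hsplit : (fun t => deriv f t * (B - u t))
        = fun t => m * (t ^ (α - 1) * (B - u t)) + (M - m) * (g t * (B - u t)) := by
      funext t
      rw [hg_def]
      field_simp
      ring
    rw [hsplit, integral_add (hint4.const_mul m) (hint2b.const_mul (M - m)),
      intervalIntegral.integral_const_mul, intervalIntegral.integral_const_mul]
  have key4 : (∫ t in a..b, t ^ (α - 1) * (B - u t)) = (B - A) ^ 2 / 2 := by
    have hder : ∀ t ∈ uIcc a b, HasDerivAt (fun s => B * u s - u s * u s / 2)
        (t ^ (α - 1) * (B - u t)) t := by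
      rw [huIcc]; intro t ht
      have h := ((hu' t ht).const_mul B).sub (((hu' t ht).mul (hu' t ht)).div_const 2)
      have he : B * t ^ (α - 1) - (t ^ (α - 1) * u t + u t * t ^ (α - 1)) / 2
          = t ^ (α - 1) * (B - u t) := by ring
      rwa [he] at h
    rw [integral_eq_sub_of_hasDerivAt hder hint4, huA, huB]
    ring
  have key5 : (∫ t in a..b, g t * (B - u t)) = ∫ t in a..b, G t * t ^ (α - 1) := by
    have hder : ∀ t ∈ uIcc a b, HasDerivAt (fun s => G s * (u s - B))
        (g t * (u t - B) + G t * t ^ (α - 1)) t := by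
      rw [huIcc]; intro t ht
      exact (hG' t ht).mul ((hu' t ht).sub_const B)
    have h := integral_eq_sub_of_hasDerivAt hder (hint2.add hint3)
    have h0 : G b * (u b - B) - G a * (u a - B) = 0 := by rw [huB, hGa]; ring
    rw [h0] at h
    have h2 := (integral_add hint2 hint3).symm.trans h
    have h3 : (∫ t in a..b, g t * (B - u t))
        = - ∫ t in a..b, g t * (u t - B) := by
      rw [← intervalIntegral.integral_neg]; congr 1; funext t; ring
    rw [h3]; linarith
  have key6 : (∫ t in a..b, max 0 (lam - B + u t) * t ^ (α - 1)) = lam ^ 2 / 2 := by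
    have hder : ∀ t ∈ uIcc a b, HasDerivAt (fun s => max 0 (lam - B + u s) ^ 2 / 2)
        (max 0 (lam - B + u t) * t ^ (α - 1)) t := by
      rw [huIcc]; intro t ht
      have h := (my_hasDerivAt_q (lam - B + u t)).comp t ((hu' t ht).const_add (lam - B))
      exact h
    rw [integral_eq_sub_of_hasDerivAt hder hint5, huA, huB]
    rw [max_eq_left (by linarith : lam - B + A ≤ 0)]
    have he : lam - B + B = lam := by ring
    rw [he, max_eq_right hlam0]
    ring
  have hJlow : lam ^ 2 / 2 ≤ ∫ t in a..b, G t * t ^ (α - 1) := by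
    rw [← key6]
    apply integral_mono_on hab.le hint5 hint3
    intro t ht
    exact mul_le_mul_of_nonneg_right (hGlow t ht) (hpow_pos t ht).le
  have key7 : (∫ t in a..b, (lam - max 0 (lam - (u t - A))) * t ^ (α - 1))
      = lam * (B - A) - lam ^ 2 / 2 := by
    have hder : ∀ t ∈ uIcc a b, HasDerivAt
        (fun s => lam * u s + max 0 (lam - (u s - A)) ^ 2 / 2)
        ((lam - max 0 (lam - (u t - A))) * t ^ (α - 1)) t := by
      rw [huIcc]; intro t ht
      have h1 := (hu' t ht).const_mul lam
      have h2 := (my_hasDerivAt_q (lam - (u t - A))).comp t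
        (((hu' t ht).sub_const A).const_sub lam)
      have h := h1.add h2
      have he : lam * t ^ (α - 1) + max 0 (lam - (u t - A)) * -t ^ (α - 1)
          = (lam - max 0 (lam - (u t - A))) * t ^ (α - 1) := by ring
      rw [he] at h
      exact h
    rw [integral_eq_sub_of_hasDerivAt hder hint6]
    have e1 : max 0 (lam - (u b - A)) = 0 := by
      rw [huB]; exact max_eq_left (by linarith)
    have e2 : max 0 (lam - (u a - A)) = lam := by
      rw [huA, sub_self, sub_zero]; exact max_eq_right hlam0
    rw [e1, e2, huA, huB]
    ring
  have hJup : (∫ t in a..b, G t * t ^ (α - 1)) ≤ lam * (B - A) - lam ^ 2 / 2 := by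
    rw [← key7]
    apply integral_mono_on hab.le hint3 hint6
    intro t ht
    exact mul_le_mul_of_nonneg_right (hGup t ht) (hpow_pos t ht).le
  clear_value u A B G g lam
  -- relating ℓ and lam
  have hlam_eq : f b - f a - m * (b ^ α - a ^ α) / α = (M - m) * lam := by
    rw [hlam_def, hG_def]
    field_simp
  have hl_eq : ℓ * (b ^ α - a ^ α) = α * (b - a) * lam := by
    rw [hℓ, hlam_eq]
    field_simp
  have hℓ0 : 0 ≤ ℓ := by
    nlinarith [hl_eq, mul_nonneg (mul_nonneg hα0.le hba.le) hlam0, hbapos]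
  have hℓb : ℓ ≤ b - a := by
    nlinarith [hl_eq, mul_le_mul_of_nonneg_left hlamK (mul_nonneg hα0.le hba.le),
      hKa, hbapos]
  -- concavity of rpow
  have hconc : ∀ s : ℝ, 0 ≤ s → s ≤ 1 →
      s * b ^ α + (1 - s) * a ^ α ≤ (s * b + (1 - s) * a) ^ α := by
    intro s hs0' hs1
    have hs0 := hs0'
    have h := (Real.concaveOn_rpow hα0.le hα1).2 (mem_Ici.mpr hb0.le) (mem_Ici.mpr ha.le)
      hs0 (sub_nonneg.2 hs1) (by ring)
    simpa [smul_eq_mul] using h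
  have hs0 : 0 ≤ ℓ / (b - a) := div_nonneg hℓ0 hba.le
  have hs1 : ℓ / (b - a) ≤ 1 := (div_le_one hba).2 hℓb
  have h3 : (ℓ / (b - a)) * (b ^ α - a ^ α) = α * lam := by
    rw [div_mul_eq_mul_div, hl_eq]
    field_simp
  have hF1 : b ^ α - (b - ℓ) ^ α ≤ α * lam := by
    have h := hconc (1 - ℓ / (b - a)) (by linarith) (by linarith)
    have harg : (1 - ℓ / (b - a)) * b + (1 - (1 - ℓ / (b - a))) * a = b - ℓ := by
      field_simp
      ring
    rw [harg] at h
    linarith [h, h3]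
  have hF2 : α * lam ≤ (a + ℓ) ^ α - a ^ α := by
    have h := hconc (ℓ / (b - a)) hs0 hs1
    have harg : (ℓ / (b - a)) * b + (1 - ℓ / (b - a)) * a = a + ℓ := by
      field_simp
      ring
    rw [harg] at h
    linarith [h, h3]
  have hF3 : (a + ℓ) ^ α ≤ b ^ α := Real.rpow_le_rpow (by linarith) (by linarith) hα0.le
  have hF4 : (b - ℓ) ^ α ≤ b ^ α := Real.rpow_le_rpow (by linarith) (by linarith) hα0.le
  -- main identity
  have hI : (∫ t in a..b, f t * t ^ (α - 1)) - f a * (b ^ α - a ^ α) / α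
      = m * ((B - A) ^ 2 / 2) + (M - m) * ∫ t in a..b, G t * t ^ (α - 1) := by
    have h : f a * (b ^ α - a ^ α) / α = f a * (B - A) := by
      rw [mul_div_assoc, hKdef]
    rw [h, key2, key3, key4, key5]
  constructor
  · have hx0 : 0 ≤ (b ^ α - (b - ℓ) ^ α) / α := div_nonneg (by linarith) hα0.le
    have hx1 : (b ^ α - (b - ℓ) ^ α) / α ≤ lam := by
      rw [div_le_iff₀ hα0]
      linarith [hF1]
    rw [hI, hKdef]
    linarith [mul_le_mul_of_nonneg_left (pow_le_pow_left₀ hx0 hx1 2) hMm.le,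
      mul_le_mul_of_nonneg_left hJlow hMm.le]
  · have hy0 : 0 ≤ (b ^ α - (a + ℓ) ^ α) / α := div_nonneg (by linarith) hα0.le
    have hy1 : (b ^ α - (a + ℓ) ^ α) / α ≤ (B - A) - lam := by
      rw [div_le_iff₀ hα0]
      linarith [hF2, hKa]
    rw [hI, hKdef]
    linarith [mul_le_mul_of_nonneg_left (pow_le_pow_left₀ hy0 hy1 2) hMm.le,
      mul_le_mul_of_nonneg_left hJup hMm.le]
end

section
/- Let α ∈ (0,1], 0 < a < b, and suppose D_α^{n+1} f is increasing on [a,b]. Then 0 ≥ ∫_a^b R_{n,f}(a,t) t^{α−1} dt − ((D_α^n f(b) − D_α^n f(a))/(n+2)!)·((b^α − a^α)/α)^{n+1} ≥ ((D_α^{n+1} f(a) − D_α^{n+1} f(b))/(n+2)!)·((b^α − a^α)/α)^{n+2}. -/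
open Set MeasureTheory intervalIntegral

set_option maxHeartbeats 1000000 in
/-- Čebyšev-type bounds on the α-fractional Taylor remainder when
`D_α^{n+1} f` is increasing. -/
theorem remainder_chebyshev_bounds (α a b : ℝ) (hα : 0 < α ∧ α ≤ 1)
    (ha : 0 < a) (hab : a < b) (n : ℕ) (f : ℝ → ℝ)
    (hdiff : ∀ k ≤ n, ∀ x ∈ Icc a b, DifferentiableAt ℝ ((condD α)^[k] f) x)
    (hinc : MonotoneOn ((condD α)^[n+1] f) (Icc a b))
    (hint : IntervalIntegrable (fun t => taylorRem α f n a t * t ^ (α - 1)) volume a b) :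
    0 ≥ (∫ t in a..b, taylorRem α f n a t * t ^ (α - 1))
        - (((condD α)^[n] f b - (condD α)^[n] f a) / ((n+2).factorial : ℝ)) *
          ((b ^ α - a ^ α) / α) ^ (n+1) ∧
    (∫ t in a..b, taylorRem α f n a t * t ^ (α - 1))
        - (((condD α)^[n] f b - (condD α)^[n] f a) / ((n+2).factorial : ℝ)) *
          ((b ^ α - a ^ α) / α) ^ (n+1) ≥
      (((condD α)^[n+1] f a - (condD α)^[n+1] f b) / ((n+2).factorial : ℝ)) *
        ((b ^ α - a ^ α) / α) ^ (n+2) := by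
  obtain ⟨hα0, hα1⟩ := hα
  have hpos : ∀ s ∈ Icc a b, (0:ℝ) < s := fun s hs => ha.trans_le hs.1
  -- deriv rewriting
  have hderiv : ∀ (k : ℕ) (s : ℝ), 0 < s →
      deriv ((condD α)^[k] f) s = s ^ (α - 1) * ((condD α)^[k+1] f) s := by
    intro k s hs
    have h1 : ((condD α)^[k+1] f) s = s ^ (1 - α) * deriv ((condD α)^[k] f) s := by
      rw [Function.iterate_succ_apply']; rfl
    rw [h1, ← mul_assoc, ← Real.rpow_add hs]
    norm_num
  have hF' : ∀ k ≤ n, ∀ s ∈ Icc a b,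
      HasDerivAt ((condD α)^[k] f) (s ^ (α - 1) * ((condD α)^[k+1] f) s) s := by
    intro k hk s hs
    have := (hdiff k hk s hs).hasDerivAt
    rwa [hderiv k s (hpos s hs)] at this
  -- derivative of Wb^(m+1)
  have hWb : ∀ (m : ℕ), ∀ s ∈ Icc a b,
      HasDerivAt (fun u : ℝ => ((b ^ α - u ^ α) / α) ^ (m+1))
        (-(((m:ℝ)+1) * ((b ^ α - s ^ α) / α) ^ m * s ^ (α - 1))) s := by
    intro m s hs
    have h1 : HasDerivAt (fun u : ℝ => u ^ α) (α * s ^ (α-1)) s :=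
      Real.hasDerivAt_rpow_const (Or.inl (hpos s hs).ne')
    have h2 : HasDerivAt (fun u : ℝ => (b ^ α - u ^ α) / α) (-(s ^ (α-1))) s := by
      have h3 := ((hasDerivAt_const s (b ^ α)).sub h1).div_const α
      refine h3.congr_deriv ?_
      field_simp
      ring
    have h3 := h2.pow (m+1)
    refine h3.congr_deriv ?_
    push_cast
    ring_nf
  -- derivative of Wa^(m+1)
  have hWa : ∀ (m : ℕ), ∀ s ∈ Icc a b,
      HasDerivAt (fun u : ℝ => ((u ^ α - a ^ α) / α) ^ (m+1))
        ((((m:ℝ)+1) * ((s ^ α - a ^ α) / α) ^ m * s ^ (α - 1))) s := by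
    intro m s hs
    have h1 : HasDerivAt (fun u : ℝ => u ^ α) (α * s ^ (α-1)) s :=
      Real.hasDerivAt_rpow_const (Or.inl (hpos s hs).ne')
    have h2 : HasDerivAt (fun u : ℝ => (u ^ α - a ^ α) / α) (s ^ (α-1)) s := by
      have h3 := (h1.sub (hasDerivAt_const s (a ^ α))).div_const α
      refine h3.congr_deriv ?_
      field_simp
      ring
    have h3 := h2.pow (m+1)
    refine h3.congr_deriv ?_
    push_cast
    ring_nf
  have hab' : a ≤ b := hab.le
  have huIcc : uIcc a b = Icc a b := uIcc_of_le hab'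
  have hcr : ContinuousOn (fun s : ℝ => s ^ (α-1)) (Icc a b) := fun s hs =>
    (Real.continuousAt_rpow_const s _ (Or.inl (hpos s hs).ne')).continuousWithinAt
  have hcWb : ContinuousOn (fun s : ℝ => (b ^ α - s ^ α)/α) (Icc a b) := fun s hs =>
    ((continuousAt_const.sub (Real.continuousAt_rpow_const s α
      (Or.inl (hpos s hs).ne'))).div_const α).continuousWithinAt
  have hcWa : ContinuousOn (fun s : ℝ => (s ^ α - a ^ α)/α) (Icc a b) := fun s hs =>
    (((Real.continuousAt_rpow_const s α (Or.inl (hpos s hs).ne')).sub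
      continuousAt_const).div_const α).continuousWithinAt
  have E2a : ∀ m : ℕ, (∫ t in a..b, ((t^α - a^α)/α)^m * t^(α-1)) =
      ((b^α-a^α)/α)^(m+1)/((m:ℝ)+1) := by
    intro m
    have hm1 : ((m:ℝ)+1) ≠ 0 := by positivity
    have hd : ∀ t ∈ uIcc a b, HasDerivAt (fun u => ((u^α - a^α)/α)^(m+1) / ((m:ℝ)+1))
        (((t^α-a^α)/α)^m * t^(α-1)) t := by
      intro t ht
      rw [huIcc] at ht
      have h := (hWa m t ht).div_const ((m:ℝ)+1)
      refine h.congr_deriv ?_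
      field_simp
    have hci : IntervalIntegrable (fun t => ((t^α - a^α)/α)^m * t^(α-1)) volume a b := by
      apply ContinuousOn.intervalIntegrable
      rw [huIcc]
      exact (hcWa.pow m).mul hcr
    rw [integral_eq_sub_of_hasDerivAt hd hci]
    simp
  have E2b : ∀ m : ℕ, (∫ s in a..b, s^(α-1) * ((b^α - s^α)/α)^m) =
      ((b^α-a^α)/α)^(m+1)/((m:ℝ)+1) := by
    intro m
    have hm1 : ((m:ℝ)+1) ≠ 0 := by positivity
    have hd : ∀ t ∈ uIcc a b, HasDerivAt (fun u => -(((b^α - u^α)/α)^(m+1)) / ((m:ℝ)+1))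
        (t^(α-1) * ((b^α - t^α)/α)^m) t := by
      intro t ht
      rw [huIcc] at ht
      have h := ((hWb m t ht).neg).div_const ((m:ℝ)+1)
      refine h.congr_deriv ?_
      field_simp
    have hci : IntervalIntegrable (fun t => t^(α-1) * ((b^α - t^α)/α)^m) volume a b := by
      apply ContinuousOn.intervalIntegrable
      rw [huIcc]
      exact hcr.mul (hcWb.pow m)
    rw [integral_eq_sub_of_hasDerivAt hd hci]
    simp
    ring
  have hintF : IntervalIntegrable ((condD α)^[n+1] f) volume a b := by
    apply MonotoneOn.intervalIntegrable
    rwa [huIcc]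
  have hcF : ∀ k ≤ n, ContinuousOn ((condD α)^[k] f) (Icc a b) := fun k hk s hs =>
    (hdiff k hk s hs).continuousAt.continuousWithinAt
  have hcf : ContinuousOn f (Icc a b) := by simpa using hcF 0 (Nat.zero_le n)
  have E3 : (∫ s in a..b, s^(α-1) * ((condD α)^[n+1] f) s)
      = (condD α)^[n] f b - (condD α)^[n] f a := by
    apply integral_eq_sub_of_hasDerivAt
    · intro s hs
      rw [huIcc] at hs
      exact hF' n le_rfl s hs
    · exact hintF.continuousOn_mul (by rw [huIcc]; exact hcr)
  have E1 : (∫ s in a..b, ((condD α)^[n+1] f s *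
        (s^(α-1) * ((b^α - s^α)/α)^(n+1) / ((n+1).factorial : ℝ)) - f s * s^(α-1)))
      = - ∑ k ∈ Finset.range (n+1),
          (condD α)^[k] f a * (((b^α-a^α)/α)^(k+1) / ((k+1).factorial : ℝ)) := by
    set g : ℕ → ℝ → ℝ := fun j s =>
      (condD α)^[j] f s * (s^(α-1) * ((b^α-s^α)/α)^j / (j.factorial : ℝ)) with hg
    have hHd : ∀ s ∈ uIcc a b, HasDerivAt
        (fun u => ∑ k ∈ Finset.range (n+1),
          (condD α)^[k] f u * (((b^α-u^α)/α)^(k+1) / ((k+1).factorial : ℝ)))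
        ((condD α)^[n+1] f s * (s^(α-1) * ((b^α - s^α)/α)^(n+1) / ((n+1).factorial : ℝ))
          - f s * s^(α-1)) s := by
      intro s hs
      rw [huIcc] at hs
      have hterm : ∀ k ∈ Finset.range (n+1), HasDerivAt
          (fun u => (condD α)^[k] f u * (((b^α-u^α)/α)^(k+1) / ((k+1).factorial : ℝ)))
          (g (k+1) s - g k s) s := by
        intro k hk
        rw [Finset.mem_range] at hk
        have hk' : k ≤ n := by omega
        have h1 := (hF' k hk' s hs).mul ((hWb k s hs).div_const (((k+1).factorial : ℝ)))
        refine h1.congr_deriv ?_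
        have hfac : (((k+1).factorial : ℝ)) = ((k:ℝ)+1) * (k.factorial : ℝ) := by
          exact_mod_cast Nat.factorial_succ k
        have h0 : (k.factorial : ℝ) ≠ 0 := by positivity
        rw [hg]
        simp only [Function.iterate_succ_apply']
        simp only [hfac]
        field_simp
        ring
      have hsum := HasDerivAt.fun_sum hterm
      rw [Finset.sum_range_sub (fun j => g j s)] at hsum
      refine hsum.congr_deriv ?_
      rw [hg]
      simp
    have hci : IntervalIntegrable (fun s => (condD α)^[n+1] f s *
        (s^(α-1) * ((b^α - s^α)/α)^(n+1) / ((n+1).factorial : ℝ)) - f s * s^(α-1))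
        volume a b := by
      apply IntervalIntegrable.sub
      · apply hintF.mul_continuousOn
        rw [huIcc]
        exact (hcr.mul (hcWb.pow (n+1))).div_const _
      · apply ContinuousOn.intervalIntegrable
        rw [huIcc]
        exact hcf.mul hcr
    rw [integral_eq_sub_of_hasDerivAt hHd hci]
    have hb0 : ∀ k ∈ Finset.range (n+1),
        (condD α)^[k] f b * (((b^α-b^α)/α)^(k+1) / ((k+1).factorial : ℝ)) = 0 := by
      intro k _
      simp
    rw [Finset.sum_eq_zero hb0]
    ring
  -- reduction of the Taylor remainder integral
  set A : ℝ := (b ^ α - a ^ α) / α with hA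
  have hA0 : 0 < A := by
    have h1 : a ^ α < b ^ α := Real.rpow_lt_rpow ha.le hab hα0
    have := sub_pos.2 h1
    positivity
  have hint1 : IntervalIntegrable (fun s => (condD α)^[n+1] f s *
      (s^(α-1) * ((b^α - s^α)/α)^(n+1) / ((n+1).factorial : ℝ))) volume a b := by
    apply hintF.mul_continuousOn
    rw [huIcc]
    exact (hcr.mul (hcWb.pow (n+1))).div_const _
  have hint2 : IntervalIntegrable (fun t => f t * t^(α-1)) volume a b := by
    apply ContinuousOn.intervalIntegrable
    rw [huIcc]
    exact hcf.mul hcr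
  have hfac : ∀ k : ℕ, (((k+1).factorial : ℝ)) = ((k:ℝ)+1) * (k.factorial : ℝ) := by
    intro k
    exact_mod_cast Nat.factorial_succ k
  have hR : (∫ t in a..b, taylorRem α f n a t * t ^ (α-1)) =
      ∫ s in a..b, (condD α)^[n+1] f s *
        (s^(α-1) * ((b^α - s^α)/α)^(n+1) / ((n+1).factorial : ℝ)) := by
    have hE1' : (∫ s in a..b, (condD α)^[n+1] f s *
          (s^(α-1) * ((b^α - s^α)/α)^(n+1) / ((n+1).factorial : ℝ)))
        - (∫ t in a..b, f t * t^(α-1))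
        = - ∑ k ∈ Finset.range (n+1),
            (condD α)^[k] f a * (((b^α-a^α)/α)^(k+1) / ((k+1).factorial : ℝ)) := by
      rw [← integral_sub hint1 hint2]
      exact E1
    have h1 : ∀ t : ℝ, taylorRem α f n a t * t ^ (α-1) = f t * t^(α-1) -
        ∑ k ∈ Finset.range (n+1), ((condD α)^[k] f a / (k.factorial : ℝ)) *
          (((t^α - a^α)/α)^k * t^(α-1)) := by
      intro t
      rw [taylorRem, sub_mul, Finset.sum_mul]
      congr 1
      apply Finset.sum_congr rfl
      intro k _
      ring
    simp_rw [h1]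
    have hintS : IntervalIntegrable (fun t => ∑ k ∈ Finset.range (n+1),
        ((condD α)^[k] f a / (k.factorial : ℝ)) * (((t^α - a^α)/α)^k * t^(α-1)))
        volume a b := by
      apply ContinuousOn.intervalIntegrable
      rw [huIcc]
      exact continuousOn_finset_sum _ (fun k _ => continuousOn_const.mul ((hcWa.pow k).mul hcr))
    rw [integral_sub hint2 hintS, intervalIntegral.integral_finset_sum]
    · simp_rw [intervalIntegral.integral_const_mul, E2a]
      have hterm : ∀ k ∈ Finset.range (n+1),
          (condD α)^[k] f a / (k.factorial : ℝ) * (((b^α-a^α)/α)^(k+1)/((k:ℝ)+1))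
          = (condD α)^[k] f a * (((b^α-a^α)/α)^(k+1) / ((k+1).factorial : ℝ)) := by
        intro k _
        have h0 : (k.factorial : ℝ) ≠ 0 := by positivity
        have h2 : ((k:ℝ)+1) ≠ 0 := by positivity
        rw [hfac k]
        field_simp
      rw [Finset.sum_congr rfl hterm]
      linarith [hE1']
    · intro k _
      apply ContinuousOn.intervalIntegrable
      rw [huIcc]
      exact continuousOn_const.mul ((hcWa.pow k).mul hcr)
  -- the weight function W and constant c
  set c : ℝ := A^(n+1) / ((n+2).factorial : ℝ) with hc
  set W : ℝ → ℝ := fun s => ((b^α - s^α)/α)^(n+1) / ((n+1).factorial : ℝ) - c with hW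
  have hfac2 : ((n+2).factorial : ℝ) = ((n:ℝ)+2) * ((n+1).factorial : ℝ) := by
    have := Nat.factorial_succ (n+1)
    push_cast [this]
    ring
  have hfacpos1 : (0:ℝ) < ((n+1).factorial : ℝ) := by positivity
  have hfacpos2 : (0:ℝ) < ((n+2).factorial : ℝ) := by positivity
  have hc0 : 0 ≤ c := by positivity
  have hWcont : ContinuousOn W (Icc a b) := ((hcWb.pow (n+1)).div_const _).sub continuousOn_const
  have hintE3 : IntervalIntegrable (fun s => s^(α-1) * (condD α)^[n+1] f s) volume a b :=
    hintF.continuousOn_mul (by rw [huIcc]; exact hcr)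
  have hintpW : IntervalIntegrable (fun s => s^(α-1) * W s) volume a b := by
    apply ContinuousOn.intervalIntegrable
    rw [huIcc]
    exact hcr.mul hWcont
  have hintpQ : IntervalIntegrable
      (fun s => (s^(α-1) * ((b^α - s^α)/α)^(n+1)) / ((n+1).factorial : ℝ)) volume a b := by
    apply ContinuousOn.intervalIntegrable
    rw [huIcc]
    exact (hcr.mul (hcWb.pow (n+1))).div_const _
  have hWint : (∫ s in a..b, s^(α-1) * W s) = 0 := by
    have e : ∀ s : ℝ, s^(α-1) * W s =
        (s^(α-1) * ((b^α - s^α)/α)^(n+1)) / ((n+1).factorial : ℝ)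
          - (s^(α-1) * ((b^α - s^α)/α)^0) * c := by
      intro s
      simp only [hW, pow_zero]
      ring
    simp_rw [e]
    rw [integral_sub hintpQ (by
      apply IntervalIntegrable.mul_const
      apply ContinuousOn.intervalIntegrable
      rw [huIcc]
      exact hcr.mul (hcWb.pow 0)),
      intervalIntegral.integral_div, intervalIntegral.integral_mul_const, E2b, E2b]
    rw [hc, hfac2]
    push_cast
    field_simp
    ring
  -- M = ∫ F_{n+1} · p · W
  have hintMW : IntervalIntegrable (fun s => (condD α)^[n+1] f s * (s^(α-1) * W s)) volume a b :=
    hintF.mul_continuousOn (by rw [huIcc]; exact hcr.mul hWcont)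
  have hMeq : (∫ t in a..b, taylorRem α f n a t * t ^ (α-1))
      - (((condD α)^[n] f b - (condD α)^[n] f a) / ((n+2).factorial : ℝ)) * A^(n+1)
      = ∫ s in a..b, (condD α)^[n+1] f s * (s^(α-1) * W s) := by
    have e2 : ∀ s : ℝ, (condD α)^[n+1] f s * (s^(α-1) * W s)
        = (condD α)^[n+1] f s * (s^(α-1) * ((b^α - s^α)/α)^(n+1) / ((n+1).factorial : ℝ))
          - (s^(α-1) * (condD α)^[n+1] f s) * c := by
      intro s
      simp only [hW]
      ring
    simp_rw [e2]
    rw [integral_sub hint1 (hintE3.mul_const c), intervalIntegral.integral_mul_const, E3, hR]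
    rw [hc]
    ring
  -- antitonicity of W and basic sign facts
  have hQ0 : ∀ s ∈ Icc a b, 0 ≤ (b^α - s^α)/α := by
    intro s hs
    have h2 : s ^ α ≤ b ^ α := Real.rpow_le_rpow (hpos s hs).le hs.2 hα0.le
    have := sub_nonneg.2 h2
    positivity
  have hWanti : ∀ s ∈ Icc a b, ∀ u ∈ Icc a b, s ≤ u → W u ≤ W s := by
    intro s hs u hu hsu
    have h1 : s ^ α ≤ u ^ α := Real.rpow_le_rpow (hpos s hs).le hsu hα0.le
    have h3 : 0 ≤ (b^α - u^α)/α := hQ0 u hu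
    have h4 : (b^α - u^α)/α ≤ (b^α - s^α)/α := by gcongr
    simp only [hW]
    gcongr
  have hWb0 : W b ≤ 0 := by
    have e : W b = -c := by
      simp [hW]
    rw [e, neg_nonpos]
    exact hc0
  have hWa0 : 0 ≤ W a := by
    simp only [hW, ← hA]
    rw [sub_nonneg, hc]
    gcongr
    omega
  obtain ⟨s0, hs0mem, hs00⟩ := intermediate_value_Icc' hab' hWcont ⟨hWb0, hWa0⟩
  -- upper bound
  have hup : ∀ s ∈ Icc a b, (condD α)^[n+1] f s * (s^(α-1) * W s)
      ≤ (condD α)^[n+1] f s0 * (s^(α-1) * W s) := by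
    intro s hs
    have hp : 0 < s^(α-1) := Real.rpow_pos_of_pos (hpos s hs) _
    rcases le_total s s0 with h | h
    · have h1 : (condD α)^[n+1] f s ≤ (condD α)^[n+1] f s0 := hinc hs hs0mem h
      have h2 : 0 ≤ W s := by rw [← hs00]; exact hWanti s hs s0 hs0mem h
      nlinarith [mul_nonneg (mul_nonneg hp.le h2) (sub_nonneg.2 h1)]
    · have h1 : (condD α)^[n+1] f s0 ≤ (condD α)^[n+1] f s := hinc hs0mem hs h
      have h2 : W s ≤ 0 := by rw [← hs00]; exact hWanti s0 hs0mem s hs h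
      nlinarith [mul_nonneg (mul_nonneg hp.le (neg_nonneg.2 h2)) (sub_nonneg.2 h1)]
  have hMle : (∫ s in a..b, (condD α)^[n+1] f s * (s^(α-1) * W s)) ≤ 0 := by
    have h := integral_mono_on hab' hintMW (hintpW.const_mul _) hup
    rw [intervalIntegral.integral_const_mul, hWint, mul_zero] at h
    exact h
  -- lower bound
  have hlow : ∀ s ∈ Icc a b,
      (condD α)^[n+1] f b * (s^(α-1) * W s)
        - ((condD α)^[n+1] f b - (condD α)^[n+1] f a) *
          ((s^(α-1) * ((b^α - s^α)/α)^(n+1)) / ((n+1).factorial : ℝ))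
      ≤ (condD α)^[n+1] f s * (s^(α-1) * W s) := by
    intro s hs
    have hp : 0 < s^(α-1) := Real.rpow_pos_of_pos (hpos s hs) _
    have h1 : (condD α)^[n+1] f a ≤ (condD α)^[n+1] f s := hinc (left_mem_Icc.2 hab') hs hs.1
    have h2 : (condD α)^[n+1] f s ≤ (condD α)^[n+1] f b := hinc hs (right_mem_Icc.2 hab') hs.2
    have hq0 : 0 ≤ ((b^α - s^α)/α)^(n+1) / ((n+1).factorial : ℝ) := by
      have := hQ0 s hs
      positivity
    have arith : ∀ p q c u ua ub : ℝ, 0 < p → 0 ≤ q → 0 ≤ c → ua ≤ u → u ≤ ub →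
        ub * (p * (q - c)) - (ub - ua) * (p * q) ≤ u * (p * (q - c)) := by
      intro p q c u ua ub hp hq hc h1 h2
      nlinarith [mul_nonneg (mul_nonneg hp.le (sub_nonneg.2 h2)) hc,
        mul_nonneg (mul_nonneg hp.le (sub_nonneg.2 h1)) hq]
    simp only [hW]
    rw [mul_div_assoc]
    exact arith _ _ _ _ _ _ hp hq0 hc0 h1 h2
  have hintLow : IntervalIntegrable (fun s =>
      (condD α)^[n+1] f b * (s^(α-1) * W s)
        - ((condD α)^[n+1] f b - (condD α)^[n+1] f a) *
          ((s^(α-1) * ((b^α - s^α)/α)^(n+1)) / ((n+1).factorial : ℝ))) volume a b :=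
    (hintpW.const_mul _).sub (hintpQ.const_mul _)
  have hMge : (((condD α)^[n+1] f a - (condD α)^[n+1] f b) / ((n+2).factorial : ℝ)) * A^(n+2)
      ≤ ∫ s in a..b, (condD α)^[n+1] f s * (s^(α-1) * W s) := by
    have h := integral_mono_on hab' hintLow hintMW hlow
    rw [integral_sub (hintpW.const_mul _) (hintpQ.const_mul _),
      intervalIntegral.integral_const_mul, intervalIntegral.integral_const_mul, hWint,
      intervalIntegral.integral_div, E2b] at h
    rw [hfac2]
    push_cast at h ⊢
    have hn2 : ((n:ℝ)+1+1) ≠ 0 := by positivity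
    calc ((condD α)^[n+1] f a - (condD α)^[n+1] f b) / (((n:ℝ)+2) * ((n+1).factorial : ℝ))
          * A^(n+2)
        = (condD α)^[n+1] f b * 0 - ((condD α)^[n+1] f b - (condD α)^[n+1] f a) *
          (A ^ (n+1+1) / ((n:ℝ)+1+1) / ((n+1).factorial : ℝ)) := by
          field_simp
          ring
      _ ≤ _ := h
  refine ⟨?_, ?_⟩
  · rw [ge_iff_le, hMeq]
    exact hMle
  · rw [ge_iff_le, hMeq]
    exact hMge
end

section
/- Hermite–Hadamard inequality II: Let α ∈ (0,1], 0 < a < b, and f : [a,b] → ℝ be α-fractional differentiable with D_α f increasing on [a,b]. Then (α/(b^α − a^α))·∫_a^b f(t) t^{α−1} dt ≤ (f(a) + f(b))/2. If D_α f is decreasing, the inequality is reversed. -/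
open Set MeasureTheory intervalIntegral

lemma hh_aux (α a b : ℝ) (hα : 0 < α ∧ α ≤ 1)
    (ha : 0 < a) (hab : a < b) (f : ℝ → ℝ)
    (hdiff : ∀ x ∈ Icc a b, DifferentiableAt ℝ f x)
    (hmono : MonotoneOn (condD α f) (Icc a b)) :
    (α / (b ^ α - a ^ α)) * (∫ t in a..b, f t * t ^ (α - 1)) ≤ (f a + f b) / 2 := by
  obtain ⟨hα0, hα1⟩ := hα
  have hb : 0 < b := ha.trans hab
  set A := a ^ α with hAdef
  set B := b ^ α with hBdef
  have hA : 0 < A := Real.rpow_pos_of_pos ha α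
  have hAB : A < B := Real.rpow_lt_rpow ha.le hab hα0
  have hBA : (0:ℝ) < B - A := sub_pos.2 hAB
  have hainv : (a ^ α) ^ α⁻¹ = a := Real.rpow_rpow_inv ha.le hα0.ne'
  have hbinv : (b ^ α) ^ α⁻¹ = b := Real.rpow_rpow_inv hb.le hα0.ne'
  set g : ℝ → ℝ := fun u => f (u ^ α⁻¹) with hgdef
  have hψmem : ∀ u ∈ Icc A B, u ^ α⁻¹ ∈ Icc a b := by
    intro u hu
    constructor
    · rw [← hainv]; exact Real.rpow_le_rpow hA.le hu.1 (inv_nonneg.2 hα0.le)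
    · rw [← hbinv]; exact Real.rpow_le_rpow (hA.le.trans hu.1) hu.2 (inv_nonneg.2 hα0.le)
  have hg_deriv : ∀ u ∈ Icc A B, HasDerivAt g (α⁻¹ * condD α f (u ^ α⁻¹)) u := by
    intro u hu
    have hu0 : 0 < u := hA.trans_le hu.1
    have h1 : HasDerivAt (fun u : ℝ => u ^ α⁻¹) (α⁻¹ * u ^ (α⁻¹ - 1)) u :=
      Real.hasDerivAt_rpow_const (Or.inl hu0.ne')
    have h2 : HasDerivAt f (deriv f (u ^ α⁻¹)) (u ^ α⁻¹) :=
      (hdiff _ (hψmem u hu)).hasDerivAt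
    have h3 := h2.comp u h1
    refine HasDerivAt.congr_deriv h3 ?_; symm
    have hpow : (u ^ α⁻¹) ^ (1 - α) = u ^ (α⁻¹ - 1) := by
      rw [← Real.rpow_mul hu0.le]
      congr 1
      field_simp
    show α⁻¹ * ((u ^ α⁻¹) ^ (1 - α) * deriv f (u ^ α⁻¹)) = _
    rw [hpow]
    ring
  have hgc : ContinuousOn g (Icc A B) := fun u hu =>
    ((hg_deriv u hu).differentiableAt.continuousAt).continuousWithinAt
  have hconv : ConvexOn ℝ (Icc A B) g := by
    apply MonotoneOn.convexOn_of_deriv (convex_Icc A B) hgc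
    · intro u hu
      rw [interior_Icc] at hu
      exact ((hg_deriv u (Ioo_subset_Icc_self hu)).differentiableAt).differentiableWithinAt
    · intro u hu v hv huv
      rw [interior_Icc] at hu hv
      have hu' := Ioo_subset_Icc_self hu
      have hv' := Ioo_subset_Icc_self hv
      rw [(hg_deriv u hu').deriv, (hg_deriv v hv').deriv]
      have hle : u ^ α⁻¹ ≤ v ^ α⁻¹ :=
        Real.rpow_le_rpow (hA.le.trans hu'.1) huv (inv_nonneg.2 hα0.le)
      exact mul_le_mul_of_nonneg_left
        (hmono (hψmem u hu') (hψmem v hv') hle) (inv_nonneg.2 hα0.le)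
  have key : ∀ u ∈ Icc A B, g u ≤ ((B - u) * g A + (u - A) * g B) / (B - A) := by
    intro u hu
    have h := hconv.2 (left_mem_Icc.2 hAB.le) (right_mem_Icc.2 hAB.le)
      (div_nonneg (sub_nonneg.2 hu.2) hBA.le) (div_nonneg (sub_nonneg.2 hu.1) hBA.le)
      (by field_simp; ring)
    have hpt : ((B - u) / (B - A)) • A + ((u - A) / (B - A)) • B = u := by
      rw [smul_eq_mul, smul_eq_mul, div_mul_eq_mul_div, div_mul_eq_mul_div,
        ← add_div, div_eq_iff hBA.ne']
      ring
    rw [hpt] at h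
    simp only [smul_eq_mul] at h
    calc g u ≤ (B - u) / (B - A) * g A + (u - A) / (B - A) * g B := h
      _ = ((B - u) * g A + (u - A) * g B) / (B - A) := by ring
  have hgint : IntervalIntegrable g volume A B :=
    (hgc.mono (by rw [uIcc_of_le hAB.le])).intervalIntegrable
  have hlincont : Continuous (fun u : ℝ => ((B - u) * g A + (u - A) * g B) / (B - A)) := by
    fun_prop
  have hIle : (∫ u in A..B, g u) ≤ ∫ u in A..B, ((B - u) * g A + (u - A) * g B) / (B - A) :=
    intervalIntegral.integral_mono_on hAB.le hgint (hlincont.intervalIntegrable A B) key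
  have hlinval : (∫ u in A..B, ((B - u) * g A + (u - A) * g B) / (B - A))
      = (B - A) * ((g A + g B) / 2) := by
    have heq : (fun u : ℝ => ((B - u) * g A + (u - A) * g B) / (B - A))
        = fun u => (B * g A - A * g B) / (B - A) + (g B - g A) / (B - A) * u := by
      funext u
      field_simp
      ring
    rw [heq, intervalIntegral.integral_add intervalIntegrable_const
      (intervalIntegrable_id.const_mul _),
      intervalIntegral.integral_const, intervalIntegral.integral_const_mul,
      integral_id]
    rw [smul_eq_mul]
    field_simp
    ring
  -- change of variables
  have hsub : (∫ t in a..b, (α * t ^ (α - 1)) • g (t ^ α)) = ∫ u in A..B, g u := by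
    apply intervalIntegral.integral_comp_smul_deriv' (f := fun t => t ^ α)
      (f' := fun t => α * t ^ (α - 1)) (g := g)
    · intro x hx
      rw [uIcc_of_le hab.le] at hx
      exact Real.hasDerivAt_rpow_const (Or.inl (ha.trans_le hx.1).ne')
    · intro x hx
      rw [uIcc_of_le hab.le] at hx
      exact (continuousAt_const.mul
        (Real.continuousAt_rpow_const x (α - 1) (Or.inl (ha.trans_le hx.1).ne'))).continuousWithinAt
    · apply hgc.mono
      rintro _ ⟨t, ht, rfl⟩
      rw [uIcc_of_le hab.le] at ht
      exact ⟨Real.rpow_le_rpow ha.le ht.1 hα0.le, Real.rpow_le_rpow (ha.le.trans ht.1) ht.2 hα0.le⟩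
  have himg : ∀ t ∈ uIcc a b, α * (f t * t ^ (α - 1)) = (α * t ^ (α - 1)) • g (t ^ α) := by
    intro t ht
    rw [uIcc_of_le hab.le] at ht
    have ht0 : 0 < t := ha.trans_le ht.1
    have : g (t ^ α) = f t := by
      show f ((t ^ α) ^ α⁻¹) = f t
      rw [Real.rpow_rpow_inv ht0.le hα0.ne']
    rw [this, smul_eq_mul]
    ring
  have hIval : α * (∫ t in a..b, f t * t ^ (α - 1)) = ∫ u in A..B, g u := by
    rw [← intervalIntegral.integral_const_mul, ← hsub]
    exact intervalIntegral.integral_congr himg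
  have hgA : g A = f a := by show f ((a ^ α) ^ α⁻¹) = f a; rw [hainv]
  have hgB : g B = f b := by show f ((b ^ α) ^ α⁻¹) = f b; rw [hbinv]
  rw [hgA, hgB] at hlinval hIle
  have hfinal : α * (∫ t in a..b, f t * t ^ (α - 1)) ≤ (B - A) * ((f a + f b) / 2) := by
    rw [hIval]; exact hIle.trans_eq hlinval
  rw [div_mul_eq_mul_div, mul_comm, div_le_iff₀ hBA]
  calc (∫ t in a..b, f t * t ^ (α - 1)) * α = α * ∫ t in a..b, f t * t ^ (α - 1) := by ring
    _ ≤ (B - A) * ((f a + f b) / 2) := hfinal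
    _ = (f a + f b) / 2 * (B - A) := by ring

/-- Hermite–Hadamard inequality II for conformable derivatives. -/
theorem hermite_hadamard_II (α a b : ℝ) (hα : 0 < α ∧ α ≤ 1)
    (ha : 0 < a) (hab : a < b) (f : ℝ → ℝ)
    (hdiff : ∀ x ∈ Icc a b, DifferentiableAt ℝ f x)
    (hint : IntervalIntegrable (fun t => f t * t ^ (α - 1)) volume a b) :
    (MonotoneOn (condD α f) (Icc a b) →
      (α / (b ^ α - a ^ α)) * (∫ t in a..b, f t * t ^ (α - 1)) ≤ (f a + f b) / 2) ∧
    (AntitoneOn (condD α f) (Icc a b) →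
      (f a + f b) / 2 ≤ (α / (b ^ α - a ^ α)) * ∫ t in a..b, f t * t ^ (α - 1)) := by
  constructor
  · exact hh_aux α a b hα ha hab f hdiff
  · intro hanti
    have hdiff' : ∀ x ∈ Icc a b, DifferentiableAt ℝ (fun t => -f t) x :=
      fun x hx => (hdiff x hx).neg
    have hmono' : MonotoneOn (condD α (fun t => -f t)) (Icc a b) := by
      intro x hx y hy hxy
      have hx' : condD α (fun t => -f t) x = -condD α f x := by
        unfold condD; rw [deriv.fun_neg]; ring
      have hy' : condD α (fun t => -f t) y = -condD α f y := by
        unfold condD; rw [deriv.fun_neg]; ring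
      rw [hx', hy']
      exact neg_le_neg (hanti hx hy hxy)
    have h := hh_aux α a b hα ha hab (fun t => -f t) hdiff' hmono'
    have hneg : (∫ t in a..b, -f t * t ^ (α - 1))
        = -∫ t in a..b, f t * t ^ (α - 1) := by
      rw [← intervalIntegral.integral_neg]
      congr 1; funext t; ring
    rw [hneg] at h
    nlinarith [h]
end

section
/- Montgomery identity: Let α ∈ (0,1], 0 ≤ a < b, and f : [a,b] → ℝ be α-fractional differentiable with D_α f continuous. Then for all t ∈ [a,b]: f(t) = (α/(b^α − a^α))·∫_a^b f(s) s^{α−1} ds + (α/(b^α − a^α))·∫_a^b p(t,s)·D_α f(s)·s^{α−1} ds, where p(t,s) := (s^α − a^α)/α for a ≤ s < t and p(t,s) := (s^α − b^α)/α for t ≤ s ≤ b. -/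
open Set MeasureTheory intervalIntegral

/-- Montgomery identity for conformable fractional derivatives. -/
theorem montgomery_identity (α a b : ℝ) (hα : 0 < α ∧ α ≤ 1)
    (ha : 0 ≤ a) (hab : a < b) (f : ℝ → ℝ)
    (hdiff : ∀ x ∈ Icc a b, DifferentiableAt ℝ f x)
    (hcont : ContinuousOn (condD α f) (Icc a b))
    (t : ℝ) (ht : t ∈ Icc a b) :
    f t = (α / (b ^ α - a ^ α)) * (∫ s in a..b, f s * s ^ (α - 1))
        + (α / (b ^ α - a ^ α)) *
          ∫ s in a..b,
            (if s < t then (s ^ α - a ^ α) / α else (s ^ α - b ^ α) / α) *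
              condD α f s * s ^ (α - 1) := by
  obtain ⟨hα0, hα1⟩ := hα
  obtain ⟨hat, htb⟩ := ht
  have hαne : α ≠ 0 := hα0.ne'
  have hfa : ContinuousOn f (Icc a b) := fun x hx =>
    (hdiff x hx).continuousAt.continuousWithinAt
  have hpow : ∀ u v : ℝ, IntervalIntegrable (fun s => s ^ (α - 1)) volume u v :=
    fun u v => intervalIntegrable_rpow' (by linarith)
  have hrc : Continuous (fun s : ℝ => s ^ α) :=
    continuous_iff_continuousAt.2 fun x => Real.continuousAt_rpow_const x α (Or.inr hα0.le)
  have hint1 : ∀ u v : ℝ, u ∈ Icc a b → v ∈ Icc a b →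
      IntervalIntegrable (fun s => f s * s ^ (α - 1)) volume u v := fun u v hu hv =>
    (hpow u v).continuousOn_mul (hfa.mono (uIcc_subset_Icc hu hv))
  have hint2 : ∀ c u v : ℝ, u ∈ Icc a b → v ∈ Icc a b →
      IntervalIntegrable (fun s => ((s ^ α - c ^ α) / α) * condD α f s * s ^ (α - 1))
        volume u v := by
    intro c u v hu hv
    refine (hpow u v).continuousOn_mul (ContinuousOn.mul ?_ (hcont.mono (uIcc_subset_Icc hu hv)))
    exact ((hrc.continuousOn).sub continuousOn_const).div_const α
  -- key FTC computation
  have key : ∀ c u v : ℝ, a ≤ u → u ≤ v → v ≤ b →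
      (∫ s in u..v, (f s * s ^ (α - 1) + ((s ^ α - c ^ α) / α) * condD α f s * s ^ (α - 1)))
        = (v ^ α - c ^ α) / α * f v - (u ^ α - c ^ α) / α * f u := by
    intro c u v hu huv hv
    have huab : u ∈ Icc a b := ⟨hu, huv.trans hv⟩
    have hvab : v ∈ Icc a b := ⟨hu.trans huv, hv⟩
    apply integral_eq_sub_of_hasDerivAt_of_le huv
    · exact (((hrc.continuousOn).sub continuousOn_const).div_const α).mul
        (hfa.mono (Icc_subset_Icc huab.1 hvab.2))
    · intro x hx
      have hx0 : 0 < x := lt_of_le_of_lt (ha.trans hu) hx.1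
      have hxab : x ∈ Icc a b := ⟨hu.trans hx.1.le, hx.2.le.trans hv⟩
      have hd1 : HasDerivAt (fun s : ℝ => (s ^ α - c ^ α) / α) (x ^ (α - 1)) x := by
        have h := ((Real.hasDerivAt_rpow_const (x := x) (p := α)
          (Or.inl hx0.ne')).sub_const (c ^ α)).div_const α
        rw [mul_div_cancel_left₀ _ hαne] at h
        exact h
      have hd2 : HasDerivAt f (deriv f x) x := (hdiff x hxab).hasDerivAt
      have h := hd1.mul hd2
      refine h.congr_deriv ?_
      have hone : x ^ (1 - α) * x ^ (α - 1) = 1 := by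
        rw [← Real.rpow_add hx0]; norm_num
      simp only [condD]
      have : (x ^ α - c ^ α) / α * (x ^ (1 - α) * deriv f x) * x ^ (α - 1)
          = (x ^ α - c ^ α) / α * deriv f x * (x ^ (1 - α) * x ^ (α - 1)) := by ring
      rw [this, hone]; ring
    · exact (hint1 u v huab hvab).add (hint2 c u v huab hvab)
  set F : ℝ → ℝ := fun s =>
    (if s < t then (s ^ α - a ^ α) / α else (s ^ α - b ^ α) / α) * condD α f s * s ^ (α - 1)
    with hF
  set G1 : ℝ → ℝ := fun s => ((s ^ α - a ^ α) / α) * condD α f s * s ^ (α - 1) with hG1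
  set G2 : ℝ → ℝ := fun s => ((s ^ α - b ^ α) / α) * condD α f s * s ^ (α - 1) with hG2
  have haab : a ∈ Icc a b := ⟨le_refl a, hab.le⟩
  have hbab : b ∈ Icc a b := ⟨hab.le, le_refl b⟩
  have htab : t ∈ Icc a b := ⟨hat, htb⟩
  -- a.e. equality of F and G1 on Ι a t
  have hne : ∀ᵐ x : ℝ, x ≠ t := by
    refine (ae_iff).2 ?_
    simp only [not_not, Set.setOf_eq_eq_singleton]
    exact measure_singleton t
  have hae : ∀ᵐ x : ℝ, x ∈ Set.uIoc a t → F x = G1 x := by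
    filter_upwards [hne] with x hx hxI
    rw [uIoc_of_le hat] at hxI
    have : x < t := lt_of_le_of_ne hxI.2 hx
    simp [hF, hG1, this]
  have haeG : G1 =ᵐ[volume.restrict (Set.uIoc a t)] F :=
    (ae_restrict_iff' measurableSet_uIoc).2 (by filter_upwards [hae] with x h hx; exact (h hx).symm)
  have hFat : IntervalIntegrable F volume a t := (hint2 a a t haab htab).congr_ae haeG
  -- F = G2 on [[t, b]]
  have heq2 : Set.EqOn F G2 (Set.uIcc t b) := by
    intro x hx
    rw [uIcc_of_le htb] at hx
    simp [hF, hG2, not_lt.2 hx.1]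
  have haeG2 : G2 =ᵐ[volume.restrict (Set.uIoc t b)] F := by
    refine (ae_restrict_iff' measurableSet_uIoc).2 (Filter.Eventually.of_forall fun x hx => ?_)
    exact (heq2 (uIoc_subset_uIcc hx)).symm
  have hFtb : IntervalIntegrable F volume t b := (hint2 b t b htab hbab).congr_ae haeG2
  have hsplit : (∫ s in a..b, F s) = (∫ s in a..t, G1 s) + (∫ s in t..b, G2 s) := by
    rw [← integral_add_adjacent_intervals hFat hFtb]
    congr 1
    · exact integral_congr_ae hae
    · exact integral_congr heq2
  have hI1 : (∫ s in a..t, G1 s)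
      = ((t ^ α - a ^ α) / α * f t - (a ^ α - a ^ α) / α * f a)
        - ∫ s in a..t, f s * s ^ (α - 1) := by
    have h := key a a t (le_refl a) hat htb
    rw [integral_add (hint1 a t haab htab) (hint2 a a t haab htab)] at h
    linarith [h]
  have hI2 : (∫ s in t..b, G2 s)
      = ((b ^ α - b ^ α) / α * f b - (t ^ α - b ^ α) / α * f t)
        - ∫ s in t..b, f s * s ^ (α - 1) := by
    have h := key b t b hat htb (le_refl b)
    rw [integral_add (hint1 t b htab hbab) (hint2 b t b htab hbab)] at h
    linarith [h]
  have hBsplit : (∫ s in a..b, f s * s ^ (α - 1))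
      = (∫ s in a..t, f s * s ^ (α - 1)) + ∫ s in t..b, f s * s ^ (α - 1) :=
    (integral_add_adjacent_intervals (hint1 a t haab htab) (hint1 t b htab hbab)).symm
  have hD : (0:ℝ) < b ^ α - a ^ α :=
    sub_pos.2 (Real.rpow_lt_rpow ha hab hα0)
  rw [hsplit, hI1, hI2, hBsplit]
  field_simp
  ring
end

section
/- Ostrowski inequality: Let α ∈ (0,1], 0 ≤ a < b, f : [a,b] → ℝ be α-fractional differentiable, and M := sup_{t∈(a,b)} |D_α f(t)| < ∞. Then for all t ∈ [a,b]: |f(t) − (α/(b^α − a^α))·∫_a^b f(s) s^{α−1} ds| ≤ (M/(2α(b^α − a^α)))·[(t^α − a^α)^2 + (b^α − t^α)^2]. -/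
open Set MeasureTheory intervalIntegral

/-- Ostrowski inequality for conformable fractional derivatives, where
`M` is the supremum of `|D_α f|` on `(a,b)`. -/
theorem ostrowski_fractional (α a b M : ℝ) (hα : 0 < α ∧ α ≤ 1)
    (ha : 0 ≤ a) (hab : a < b) (f : ℝ → ℝ)
    (hdiff : ∀ x ∈ Icc a b, DifferentiableAt ℝ f x)
    (hint : IntervalIntegrable (fun s => f s * s ^ (α - 1)) volume a b)
    (hM : IsLUB ((fun s => |condD α f s|) '' Ioo a b) M)
    (t : ℝ) (ht : t ∈ Icc a b) :
    |f t - (α / (b ^ α - a ^ α)) * ∫ s in a..b, f s * s ^ (α - 1)| ≤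
      (M / (2 * α * (b ^ α - a ^ α))) *
        ((t ^ α - a ^ α) ^ 2 + (b ^ α - t ^ α) ^ 2) := by
  obtain ⟨hα0, hα1⟩ := hα
  have hb0 : 0 < b := lt_of_le_of_lt ha hab
  have hcont : ContinuousOn f (Icc a b) := fun x hx =>
    (hdiff x hx).continuousAt.continuousWithinAt
  have hA : a ^ α < b ^ α := Real.rpow_lt_rpow ha hab hα0
  have hApos : 0 < b ^ α - a ^ α := sub_pos.mpr hA
  have hcpow : Continuous fun u : ℝ => u ^ α :=
    continuous_id.rpow_const fun _ => Or.inr hα0.le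
  -- key pointwise estimate
  have inner : ∀ x ∈ Icc a b, ∀ y', a < y' → y' ≤ x →
      |f x - f y'| ≤ M / α * (x ^ α - y' ^ α) := by
    intro x hx y' hay' hy'x
    have hsub : Icc y' x ⊆ Icc a b := Icc_subset_Icc hay'.le hx.2
    have hc1 : ContinuousOn (fun u => f u - f y') (Icc y' x) :=
      (hcont.mono hsub).sub continuousOn_const
    have hc2 : ∀ u ∈ Ico y' x,
        HasDerivWithinAt (fun u => f u - f y') (deriv f u) (Ici u) u := fun u hu =>
      (((hdiff u (hsub ⟨hu.1, hu.2.le⟩)).hasDerivAt).sub_const _).hasDerivWithinAt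
    have hc3 : ‖f y' - f y'‖ ≤ M / α * y' ^ α - M / α * y' ^ α := by simp
    have hc4 : ContinuousOn (fun u : ℝ => M / α * u ^ α - M / α * y' ^ α) (Icc y' x) :=
      ((continuous_const.mul hcpow).sub continuous_const).continuousOn
    have hc5 : ∀ u ∈ Ico y' x,
        HasDerivWithinAt (fun u : ℝ => M / α * u ^ α - M / α * y' ^ α)
          (M * u ^ (α - 1)) (Ici u) u := by
      intro u hu
      have hu0 : 0 < u := lt_of_le_of_lt ha (lt_of_lt_of_le hay' hu.1)
      have h := ((Real.hasDerivAt_rpow_const (p := α)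
        (Or.inl hu0.ne')).const_mul (M / α)).sub_const (M / α * y' ^ α)
      rw [← mul_assoc, div_mul_cancel₀ M hα0.ne'] at h
      exact h.hasDerivWithinAt
    have hc6 : ∀ u ∈ Ico y' x, ‖deriv f u‖ ≤ M * u ^ (α - 1) := by
      intro u hu
      have hu0 : 0 < u := lt_of_le_of_lt ha (lt_of_lt_of_le hay' hu.1)
      have huab : u ∈ Ioo a b := ⟨lt_of_lt_of_le hay' hu.1, lt_of_lt_of_le hu.2 hx.2⟩
      have hDle : |condD α f u| ≤ M := hM.1 ⟨u, huab, rfl⟩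
      have hder : deriv f u = u ^ (α - 1) * condD α f u := by
        unfold condD
        rw [← mul_assoc, ← Real.rpow_add hu0]
        norm_num
      rw [Real.norm_eq_abs, hder, abs_mul,
        abs_of_nonneg (Real.rpow_nonneg hu0.le _)]
      rw [mul_comm]
      exact mul_le_mul_of_nonneg_right hDle (Real.rpow_nonneg hu0.le _)
    have hbd : ∀ ⦃z⦄, z ∈ Icc y' x →
        ‖f z - f y'‖ ≤ M / α * z ^ α - M / α * y' ^ α :=
      image_norm_le_of_norm_deriv_right_le_deriv_boundary' hc1 hc2 hc3 hc4 hc5 hc6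
    have := hbd ⟨hy'x, le_rfl⟩
    rw [Real.norm_eq_abs] at this
    linarith [this]
  have key : ∀ x ∈ Icc a b, ∀ y ∈ Icc a b, y ≤ x →
      |f x - f y| ≤ M / α * (x ^ α - y ^ α) := by
    intro x hx y hy hyx
    rcases eq_or_lt_of_le hy.1 with hya | hya
    · rw [← hya]
      rcases eq_or_lt_of_le (hya ▸ hyx : a ≤ x) with rfl | hax
      · simp
      · haveI : (nhdsWithin a (Ioc a x)).NeBot := by
          refine mem_closure_iff_nhdsWithin_neBot.mp ?_
          rw [closure_Ioc hax.ne]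
          exact ⟨le_rfl, hax.le⟩
        have hsub2 : Ioc a x ⊆ Icc a b := fun u hu => ⟨hu.1.le, le_trans hu.2 hx.2⟩
        have hf_tendsto : Filter.Tendsto f (nhdsWithin a (Ioc a x)) (nhds (f a)) :=
          (hcont a (left_mem_Icc.mpr hab.le)).mono hsub2
        have h1 : Filter.Tendsto (fun u => |f x - f u|) (nhdsWithin a (Ioc a x))
            (nhds (|f x - f a|)) := (Filter.Tendsto.const_sub _ hf_tendsto).abs
        have h2 : Filter.Tendsto (fun u : ℝ => M / α * (x ^ α - u ^ α))
            (nhdsWithin a (Ioc a x)) (nhds (M / α * (x ^ α - a ^ α))) := by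
          apply Filter.Tendsto.mono_left _ nhdsWithin_le_nhds
          exact ((continuous_const.mul (continuous_const.sub hcpow)).tendsto a)
        refine le_of_tendsto_of_tendsto h1 h2 ?_
        filter_upwards [self_mem_nhdsWithin] with u hu
        exact inner x hx u hu.1 hu.2
    · exact inner x hx y hya hyx
  have hM0 : 0 ≤ M := by
    have hmid : (a + b) / 2 ∈ Ioo a b := ⟨by linarith, by linarith⟩
    exact le_trans (abs_nonneg _) (hM.1 ⟨(a + b) / 2, hmid, rfl⟩)
  -- integral basics
  have hrint : ∀ c d : ℝ, IntervalIntegrable (fun s : ℝ => s ^ (α - 1)) volume c d :=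
    fun c d => intervalIntegrable_rpow' (by linarith)
  have hrint2 : ∀ c d : ℝ, IntervalIntegrable (fun s : ℝ => s ^ (2 * α - 1)) volume c d :=
    fun c d => intervalIntegrable_rpow' (by linarith)
  have hexp1 : α - 1 + 1 = α := by ring
  have hexp2 : 2 * α - 1 + 1 = 2 * α := by ring
  have hpow_int : ∀ c d : ℝ, (∫ s in c..d, s ^ (α - 1)) = (d ^ α - c ^ α) / α := by
    intro c d
    rw [integral_rpow (Or.inl (by linarith)), hexp1]
  have hpow_int2 : ∀ c d : ℝ, (∫ s in c..d, s ^ (2 * α - 1)) = (d ^ (2 * α) - c ^ (2 * α)) / (2 * α) := by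
    intro c d
    rw [integral_rpow (Or.inl (by linarith)), hexp2]
  have hsq : ∀ u : ℝ, 0 ≤ u → u ^ (2 * α) = (u ^ α) ^ 2 := by
    intro u hu
    rw [two_mul, Real.rpow_add' hu (by positivity), sq]
  -- identity
  have hid : f t - (α / (b ^ α - a ^ α)) * ∫ s in a..b, f s * s ^ (α - 1)
      = (α / (b ^ α - a ^ α)) * ∫ s in a..b, (f t - f s) * s ^ (α - 1) := by
    have : (∫ s in a..b, (f t - f s) * s ^ (α - 1))
        = (∫ s in a..b, f t * s ^ (α - 1)) - ∫ s in a..b, f s * s ^ (α - 1) := by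
      rw [← integral_sub ((hrint a b).const_mul (f t)) hint]
      congr 1; funext s; ring
    rw [this, intervalIntegral.integral_const_mul, hpow_int]
    field_simp
  -- the dominating function
  have hFcont : Continuous fun s : ℝ => M / α * |t ^ α - s ^ α| :=
    continuous_const.mul (continuous_const.sub hcpow).abs
  have hFint : ∀ c d : ℝ, Icc c d ⊆ Icc a b →
      IntervalIntegrable (fun s => M / α * |t ^ α - s ^ α| * s ^ (α - 1)) volume c d :=
    fun c d _ => (hrint c d).continuousOn_mul hFcont.continuousOn
  have hprod : IntervalIntegrable (fun s => (f t - f s) * s ^ (α - 1)) volume a b := by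
    apply (hrint a b).continuousOn_mul
    rw [uIcc_of_le hab.le]
    exact continuousOn_const.sub hcont
  have habs : |∫ s in a..b, (f t - f s) * s ^ (α - 1)|
      ≤ ∫ s in a..b, M / α * |t ^ α - s ^ α| * s ^ (α - 1) := by
    refine (abs_integral_le_integral_abs hab.le).trans ?_
    apply integral_mono_on hab.le hprod.abs (hFint a b le_rfl)
    intro s hs
    have hs0 : 0 ≤ s := le_trans ha hs.1
    rw [abs_mul, abs_of_nonneg (Real.rpow_nonneg hs0 _)]
    apply mul_le_mul_of_nonneg_right _ (Real.rpow_nonneg hs0 _)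
    rcases le_total s t with hst | hts
    · rw [abs_of_nonneg (sub_nonneg.mpr (Real.rpow_le_rpow hs0 hst hα0.le))]
      exact key t ht s hs hst
    · rw [abs_sub_comm (f t), abs_sub_comm (t ^ α),
        abs_of_nonneg (sub_nonneg.mpr (Real.rpow_le_rpow (le_trans ha ht.1) hts hα0.le))]
      exact key s hs t ht hts
  -- compute the dominating integral
  have piece1 : (∫ s in a..t, M / α * |t ^ α - s ^ α| * s ^ (α - 1))
      = M / α * ((t ^ α - a ^ α) ^ 2 / (2 * α)) := by
    have hcongr : (∫ s in a..t, M / α * |t ^ α - s ^ α| * s ^ (α - 1))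
        = ∫ s in a..t, (M / α * t ^ α * s ^ (α - 1) - M / α * s ^ (2 * α - 1)) := by
      apply intervalIntegral.integral_congr_ae
      apply Filter.Eventually.of_forall
      intro s hs
      rw [uIoc_of_le ht.1] at hs
      have hs0 : 0 < s := lt_of_le_of_lt ha hs.1
      rw [abs_of_nonneg (sub_nonneg.mpr (Real.rpow_le_rpow hs0.le hs.2 hα0.le))]
      have : s ^ α * s ^ (α - 1) = s ^ (2 * α - 1) := by
        rw [← Real.rpow_add hs0]; ring_nf
      linear_combination (-(M / α)) * this
    rw [hcongr, integral_sub (((hrint a t).const_mul _))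
      ((hrint2 a t).const_mul _), intervalIntegral.integral_const_mul, intervalIntegral.integral_const_mul,
      hpow_int, hpow_int2, hsq t (le_trans ha ht.1), hsq a ha]
    field_simp
    ring
  have piece2 : (∫ s in t..b, M / α * |t ^ α - s ^ α| * s ^ (α - 1))
      = M / α * ((b ^ α - t ^ α) ^ 2 / (2 * α)) := by
    have hcongr : (∫ s in t..b, M / α * |t ^ α - s ^ α| * s ^ (α - 1))
        = ∫ s in t..b, (M / α * s ^ (2 * α - 1) - M / α * t ^ α * s ^ (α - 1)) := by
      apply intervalIntegral.integral_congr_ae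
      apply Filter.Eventually.of_forall
      intro s hs
      rw [uIoc_of_le ht.2] at hs
      have hs0 : 0 < s := lt_of_le_of_lt (ha.trans ht.1) hs.1
      rw [abs_sub_comm,
        abs_of_nonneg (sub_nonneg.mpr (Real.rpow_le_rpow (ha.trans ht.1) hs.1.le hα0.le))]
      have : s ^ α * s ^ (α - 1) = s ^ (2 * α - 1) := by
        rw [← Real.rpow_add hs0]; ring_nf
      linear_combination (M / α) * this
    rw [hcongr, integral_sub (((hrint2 t b).const_mul _))
      (((hrint t b).const_mul _)), intervalIntegral.integral_const_mul, intervalIntegral.integral_const_mul,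
      hpow_int, hpow_int2, hsq b hb0.le, hsq t (le_trans ha ht.1)]
    field_simp
    ring
  have hsplit : (∫ s in a..b, M / α * |t ^ α - s ^ α| * s ^ (α - 1))
      = M / α * ((t ^ α - a ^ α) ^ 2 / (2 * α)) + M / α * ((b ^ α - t ^ α) ^ 2 / (2 * α)) := by
    rw [← piece1, ← piece2]
    exact (integral_add_adjacent_intervals
      (hFint a t (Icc_subset_Icc le_rfl ht.2))
      (hFint t b (Icc_subset_Icc ht.1 le_rfl))).symm
  -- assemble
  rw [hid, abs_mul, abs_of_nonneg (div_nonneg hα0.le hApos.le)]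
  calc α / (b ^ α - a ^ α) * |∫ s in a..b, (f t - f s) * s ^ (α - 1)|
      ≤ α / (b ^ α - a ^ α) * (M / α * ((t ^ α - a ^ α) ^ 2 / (2 * α))
          + M / α * ((b ^ α - t ^ α) ^ 2 / (2 * α))) := by
        rw [← hsplit]
        exact mul_le_mul_of_nonneg_left habs (div_nonneg hα0.le hApos.le)
    _ = (M / (2 * α * (b ^ α - a ^ α))) *
        ((t ^ α - a ^ α) ^ 2 + (b ^ α - t ^ α) ^ 2) := by
        field_simp
end

section
/- Grüss inequality for α-fractional integrals: Let α ∈ (0,1], 0 ≤ a < b, and f, g : [a,b] → ℝ continuous with m₁ ≤ f(t) ≤ M₁ and m₂ ≤ g(t) ≤ M₂ on [a,b]. Then |(α/(b^α − a^α))·∫_a^b f(t)g(t) t^{α−1} dt − (α/(b^α − a^α))²·(∫_a^b f(t) t^{α−1} dt)·(∫_a^b g(t) t^{α−1} dt)| ≤ (1/4)(M₁ − m₁)(M₂ − m₂). -/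
open Set MeasureTheory intervalIntegral

/-- Elementary Cauchy–Schwarz inequality for integrals. -/
lemma my_cs {ν : Measure ℝ} {F G : ℝ → ℝ}
    (hF : Integrable (fun t => F t * F t) ν) (hG : Integrable (fun t => G t * G t) ν)
    (hFG : Integrable (fun t => F t * G t) ν) :
    (∫ t, F t * G t ∂ν) ^ 2 ≤ (∫ t, F t * F t ∂ν) * ∫ t, G t * G t ∂ν := by
  set p := ∫ t, F t * F t ∂ν with hp'
  set q := ∫ t, G t * G t ∂ν with hq'
  set r := ∫ t, F t * G t ∂ν with hr'
  have hp : 0 ≤ p := integral_nonneg fun t => mul_self_nonneg _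
  have hq : 0 ≤ q := integral_nonneg fun t => mul_self_nonneg _
  rcases eq_or_lt_of_le hq with hq0 | hq0
  · have hGz : (fun t => G t * G t) =ᵐ[ν] 0 :=
      (integral_eq_zero_iff_of_nonneg_ae
        (Filter.Eventually.of_forall fun t => mul_self_nonneg _) hG).1 hq0.symm
    have hr0 : r = 0 := by
      have hz : (fun t => F t * G t) =ᵐ[ν] 0 := by
        filter_upwards [hGz] with t ht
        have : G t = 0 := mul_self_eq_zero.1 ht
        simp [this]
      rw [hr', integral_congr_ae hz]; simp
    rw [hr0, ← hq0]
    simp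
  · have key : 0 ≤ ∫ t, (q * F t - r * G t) ^ 2 ∂ν :=
      integral_nonneg fun t => sq_nonneg _
    have hexp : ∫ t, (q * F t - r * G t) ^ 2 ∂ν
        = q ^ 2 * p - (2 * q * r) * r + r ^ 2 * q := by
      have hfun : (fun t => (q * F t - r * G t) ^ 2)
          = fun t => q ^ 2 * (F t * F t) - (2 * q * r) * (F t * G t) + r ^ 2 * (G t * G t) := by
        funext t; ring
      have i1 : Integrable (fun t => q ^ 2 * (F t * F t) - 2 * q * r * (F t * G t)) ν :=
        (hF.const_mul _).sub (hFG.const_mul _)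
      have i2 : Integrable (fun t => r ^ 2 * (G t * G t)) ν := hG.const_mul _
      have i3 : Integrable (fun t => q ^ 2 * (F t * F t)) ν := hF.const_mul _
      have i4 : Integrable (fun t => 2 * q * r * (F t * G t)) ν := hFG.const_mul _
      rw [hfun, integral_add i1 i2, integral_sub i3 i4,
        MeasureTheory.integral_const_mul, MeasureTheory.integral_const_mul, MeasureTheory.integral_const_mul]
    rw [hexp] at key
    nlinarith [key, hq0]

/-- A helper for expanding integrals of products against a weight. -/
lemma expand_integral {ν : Measure ℝ} (u v w : ℝ → ℝ) (cu cv : ℝ)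
    (hu : Integrable (fun t => u t * w t) ν) (hv : Integrable (fun t => v t * w t) ν)
    (huv : Integrable (fun t => u t * v t * w t) ν) (hw : Integrable w ν) :
    ∫ t, (u t - cu) * (v t - cv) * w t ∂ν
      = (∫ t, u t * v t * w t ∂ν) - cv * (∫ t, u t * w t ∂ν)
        - cu * (∫ t, v t * w t ∂ν) + (cu * cv) * ∫ t, w t ∂ν := by
  have hfun : (fun t => (u t - cu) * (v t - cv) * w t)
      = fun t => (u t * v t * w t - cv * (u t * w t)) - cu * (v t * w t)
          + (cu * cv) * w t := by
    funext t; ring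
  have i1 : Integrable (fun t => u t * v t * w t - cv * (u t * w t)) ν := huv.sub (hu.const_mul _)
  have i2 : Integrable (fun t => u t * v t * w t - cv * (u t * w t) - cu * (v t * w t)) ν :=
    i1.sub (hv.const_mul _)
  have i3 : Integrable (fun t => cu * cv * w t) ν := hw.const_mul _
  rw [hfun, integral_add i2 i3, integral_sub i1 (hv.const_mul _),
    integral_sub huv (hu.const_mul _),
    MeasureTheory.integral_const_mul, MeasureTheory.integral_const_mul, MeasureTheory.integral_const_mul]

set_option maxHeartbeats 1600000 in
/-- Grüss inequality for α-fractional integrals. -/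
theorem gruss_fractional (α a b m₁ M₁ m₂ M₂ : ℝ) (hα : 0 < α ∧ α ≤ 1)
    (ha : 0 ≤ a) (hab : a < b) (f g : ℝ → ℝ)
    (hf : ContinuousOn f (Icc a b)) (hg : ContinuousOn g (Icc a b))
    (hfb : ∀ t ∈ Icc a b, m₁ ≤ f t ∧ f t ≤ M₁)
    (hgb : ∀ t ∈ Icc a b, m₂ ≤ g t ∧ g t ≤ M₂) :
    |(α / (b ^ α - a ^ α)) * (∫ t in a..b, f t * g t * t ^ (α - 1))
        - (α / (b ^ α - a ^ α)) ^ 2 * (∫ t in a..b, f t * t ^ (α - 1)) *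
          ∫ t in a..b, g t * t ^ (α - 1)| ≤
      (1 / 4) * (M₁ - m₁) * (M₂ - m₂) := by
  obtain ⟨hα0, hα1⟩ := hα
  have hc1 : (-1 : ℝ) < α - 1 := by linarith
  have hK : 0 < b ^ α - a ^ α := sub_pos.2 (Real.rpow_lt_rpow ha hab hα0)
  have hwi : IntervalIntegrable (fun t : ℝ => t ^ (α - 1)) volume a b :=
    intervalIntegrable_rpow' hc1
  -- integrability of products with the weight
  have hmul : ∀ {φ : ℝ → ℝ}, ContinuousOn φ (Icc a b) →
      IntegrableOn (fun t => φ t * t ^ (α - 1)) (Ioc a b) volume := by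
    intro φ hφ
    rw [← intervalIntegrable_iff_integrableOn_Ioc_of_le hab.le]
    exact hwi.continuousOn_mul (by rwa [uIcc_of_le hab.le])
  have int_w : IntegrableOn (fun t : ℝ => t ^ (α - 1)) (Ioc a b) volume :=
    (intervalIntegrable_iff_integrableOn_Ioc_of_le hab.le).1 hwi
  -- rewrite interval integrals as set integrals
  rw [integral_of_le hab.le, integral_of_le hab.le, integral_of_le hab.le]
  set A := α / (b ^ α - a ^ α) with hA
  have hA0 : 0 < A := div_pos hα0 hK
  set W := ∫ t in Ioc a b, t ^ (α - 1) with hW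
  have hWval : W = (b ^ α - a ^ α) / α := by
    rw [hW, ← integral_of_le hab.le, integral_rpow (Or.inl hc1)]
    norm_num
  have hAW : A * W = 1 := by
    rw [hWval, hA]; field_simp
  set If := ∫ t in Ioc a b, f t * t ^ (α - 1) with hIf
  set Ig := ∫ t in Ioc a b, g t * t ^ (α - 1) with hIg
  set Ifg := ∫ t in Ioc a b, f t * g t * t ^ (α - 1) with hIfg
  set If2 := ∫ t in Ioc a b, f t * f t * t ^ (α - 1) with hIf2
  set Ig2 := ∫ t in Ioc a b, g t * g t * t ^ (α - 1) with hIg2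
  set μf := A * If with hμf
  set μg := A * Ig with hμg
  -- continuity facts
  have hcfg : ContinuousOn (fun t => f t * g t) (Icc a b) := hf.mul hg
  have hcff : ContinuousOn (fun t => f t * f t) (Icc a b) := hf.mul hf
  have hcgg : ContinuousOn (fun t => g t * g t) (Icc a b) := hg.mul hg
  have hcP : ContinuousOn (fun t => f t - μf) (Icc a b) := hf.sub continuousOn_const
  have hcQ : ContinuousOn (fun t => g t - μg) (Icc a b) := hg.sub continuousOn_const
  -- a.e. identity for splitting the weight
  have hae : ∀ u v : ℝ → ℝ,
      (fun t => (u t * t ^ ((α - 1) / 2)) * (v t * t ^ ((α - 1) / 2)))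
        =ᵐ[volume.restrict (Ioc a b)] fun t => u t * v t * t ^ (α - 1) := by
    intro u v
    filter_upwards [ae_restrict_mem measurableSet_Ioc] with t ht
    have ht0 : 0 < t := lt_of_le_of_lt ha ht.1
    rw [show (u t * t ^ ((α - 1) / 2)) * (v t * t ^ ((α - 1) / 2))
        = u t * v t * (t ^ ((α - 1) / 2) * t ^ ((α - 1) / 2)) by ring,
      ← Real.rpow_add ht0, add_halves]
  -- nonnegativity of the weight on the interval
  have hw0 : ∀ t ∈ Ioc a b, (0 : ℝ) ≤ t ^ (α - 1) := fun t ht =>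
    Real.rpow_nonneg (le_of_lt (lt_of_le_of_lt ha ht.1)) _
  -- Cauchy–Schwarz for the weighted centred functions
  have intPQ := hmul (hcP.mul hcQ)
  have intPP := hmul (hcP.mul hcP)
  have intQQ := hmul (hcQ.mul hcQ)
  set T := ∫ t in Ioc a b, (f t - μf) * (g t - μg) * t ^ (α - 1) with hT
  set TP := ∫ t in Ioc a b, (f t - μf) * (f t - μf) * t ^ (α - 1) with hTP
  set TQ := ∫ t in Ioc a b, (g t - μg) * (g t - μg) * t ^ (α - 1) with hTQ
  have key_cs : T ^ 2 ≤ TP * TQ := by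
    have e1 : T = ∫ t in Ioc a b,
        ((f t - μf) * t ^ ((α - 1) / 2)) * ((g t - μg) * t ^ ((α - 1) / 2)) :=
      (integral_congr_ae (hae _ _)).symm
    have e2 : TP = ∫ t in Ioc a b,
        ((f t - μf) * t ^ ((α - 1) / 2)) * ((f t - μf) * t ^ ((α - 1) / 2)) :=
      (integral_congr_ae (hae _ _)).symm
    have e3 : TQ = ∫ t in Ioc a b,
        ((g t - μg) * t ^ ((α - 1) / 2)) * ((g t - μg) * t ^ ((α - 1) / 2)) :=
      (integral_congr_ae (hae _ _)).symm
    rw [e1, e2, e3]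
    exact my_cs (intPP.congr (hae _ _).symm) (intQQ.congr (hae _ _).symm)
      (intPQ.congr (hae _ _).symm)
  -- nonnegativity of TP, TQ
  have hTP0 : 0 ≤ TP := setIntegral_nonneg measurableSet_Ioc fun t ht =>
    mul_nonneg (mul_self_nonneg _) (hw0 t ht)
  have hTQ0 : 0 ≤ TQ := setIntegral_nonneg measurableSet_Ioc fun t ht =>
    mul_nonneg (mul_self_nonneg _) (hw0 t ht)
  -- expansions
  have hE1 : T = Ifg - μg * If - μf * Ig + (μf * μg) * W :=
    expand_integral f g _ μf μg (hmul hf) (hmul hg) (hmul hcfg) int_w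
  have hE2 : TP = If2 - μf * If - μf * If + (μf * μf) * W :=
    expand_integral f f _ μf μf (hmul hf) (hmul hf) (hmul hcff) int_w
  have hE3 : TQ = Ig2 - μg * Ig - μg * Ig + (μg * μg) * W :=
    expand_integral g g _ μg μg (hmul hg) (hmul hg) (hmul hcgg) int_w
  -- the constraint from m₁ ≤ f ≤ M₁
  have hE4 : If2 - m₁ * If - M₁ * If + (M₁ * m₁) * W ≤ 0 := by
    have := setIntegral_nonpos (μ := volume) (f := fun t => (f t - M₁) * (f t - m₁) * t ^ (α - 1))
      measurableSet_Ioc (fun t ht => by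
        obtain ⟨h1, h2⟩ := hfb t (Ioc_subset_Icc_self ht)
        show (f t - M₁) * (f t - m₁) * t ^ (α - 1) ≤ 0
        nlinarith [mul_nonneg (mul_nonneg (sub_nonneg.2 h2) (sub_nonneg.2 h1)) (hw0 t ht)])
    rwa [expand_integral f f _ M₁ m₁ (hmul hf) (hmul hf) (hmul hcff) int_w] at this
  have hE5 : Ig2 - m₂ * Ig - M₂ * Ig + (M₂ * m₂) * W ≤ 0 := by
    have := setIntegral_nonpos (μ := volume) (f := fun t => (g t - M₂) * (g t - m₂) * t ^ (α - 1))
      measurableSet_Ioc (fun t ht => by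
        obtain ⟨h1, h2⟩ := hgb t (Ioc_subset_Icc_self ht)
        show (g t - M₂) * (g t - m₂) * t ^ (α - 1) ≤ 0
        nlinarith [mul_nonneg (mul_nonneg (sub_nonneg.2 h2) (sub_nonneg.2 h1)) (hw0 t ht)])
    rwa [expand_integral g g _ M₂ m₂ (hmul hg) (hmul hg) (hmul hcgg) int_w] at this
  -- bounds on A * TP and A * TQ
  have hbf : A * TP ≤ (M₁ - m₁) ^ 2 / 4 := by
    have hATP : A * TP = A * If2 - μf ^ 2 := by
      rw [hE2, hμf]; linear_combination (A * If) ^ 2 * hAW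
    have h4 := mul_le_mul_of_nonneg_left hE4 hA0.le
    rw [mul_zero] at h4
    have h5 : A * (If2 - m₁ * If - M₁ * If + M₁ * m₁ * W)
        = A * If2 - (m₁ + M₁) * μf + m₁ * M₁ := by
      rw [hμf]; linear_combination (M₁ * m₁) * hAW
    rw [h5] at h4
    nlinarith [sq_nonneg (M₁ + m₁ - 2 * μf), hATP, h4]
  have hbg : A * TQ ≤ (M₂ - m₂) ^ 2 / 4 := by
    have hATQ : A * TQ = A * Ig2 - μg ^ 2 := by
      rw [hE3, hμg]; linear_combination (A * Ig) ^ 2 * hAW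
    have h4 := mul_le_mul_of_nonneg_left hE5 hA0.le
    rw [mul_zero] at h4
    have h5 : A * (Ig2 - m₂ * Ig - M₂ * Ig + M₂ * m₂ * W)
        = A * Ig2 - (m₂ + M₂) * μg + m₂ * M₂ := by
      rw [hμg]; linear_combination (M₂ * m₂) * hAW
    rw [h5] at h4
    nlinarith [sq_nonneg (M₂ + m₂ - 2 * μg), hATQ, h4]
  -- the main identity
  have hTid : A * Ifg - A ^ 2 * If * Ig = A * T := by
    rw [hE1, hμf, hμg]; linear_combination (-(A ^ 2 * If * Ig)) * hAW
  rw [hTid]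
  -- conclude
  have hm1 : m₁ ≤ M₁ := by
    have := hfb a ⟨le_refl a, hab.le⟩; linarith [this.1, this.2]
  have hm2 : m₂ ≤ M₂ := by
    have := hgb a ⟨le_refl a, hab.le⟩; linarith [this.1, this.2]
  have hR0 : 0 ≤ 1 / 4 * (M₁ - m₁) * (M₂ - m₂) :=
    mul_nonneg (mul_nonneg (by norm_num) (sub_nonneg.2 hm1)) (sub_nonneg.2 hm2)
  have hsq : (A * T) ^ 2 ≤ (1 / 4 * (M₁ - m₁) * (M₂ - m₂)) ^ 2 := by
    have h1 : (A * TP) * (A * TQ) ≤ ((M₁ - m₁) ^ 2 / 4) * ((M₂ - m₂) ^ 2 / 4) :=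
      mul_le_mul hbf hbg (mul_nonneg hA0.le hTQ0) (by positivity)
    have h2 : A ^ 2 * T ^ 2 ≤ A ^ 2 * (TP * TQ) :=
      mul_le_mul_of_nonneg_left key_cs (sq_nonneg A)
    nlinarith [h1, h2]
  calc |A * T| = Real.sqrt ((A * T) ^ 2) := (Real.sqrt_sq_eq_abs _).symm
    _ ≤ Real.sqrt ((1 / 4 * (M₁ - m₁) * (M₂ - m₂)) ^ 2) := Real.sqrt_le_sqrt hsq
    _ = 1 / 4 * (M₁ - m₁) * (M₂ - m₂) := Real.sqrt_sq hR0
end
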